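/- arXiv:1312.5189 — 7 statements merged into one kernel-verified Lean document; each statement's English description precedes it below -/
import Mathlib

section
/- Let 1 < δ < 2. Let g : [0,1] → ℝ be continuously differentiable on [0,1], twice continuously differentiable on (0,1], and suppose there exist constants C > 0 and θ ∈ (0,1) such that |g''(x)| ≤ C x^{-θ} for all 0 < x ≤ 1. Suppose g attains its global minimum over [0,1] at a point x₀ ∈ (0,1). Then D*^δ g(x₀) ≥ (x₀^{-δ} / Γ(2-δ)) · ( (δ-1)·(g(0) - g(x₀)) - x₀ · g'(0) ). -/
open Set MeasureTheory intervalIntegral Filter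


/-- The Caputo fractional derivative of order `δ ∈ (1,2)` of `g`, using derivatives
within `[0,1]`:  `D*^δ g (x) = (1/Γ(2-δ)) ∫₀ˣ (x-t)^(1-δ) g''(t) dt`. -/
noncomputable def caputoW (δ : ℝ) (g : ℝ → ℝ) (x : ℝ) : ℝ :=
  (1 / Real.Gamma (2 - δ)) *
    ∫ t in (0:ℝ)..x, (x - t) ^ (1 - δ) *
      derivWithin (derivWithin g (Set.Icc 0 1)) (Set.Icc 0 1) t

theorem stmt0 (δ : ℝ) (hδ1 : 1 < δ) (hδ2 : δ < 2) (g : ℝ → ℝ)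
    (hg1 : ContDiffOn ℝ 1 g (Set.Icc 0 1)) (hg2 : ContDiffOn ℝ 2 g (Set.Ioc 0 1))
    (C θ : ℝ) (hC : 0 < C) (hθ1 : 0 < θ) (hθ2 : θ < 1)
    (hbound : ∀ x ∈ Set.Ioc (0:ℝ) 1,
      |derivWithin (derivWithin g (Set.Icc 0 1)) (Set.Icc 0 1) x| ≤ C * x ^ (-θ))
    (x₀ : ℝ) (hx₀ : x₀ ∈ Set.Ioo (0:ℝ) 1)
    (hmin : ∀ x ∈ Set.Icc (0:ℝ) 1, g x₀ ≤ g x) :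
    caputoW δ g x₀ ≥ (x₀ ^ (-δ) / Real.Gamma (2 - δ)) *
      ((δ - 1) * (g 0 - g x₀) - x₀ * derivWithin g (Set.Icc 0 1) 0) := by
  obtain ⟨hx0, hx1⟩ := hx₀
  set G1 : ℝ → ℝ := derivWithin g (Set.Icc 0 1) with hG1def
  set G2 : ℝ → ℝ := derivWithin G1 (Set.Icc 0 1) with hG2def
  have hΓ : 0 < Real.Gamma (2 - δ) := Real.Gamma_pos_of_pos (by linarith)
  have hUD : UniqueDiffOn ℝ (Set.Icc (0:ℝ) 1) := uniqueDiffOn_Icc zero_lt_one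
  have hg2' : ContDiffOn ℝ 2 g (Set.Ioo 0 1) := hg2.mono Set.Ioo_subset_Ioc_self
  have hnhds : ∀ t ∈ Set.Ioo (0:ℝ) 1, Set.Icc (0:ℝ) 1 ∈ nhds t := fun t ht =>
    Filter.mem_of_superset (isOpen_Ioo.mem_nhds ht) Set.Ioo_subset_Icc_self
  have hnhds' : ∀ t ∈ Set.Ioo (0:ℝ) 1, Set.Ioo (0:ℝ) 1 ∈ nhds t := fun t ht =>
    isOpen_Ioo.mem_nhds ht
  -- basic derivative facts on the open interval
  have hgderiv : ∀ t ∈ Set.Ioo (0:ℝ) 1, HasDerivAt g (G1 t) t := by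
    intro t ht
    have hd : DifferentiableAt ℝ g t :=
      ((hg2'.differentiableOn (by norm_num)).differentiableAt (hnhds' t ht))
    rw [hG1def, derivWithin_of_mem_nhds (hnhds t ht)]
    exact hd.hasDerivAt
  have hG1eq : Set.EqOn G1 (deriv g) (Set.Ioo 0 1) := fun t ht => by
    rw [hG1def, derivWithin_of_mem_nhds (hnhds t ht)]
  have hd2 : ContDiffOn ℝ 1 (deriv g) (Set.Ioo 0 1) :=
    hg2'.deriv_of_isOpen isOpen_Ioo (by norm_num)
  have hG2eq : ∀ t ∈ Set.Ioo (0:ℝ) 1, G2 t = deriv (deriv g) t := by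
    intro t ht
    rw [hG2def, derivWithin_of_mem_nhds (hnhds t ht)]
    exact Filter.EventuallyEq.deriv_eq <|
      Filter.eventuallyEq_of_mem (hnhds' t ht) hG1eq
  have hG1deriv : ∀ t ∈ Set.Ioo (0:ℝ) 1, HasDerivAt G1 (G2 t) t := by
    intro t ht
    have hd : DifferentiableAt ℝ (deriv g) t :=
      (hd2.differentiableOn (by norm_num)).differentiableAt (hnhds' t ht)
    rw [hG2eq t ht]
    exact hd.hasDerivAt.congr_of_eventuallyEq
      (Filter.eventuallyEq_of_mem (hnhds' t ht) hG1eq)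
  have hG2cont : ContinuousOn G2 (Set.Ioo 0 1) :=
    (hd2.continuousOn_deriv_of_isOpen isOpen_Ioo le_rfl).congr
      (fun t ht => hG2eq t ht)
  have hG1cont : ContinuousOn G1 (Set.Icc 0 1) :=
    hg1.continuousOn_derivWithin hUD le_rfl
  have hgcont : ContinuousOn g (Set.Icc 0 1) := hg1.continuousOn
  have hG1x₀ : G1 x₀ = 0 := by
    have hloc : IsLocalMin g x₀ :=
      Filter.eventually_of_mem (hnhds x₀ ⟨hx0, hx1⟩) hmin
    rw [hG1def, derivWithin_of_mem_nhds (hnhds x₀ ⟨hx0, hx1⟩)]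
    exact hloc.deriv_eq_zero
  -- the midpoint and the bound on G2 near x₀
  set a : ℝ := x₀ / 2 with hadef
  have ha0 : 0 < a := by positivity
  have hax : a < x₀ := by rw [hadef]; linarith
  have haIoo : Set.Icc a x₀ ⊆ Set.Ioo (0:ℝ) 1 := fun t ht =>
    ⟨lt_of_lt_of_le ha0 ht.1, lt_of_le_of_lt ht.2 hx1⟩
  obtain ⟨M0, hM0⟩ : ∃ M0, ∀ t ∈ Set.Icc a x₀, ‖G2 t‖ ≤ M0 :=
    (isCompact_Icc).exists_bound_of_continuousOn (hG2cont.mono haIoo)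
  set M : ℝ := max M0 0 with hMdef
  have hMnn : 0 ≤ M := le_max_right _ _
  have hM : ∀ t ∈ Set.Icc a x₀, |G2 t| ≤ M := fun t ht =>
    le_trans (hM0 t ht) (le_max_left _ _)
  have hG1b : ∀ t ∈ Set.Icc a x₀, |G1 t| ≤ M * (x₀ - t) := by
    intro t ht
    have key := (convex_Icc a x₀).norm_image_sub_le_of_norm_hasDerivWithin_le
      (f := G1) (f' := G2) (C := M)
      (fun u hu => (hG1deriv u (haIoo hu)).hasDerivWithinAt)
      (fun u hu => hM u hu) (Set.right_mem_Icc.2 (le_of_lt hax)) ht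
    rw [hG1x₀] at key
    simpa [Real.norm_eq_abs, abs_sub_comm, abs_of_nonneg (sub_nonneg.2 ht.2)] using key
  have hgb : ∀ t ∈ Set.Icc a x₀, |g t - g x₀| ≤ M * (x₀ - t) * (x₀ - t) := by
    intro t ht
    have hsub : Set.Icc t x₀ ⊆ Set.Icc a x₀ := Set.Icc_subset_Icc ht.1 le_rfl
    have key := (convex_Icc t x₀).norm_image_sub_le_of_norm_hasDerivWithin_le
      (f := g) (f' := G1) (C := M * (x₀ - t))
      (fun u hu => (hgderiv u (haIoo (hsub hu))).hasDerivWithinAt)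
      (fun u hu => le_trans (hG1b u (hsub hu))
        (by
          have := hu.1
          have h2 := hu.2
          nlinarith))
      (Set.right_mem_Icc.2 ht.2) (Set.left_mem_Icc.2 ht.2)
    simpa [Real.norm_eq_abs, abs_sub_comm, abs_of_nonneg (sub_nonneg.2 ht.2),
      mul_comm, mul_left_comm, mul_assoc] using key
  -- the antiderivative F and the integrands
  set F : ℝ → ℝ := fun t => (x₀ - t) ^ (1 - δ) * G1 t
      - (δ - 1) * ((x₀ - t) ^ (-δ) * (g t - g x₀)) with hFdef
  have hδ10 : (0:ℝ) < δ - 1 := by linarith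
  have h2δ : (0:ℝ) < 2 - δ := by linarith
  have hFderiv : ∀ t ∈ Set.Ioo 0 x₀,
      HasDerivAt F ((x₀ - t) ^ (1 - δ) * G2 t
        - δ * (δ - 1) * ((x₀ - t) ^ (-δ - 1) * (g t - g x₀))) t := by
    intro t ht
    have htIoo : t ∈ Set.Ioo (0:ℝ) 1 := ⟨ht.1, lt_trans ht.2 hx1⟩
    have hp : (0:ℝ) < x₀ - t := sub_pos.2 ht.2
    have hbase : HasDerivAt (fun s => x₀ - s) (-1) t := (hasDerivAt_id t).const_sub x₀
    have hr1 : HasDerivAt (fun s => (x₀ - s) ^ (1 - δ))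
        (((1 - δ) * (x₀ - t) ^ (1 - δ - 1)) * (-1)) t :=
      (Real.hasDerivAt_rpow_const (Or.inl hp.ne')).comp t hbase
    have hr2 : HasDerivAt (fun s => (x₀ - s) ^ (-δ))
        (((-δ) * (x₀ - t) ^ (-δ - 1)) * (-1)) t :=
      (Real.hasDerivAt_rpow_const (Or.inl hp.ne')).comp t hbase
    have hD := (hr1.mul (hG1deriv t htIoo)).sub
      (((hr2.mul ((hgderiv t htIoo).sub_const (g x₀)))).const_mul (δ - 1))
    convert hD using 1
    case e'_4 => rfl
    case e'_5 => rfl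
    case e'_8 => rfl
    have he : (1:ℝ) - δ - 1 = -δ := by ring
    rw [he]
    ring
  have hFx₀ : F x₀ = 0 := by
    rw [hFdef]
    simp [sub_self, Real.zero_rpow (by linarith : (1:ℝ) - δ ≠ 0),
      Real.zero_rpow (by linarith : -δ ≠ 0)]
  -- continuity of F on [0, x₀]
  have hIccsub : Set.Icc (0:ℝ) x₀ ⊆ Set.Icc (0:ℝ) 1 :=
    Set.Icc_subset_Icc le_rfl (le_of_lt hx1)
  have hFcont : ContinuousOn F (Set.Icc 0 x₀) := by
    intro t ht
    rcases lt_or_eq_of_le ht.2 with h | h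
    · have hp : (0:ℝ) < x₀ - t := sub_pos.2 h
      have c1 : ContinuousAt (fun s => (x₀ - s) ^ (1 - δ)) t :=
        (Real.continuousAt_rpow_const _ _ (Or.inl hp.ne')).comp
          ((continuous_const.sub continuous_id).continuousAt)
      have c2 : ContinuousAt (fun s => (x₀ - s) ^ (-δ)) t :=
        (Real.continuousAt_rpow_const _ _ (Or.inl hp.ne')).comp
          ((continuous_const.sub continuous_id).continuousAt)
      have cg : ContinuousWithinAt g (Set.Icc 0 x₀) t :=
        (hgcont t (hIccsub ht)).mono hIccsub
      have cG1 : ContinuousWithinAt G1 (Set.Icc 0 x₀) t :=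
        (hG1cont t (hIccsub ht)).mono hIccsub
      exact ((c1.continuousWithinAt.mul cG1).sub
        (((c2.continuousWithinAt.mul (cg.sub continuousWithinAt_const))).const_mul
          (δ - 1)))
    · rw [h]
      show Tendsto F (nhdsWithin x₀ (Set.Icc 0 x₀)) (nhds (F x₀))
      rw [hFx₀]
      apply squeeze_zero_norm'
        (a := fun s => δ * M * (x₀ - s) ^ (2 - δ))
      · filter_upwards [self_mem_nhdsWithin,
          mem_nhdsWithin_of_mem_nhds (Ioi_mem_nhds hax)] with s hs1 hs2
        have hsIcc : s ∈ Set.Icc a x₀ := ⟨le_of_lt hs2, hs1.2⟩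
        have hsn : (0:ℝ) ≤ x₀ - s := sub_nonneg.2 hs1.2
        have e1 : (x₀ - s) ^ (1 - δ) * (x₀ - s) = (x₀ - s) ^ (2 - δ) := by
          rw [show (2:ℝ) - δ = (1 - δ) + 1 by ring,
            Real.rpow_add' hsn (by linarith), Real.rpow_one]
        have e2 : (x₀ - s) ^ (-δ) * ((x₀ - s) * (x₀ - s)) = (x₀ - s) ^ (2 - δ) := by
          rw [show (2:ℝ) - δ = (-δ) + 2 by ring,
            Real.rpow_add' hsn (by linarith),
            show ((2:ℝ):ℝ) = ((2:ℕ):ℝ) by norm_num, Real.rpow_natCast]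
          ring
        have b1 : |(x₀ - s) ^ (1 - δ) * G1 s| ≤ M * (x₀ - s) ^ (2 - δ) := by
          rw [abs_mul, abs_of_nonneg (Real.rpow_nonneg hsn _)]
          calc (x₀ - s) ^ (1 - δ) * |G1 s|
              ≤ (x₀ - s) ^ (1 - δ) * (M * (x₀ - s)) :=
                mul_le_mul_of_nonneg_left (hG1b s hsIcc) (Real.rpow_nonneg hsn _)
            _ = M * ((x₀ - s) ^ (1 - δ) * (x₀ - s)) := by ring
            _ = M * (x₀ - s) ^ (2 - δ) := by rw [e1]
        have b2 : |(x₀ - s) ^ (-δ) * (g s - g x₀)| ≤ M * (x₀ - s) ^ (2 - δ) := by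
          rw [abs_mul, abs_of_nonneg (Real.rpow_nonneg hsn _)]
          calc (x₀ - s) ^ (-δ) * |g s - g x₀|
              ≤ (x₀ - s) ^ (-δ) * (M * (x₀ - s) * (x₀ - s)) :=
                mul_le_mul_of_nonneg_left (hgb s hsIcc) (Real.rpow_nonneg hsn _)
            _ = M * ((x₀ - s) ^ (-δ) * ((x₀ - s) * (x₀ - s))) := by ring
            _ = M * (x₀ - s) ^ (2 - δ) := by rw [e2]
        calc ‖F s‖ ≤ |(x₀ - s) ^ (1 - δ) * G1 s|
              + (δ - 1) * |(x₀ - s) ^ (-δ) * (g s - g x₀)| := by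
              rw [hFdef, Real.norm_eq_abs]
              refine le_trans (abs_sub _ _) ?_
              rw [abs_mul (δ - 1), abs_of_pos hδ10]
          _ ≤ M * (x₀ - s) ^ (2 - δ) + (δ - 1) * (M * (x₀ - s) ^ (2 - δ)) :=
              add_le_add b1 (mul_le_mul_of_nonneg_left b2 (le_of_lt hδ10))
          _ = δ * M * (x₀ - s) ^ (2 - δ) := by ring
      · have hb : Tendsto (fun s => x₀ - s) (nhdsWithin x₀ (Set.Icc 0 x₀)) (nhds 0) := by
          have h0 : Tendsto (fun s : ℝ => x₀ - s) (nhds x₀) (nhds (x₀ - x₀)) :=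
            (continuous_const.sub continuous_id).tendsto x₀
          rw [sub_self] at h0
          exact h0.mono_left nhdsWithin_le_nhds
        have hc : ContinuousAt (fun y : ℝ => y ^ (2 - δ)) 0 :=
          Real.continuousAt_rpow_const _ _ (Or.inr (le_of_lt h2δ))
        have := (hc.tendsto.comp hb).const_mul (δ * M)
        rw [Real.zero_rpow (ne_of_gt h2δ), mul_zero] at this
        exact this
  -- integrability
  have hIooSub : Set.Ioo a x₀ ⊆ Set.Ioo (0:ℝ) 1 :=
    fun t ht => haIoo (Set.Ioo_subset_Icc_self ht)
  have ha1 : a < 1 := lt_trans hax hx1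
  have hbase2 : IntervalIntegrable (fun t => (x₀ - t) ^ (1 - δ)) volume a x₀ := by
    have h1 : IntervalIntegrable (fun s : ℝ => s ^ (1 - δ)) volume 0 (x₀ - a) :=
      intervalIntegral.intervalIntegrable_rpow' (by linarith)
    simpa using (h1.comp_sub_left x₀).symm
  have hbase2' : IntegrableOn (fun t => M * (x₀ - t) ^ (1 - δ)) (Set.Ioo a x₀) := by
    rw [← intervalIntegrable_iff_integrableOn_Ioo_of_le hax.le]
    exact hbase2.const_mul M
  have hImain1 : IntervalIntegrable (fun t => (x₀ - t) ^ (1 - δ) * G2 t) volume 0 a := by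
    have hbase1 : IntervalIntegrable (fun t : ℝ => C * a ^ (1 - δ) * t ^ (-θ)) volume 0 a :=
      (intervalIntegral.intervalIntegrable_rpow' (by linarith)).const_mul _
    apply hbase1.mono_fun
    · rw [Set.uIoc_of_le ha0.le]
      apply ContinuousOn.aestronglyMeasurable _ measurableSet_Ioc
      intro t ht
      have hp : (0:ℝ) < x₀ - t := by
        have := ht.2; simp only [hadef] at this ⊢; linarith
      exact ((Real.continuousAt_rpow_const _ _ (Or.inl hp.ne')).comp
        ((continuous_const.sub continuous_id).continuousAt)).continuousWithinAt.mul
        ((hG2cont t ⟨ht.1, lt_of_le_of_lt ht.2 ha1⟩).mono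
          (fun u hu => ⟨hu.1, lt_of_le_of_lt hu.2 ha1⟩))
    · rw [Set.uIoc_of_le ha0.le]
      refine (ae_restrict_iff' measurableSet_Ioc).2 (Filter.Eventually.of_forall ?_)
      intro t ht
      have ht0 : 0 < t := ht.1
      have htx : a ≤ x₀ - t := by simp only [hadef] at ht ⊢; linarith [ht.2]
      have h1 : (x₀ - t) ^ (1 - δ) ≤ a ^ (1 - δ) :=
        Real.rpow_le_rpow_of_nonpos ha0 htx (by linarith)
      have h2 : |G2 t| ≤ C * t ^ (-θ) := hbound t ⟨ht0, le_trans ht.2 ha1.le⟩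
      have hrhs : (0:ℝ) ≤ C * a ^ (1 - δ) * t ^ (-θ) := by positivity
      simp only [Real.norm_eq_abs]
      rw [abs_of_nonneg hrhs, abs_mul,
        abs_of_nonneg (Real.rpow_nonneg (by linarith [htx] : (0:ℝ) ≤ x₀ - t) _)]
      calc (x₀ - t) ^ (1 - δ) * |G2 t| ≤ a ^ (1 - δ) * (C * t ^ (-θ)) :=
            mul_le_mul h1 h2 (abs_nonneg _) (Real.rpow_nonneg ha0.le _)
        _ = C * a ^ (1 - δ) * t ^ (-θ) := by ring
  have hImain2 : IntervalIntegrable (fun t => (x₀ - t) ^ (1 - δ) * G2 t) volume a x₀ := by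
    rw [intervalIntegrable_iff_integrableOn_Ioo_of_le hax.le]
    apply MeasureTheory.Integrable.mono hbase2'
    · apply ContinuousOn.aestronglyMeasurable _ measurableSet_Ioo
      intro t ht
      have hp : (0:ℝ) < x₀ - t := sub_pos.2 ht.2
      exact ((Real.continuousAt_rpow_const _ _ (Or.inl hp.ne')).comp
        ((continuous_const.sub continuous_id).continuousAt)).continuousWithinAt.mul
        ((hG2cont t (hIooSub ht)).mono hIooSub)
    · refine (ae_restrict_iff' measurableSet_Ioo).2 (Filter.Eventually.of_forall ?_)
      intro t ht
      have hsn : (0:ℝ) ≤ x₀ - t := (sub_pos.2 ht.2).le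
      have hMt : |G2 t| ≤ M := hM t (Set.Ioo_subset_Icc_self ht)
      rw [Real.norm_eq_abs, Real.norm_eq_abs, abs_mul,
        abs_of_nonneg (Real.rpow_nonneg hsn _),
        abs_of_nonneg (mul_nonneg hMnn (Real.rpow_nonneg hsn _))]
      calc (x₀ - t) ^ (1 - δ) * |G2 t| ≤ (x₀ - t) ^ (1 - δ) * M :=
            mul_le_mul_of_nonneg_left hMt (Real.rpow_nonneg hsn _)
        _ = M * (x₀ - t) ^ (1 - δ) := mul_comm _ _
  have hImain := hImain1.trans hImain2
  set k : ℝ → ℝ := fun t => (x₀ - t) ^ (-δ - 1) * (g t - g x₀) with hkdef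
  have hIk1 : IntervalIntegrable k volume 0 a := by
    apply ContinuousOn.intervalIntegrable
    rw [Set.uIcc_of_le ha0.le]
    intro t ht
    have hp : (0:ℝ) < x₀ - t := by
      have := ht.2; simp only [hadef] at this ⊢; linarith
    exact ((Real.continuousAt_rpow_const _ _ (Or.inl hp.ne')).comp
      ((continuous_const.sub continuous_id).continuousAt)).continuousWithinAt.mul
      (((hgcont.mono (Set.Icc_subset_Icc le_rfl ha1.le)) t ht).sub continuousWithinAt_const)
  have hIk2 : IntervalIntegrable k volume a x₀ := by
    rw [intervalIntegrable_iff_integrableOn_Ioo_of_le hax.le]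
    apply MeasureTheory.Integrable.mono hbase2'
    · apply ContinuousOn.aestronglyMeasurable _ measurableSet_Ioo
      intro t ht
      have hp : (0:ℝ) < x₀ - t := sub_pos.2 ht.2
      exact ((Real.continuousAt_rpow_const _ _ (Or.inl hp.ne')).comp
        ((continuous_const.sub continuous_id).continuousAt)).continuousWithinAt.mul
        ((((hgcont.mono (Set.Ioo_subset_Icc_self.trans (haIoo.trans
          Set.Ioo_subset_Icc_self))) t ht)).sub continuousWithinAt_const)
    · refine (ae_restrict_iff' measurableSet_Ioo).2 (Filter.Eventually.of_forall ?_)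
      intro t ht
      have hp : (0:ℝ) < x₀ - t := sub_pos.2 ht.2
      have hsn : (0:ℝ) ≤ x₀ - t := hp.le
      have e3 : (x₀ - t) ^ (-δ - 1) * ((x₀ - t) * (x₀ - t)) = (x₀ - t) ^ (1 - δ) := by
        rw [show (1:ℝ) - δ = (-δ - 1) + 2 by ring, Real.rpow_add hp,
          show ((2:ℝ):ℝ) = ((2:ℕ):ℝ) by norm_num, Real.rpow_natCast]
        ring
      have hgt : |g t - g x₀| ≤ M * (x₀ - t) * (x₀ - t) :=
        hgb t (Set.Ioo_subset_Icc_self ht)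
      rw [Real.norm_eq_abs, Real.norm_eq_abs, hkdef]
      simp only []
      rw [abs_mul, abs_of_nonneg (Real.rpow_nonneg hsn _),
        abs_of_nonneg (mul_nonneg hMnn (Real.rpow_nonneg hsn _))]
      calc (x₀ - t) ^ (-δ - 1) * |g t - g x₀|
          ≤ (x₀ - t) ^ (-δ - 1) * (M * (x₀ - t) * (x₀ - t)) :=
            mul_le_mul_of_nonneg_left hgt (Real.rpow_nonneg hsn _)
        _ = M * ((x₀ - t) ^ (-δ - 1) * ((x₀ - t) * (x₀ - t))) := by ring
        _ = M * (x₀ - t) ^ (1 - δ) := by rw [e3]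
  have hIk := hIk1.trans hIk2
  have hIh : IntervalIntegrable (fun t => (x₀ - t) ^ (1 - δ) * G2 t
      - δ * (δ - 1) * ((x₀ - t) ^ (-δ - 1) * (g t - g x₀))) volume 0 x₀ :=
    hImain.sub (hIk.const_mul (δ * (δ - 1)))
  -- fundamental theorem of calculus
  have hFTC : (∫ t in (0:ℝ)..x₀, ((x₀ - t) ^ (1 - δ) * G2 t
      - δ * (δ - 1) * ((x₀ - t) ^ (-δ - 1) * (g t - g x₀)))) = F x₀ - F 0 :=
    intervalIntegral.integral_eq_sub_of_hasDeriv_right_of_le hx0.le hFcont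
      (fun t ht => (hFderiv t ht).hasDerivWithinAt) hIh
  have hsplit : (∫ t in (0:ℝ)..x₀, (x₀ - t) ^ (1 - δ) * G2 t)
      = (F x₀ - F 0) + δ * (δ - 1) * ∫ t in (0:ℝ)..x₀, k t := by
    rw [← hFTC, ← intervalIntegral.integral_const_mul,
      ← intervalIntegral.integral_add hIh (hIk.const_mul _)]
    apply intervalIntegral.integral_congr
    intro t ht
    simp only [hkdef]
    ring
  have hknn : 0 ≤ ∫ t in (0:ℝ)..x₀, k t :=
    intervalIntegral.integral_nonneg hx0.le (fun u hu =>
      mul_nonneg (Real.rpow_nonneg (sub_nonneg.2 hu.2) _)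
        (sub_nonneg.2 (hmin u ⟨hu.1, le_trans hu.2 hx1.le⟩)))
  have hF0 : F 0 = x₀ ^ (1 - δ) * G1 0 - (δ - 1) * (x₀ ^ (-δ) * (g 0 - g x₀)) := by
    simp [hFdef]
  have hxid : x₀ ^ (1 - δ) = x₀ ^ (-δ) * x₀ := by
    rw [show (1:ℝ) - δ = -δ + 1 by ring, Real.rpow_add hx0, Real.rpow_one]
  have hmain_ge : (F x₀ - F 0) ≤ ∫ t in (0:ℝ)..x₀, (x₀ - t) ^ (1 - δ) * G2 t := by
    rw [hsplit]
    nlinarith [mul_nonneg (mul_nonneg (by linarith : (0:ℝ) ≤ δ) (by linarith : (0:ℝ) ≤ δ - 1)) hknn]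
  have hrhs_eq : (x₀ ^ (-δ) / Real.Gamma (2 - δ)) *
      ((δ - 1) * (g 0 - g x₀) - x₀ * G1 0)
      = (1 / Real.Gamma (2 - δ)) * (F x₀ - F 0) := by
    rw [hFx₀, hF0, hxid]
    field_simp
    ring
  show (1 / Real.Gamma (2 - δ)) *
      (∫ t in (0:ℝ)..x₀, (x₀ - t) ^ (1 - δ) * G2 t) ≥ _
  rw [hrhs_eq, ge_iff_le]
  exact mul_le_mul_of_nonneg_left hmain_ge (by positivity)
end

section
/- Let 1 < δ < 2. Let g : [0,1] → ℝ be continuously differentiable on [0,1], twice continuously differentiable on (0,1], and suppose there exist constants C > 0 and θ ∈ (0,1) such that |g''(x)| ≤ C x^{-θ} for all 0 < x ≤ 1. Suppose g attains its global minimum over [0,1] at a point x₀ ∈ (0,1) and that g'(0) < 0. Then D*^δ g(x₀) > 0. -/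
open Set MeasureTheory Filter intervalIntegral Topology

theorem stmt1 (δ : ℝ) (hδ1 : 1 < δ) (hδ2 : δ < 2) (g : ℝ → ℝ)
    (hg1 : ContDiffOn ℝ 1 g (Set.Icc 0 1)) (hg2 : ContDiffOn ℝ 2 g (Set.Ioc 0 1))
    (C θ : ℝ) (hC : 0 < C) (hθ1 : 0 < θ) (hθ2 : θ < 1)
    (hbound : ∀ x ∈ Set.Ioc (0:ℝ) 1,
      |derivWithin (derivWithin g (Set.Icc 0 1)) (Set.Icc 0 1) x| ≤ C * x ^ (-θ))
    (x₀ : ℝ) (hx₀ : x₀ ∈ Set.Ioo (0:ℝ) 1)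
    (hmin : ∀ x ∈ Set.Icc (0:ℝ) 1, g x₀ ≤ g x)
    (hg'0 : derivWithin g (Set.Icc 0 1) 0 < 0) :
    0 < caputoW δ g x₀ := by
  obtain ⟨hx0, hx1⟩ := hx₀
  set s : Set ℝ := Set.Icc 0 1 with hs
  set h : ℝ → ℝ := derivWithin g s with hh
  set h2 : ℝ → ℝ := derivWithin h s with hh2
  have hud : UniqueDiffOn ℝ s := uniqueDiffOn_Icc one_pos
  -- basic facts on Ioo 0 1
  have hnhds : ∀ t ∈ Set.Ioo (0:ℝ) 1, s ∈ 𝓝 t := fun t ht => Icc_mem_nhds ht.1 ht.2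
  have hgC2 : ContDiffOn ℝ 2 g (Set.Ioo 0 1) := hg2.mono Set.Ioo_subset_Ioc_self
  have hopen : IsOpen (Set.Ioo (0:ℝ) 1) := isOpen_Ioo
  have hG1 : ContDiffOn ℝ 1 (deriv g) (Set.Ioo 0 1) :=
    hgC2.deriv_of_isOpen (m := 1) hopen (by norm_num)
  have hEqloc : ∀ t ∈ Set.Ioo (0:ℝ) 1, h =ᶠ[𝓝 t] deriv g := by
    intro t ht
    filter_upwards [hopen.mem_nhds ht] with y hy
    exact derivWithin_of_mem_nhds (hnhds y hy)
  have hEq1 : ∀ t ∈ Set.Ioo (0:ℝ) 1, h t = deriv g t :=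
    fun t ht => derivWithin_of_mem_nhds (hnhds t ht)
  have hEq2 : ∀ t ∈ Set.Ioo (0:ℝ) 1, h2 t = deriv (deriv g) t := by
    intro t ht
    rw [hh2, derivWithin_of_mem_nhds (hnhds t ht)]
    exact (hEqloc t ht).deriv_eq
  have hDg : ∀ t ∈ Set.Ioo (0:ℝ) 1, HasDerivAt g (h t) t := by
    intro t ht
    rw [hEq1 t ht]
    exact ((hgC2.differentiableOn (by norm_num)).differentiableAt
      (hopen.mem_nhds ht)).hasDerivAt
  have hDh : ∀ t ∈ Set.Ioo (0:ℝ) 1, HasDerivAt h (h2 t) t := by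
    intro t ht
    rw [hEq2 t ht]
    have hd : HasDerivAt (deriv g) (deriv (deriv g) t) t :=
      ((hG1.differentiableOn (by norm_num)).differentiableAt (hopen.mem_nhds ht)).hasDerivAt
    exact hd.congr_of_eventuallyEq (hEqloc t ht)
  have hContg : ContinuousOn g s := hg1.continuousOn
  have hConth : ContinuousOn h s := hg1.continuousOn_derivWithin hud le_rfl
  have hConth2 : ContinuousOn h2 (Set.Ioo 0 1) :=
    (hG1.continuousOn_deriv_of_isOpen hopen le_rfl).congr hEq2
  have hx₀Ioo : x₀ ∈ Set.Ioo (0:ℝ) 1 := ⟨hx0, hx1⟩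
  have hhx₀ : h x₀ = 0 := by
    rw [hEq1 x₀ hx₀Ioo]
    refine IsLocalMin.deriv_eq_zero ?_
    filter_upwards [hnhds x₀ hx₀Ioo] with y hy using hmin y hy
  -- constants
  set m : ℝ := x₀ / 2 with hm
  have hm0 : 0 < m := by positivity
  have hmx : m < x₀ := by simp only [hm]; linarith
  set M : ℝ := C * m ^ (-θ) with hM
  have hM0 : 0 < M := mul_pos hC (Real.rpow_pos_of_pos hm0 _)
  have hb2 : ∀ t : ℝ, m ≤ t → t ≤ 1 → |h2 t| ≤ M := by
    intro t htm ht1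
    have ht0 : 0 < t := lt_of_lt_of_le hm0 htm
    refine le_trans (hbound t ⟨ht0, ht1⟩) ?_
    exact mul_le_mul_of_nonneg_left
      (Real.rpow_le_rpow_of_nonpos hm0 htm (by linarith)) hC.le
  have hsubIoo : Set.Icc m x₀ ⊆ Set.Ioo (0:ℝ) 1 :=
    fun y hy => ⟨lt_of_lt_of_le hm0 hy.1, lt_of_le_of_lt hy.2 hx1⟩
  -- MVT bounds near x₀
  have hC1 : ∀ t ∈ Set.Icc m x₀, |h t| ≤ M * (x₀ - t) := by
    intro t ht
    have key := Convex.norm_image_sub_le_of_norm_hasDerivWithin_le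
      (f := h) (f' := h2) (s := Set.Icc m x₀) (C := M)
      (fun y hy => (hDh y (hsubIoo hy)).hasDerivWithinAt)
      (fun y hy => hb2 y hy.1 (le_trans hy.2 hx1.le))
      (convex_Icc _ _) (right_mem_Icc.2 (le_of_lt hmx)) ht
    rw [hhx₀] at key
    simpa [abs_of_nonpos (by linarith [ht.2] : t - x₀ ≤ 0)] using key
  have hC2 : ∀ t ∈ Set.Icc m x₀, |g t - g x₀| ≤ M * (x₀ - t) * (x₀ - t) := by
    intro t ht
    have key := Convex.norm_image_sub_le_of_norm_hasDerivWithin_le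
      (f := g) (f' := h) (s := Set.Icc t x₀) (C := M * (x₀ - t))
      (fun y hy => (hDg y (hsubIoo ⟨le_trans ht.1 hy.1, hy.2⟩)).hasDerivWithinAt)
      (fun y hy => le_trans (hC1 y ⟨le_trans ht.1 hy.1, hy.2⟩)
        (mul_le_mul_of_nonneg_left (by linarith [hy.1]) hM0.le))
      (convex_Icc _ _) (right_mem_Icc.2 ht.2) (left_mem_Icc.2 ht.2)
    simpa [abs_of_nonpos (by linarith [ht.2] : t - x₀ ≤ 0)] using key
  -- the auxiliary functions
  set Φ : ℝ → ℝ := fun t => (x₀ - t) ^ (1 - δ) * h t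
      - (δ - 1) * ((x₀ - t) ^ (-δ) * (g t - g x₀)) with hΦdef
  set F : ℝ → ℝ := fun t => (x₀ - t) ^ (1 - δ) * h2 t with hFdef
  set Ψ : ℝ → ℝ := fun t => δ * (δ - 1) * ((x₀ - t) ^ (-δ - 1) * (g t - g x₀)) with hΨdef
  have hDΦ : ∀ t ∈ Set.Ioo (0:ℝ) x₀, HasDerivAt Φ (F t - Ψ t) t := by
    intro t ht
    have htIoo : t ∈ Set.Ioo (0:ℝ) 1 := ⟨ht.1, lt_trans ht.2 hx1⟩
    have hpos : 0 < x₀ - t := by linarith [ht.2]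
    have hbase : HasDerivAt (fun y : ℝ => x₀ - y) (-1) t := (hasDerivAt_id t).const_sub x₀
    have hr1 : HasDerivAt (fun y : ℝ => (x₀ - y) ^ (1 - δ))
        (-((1 - δ) * (x₀ - t) ^ (-δ))) t := by
      have := (Real.hasDerivAt_rpow_const (p := 1 - δ) (Or.inl hpos.ne')).comp t hbase
      rw [show (1:ℝ) - δ - 1 = -δ by ring] at this
      refine this.congr_deriv ?_
      ring
    have hr2 : HasDerivAt (fun y : ℝ => (x₀ - y) ^ (-δ))
        (δ * (x₀ - t) ^ (-δ - 1)) t := by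
      have := (Real.hasDerivAt_rpow_const (p := -δ) (Or.inl hpos.ne')).comp t hbase
      refine this.congr_deriv ?_
      ring
    have hd1 : HasDerivAt (fun y => (x₀ - y) ^ (1 - δ) * h y)
        (-((1 - δ) * (x₀ - t) ^ (-δ)) * h t + (x₀ - t) ^ (1 - δ) * h2 t) t :=
      hr1.mul (hDh t htIoo)
    have hd2 : HasDerivAt (fun y => (x₀ - y) ^ (-δ) * (g y - g x₀))
        (δ * (x₀ - t) ^ (-δ - 1) * (g t - g x₀) + (x₀ - t) ^ (-δ) * h t) t :=
      hr2.mul ((hDg t htIoo).sub_const (g x₀))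
    have := hd1.sub (hd2.const_mul (δ - 1))
    refine this.congr_deriv ?_
    simp only [hFdef, hΨdef]
    ring
  -- continuity of the integrands on (0, x₀)
  have sub1 : Set.Ioo (0:ℝ) x₀ ⊆ Set.Ioo 0 1 := Set.Ioo_subset_Ioo le_rfl hx1.le
  have sub2 : Set.Ioo (0:ℝ) x₀ ⊆ s := fun y hy => ⟨hy.1.le, le_trans hy.2.le hx1.le⟩
  have hContrpow : ∀ p : ℝ, ContinuousOn (fun t : ℝ => (x₀ - t) ^ p) (Set.Ioo 0 x₀) := by
    intro p
    exact (continuousOn_const.sub continuousOn_id).rpow_const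
      (fun t ht => Or.inl (sub_ne_zero.2 (ne_of_gt ht.2)))
  have hContF : ContinuousOn F (Set.Ioo 0 x₀) :=
    (hContrpow _).mul (hConth2.mono sub1)
  have hContΨ : ContinuousOn Ψ (Set.Ioo 0 x₀) :=
    continuousOn_const.mul ((hContrpow _).mul ((hContg.mono sub2).sub continuousOn_const))
  -- integrable dominating functions
  have hdom1 : ∀ c : ℝ, IntegrableOn (fun t : ℝ => c * t ^ (-θ)) (Set.Ioo 0 m) := by
    intro c
    have h1 : IntervalIntegrable (fun u : ℝ => u ^ (-θ)) volume 0 m :=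
      intervalIntegrable_rpow' (by linarith)
    rw [intervalIntegrable_iff_integrableOn_Ioo_of_le hm0.le] at h1
    exact h1.const_mul c
  have hdom2 : ∀ c : ℝ, IntegrableOn (fun t : ℝ => c * (x₀ - t) ^ (1 - δ)) (Set.Ico m x₀) := by
    intro c
    have h1 : IntervalIntegrable (fun u : ℝ => u ^ (1 - δ)) volume 0 (x₀ - m) :=
      intervalIntegrable_rpow' (by linarith)
    have h2 := (h1.comp_sub_left x₀).symm
    simp only [sub_zero, sub_sub_cancel] at h2
    rw [intervalIntegrable_iff_integrableOn_Ico_of_le hmx.le] at h2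
    exact h2.const_mul c
  have hIcoIoo : Set.Ico m x₀ ⊆ Set.Ioo (0:ℝ) x₀ := fun y hy => ⟨lt_of_lt_of_le hm0 hy.1, hy.2⟩
  have hIooIoo : Set.Ioo (0:ℝ) m ⊆ Set.Ioo (0:ℝ) x₀ := Set.Ioo_subset_Ioo le_rfl hmx.le
  -- integrability of F
  have hIntF : IntervalIntegrable F volume 0 x₀ := by
    rw [intervalIntegrable_iff_integrableOn_Ioo_of_le hx0.le, ← Set.Ioo_union_Ico_eq_Ioo hm0 hmx.le]
    refine MeasureTheory.IntegrableOn.union ?_ ?_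
    · refine (hdom1 (m ^ (1 - δ) * C)).mono'
        ((hContF.mono hIooIoo).aestronglyMeasurable measurableSet_Ioo) ?_
      rw [ae_restrict_iff' measurableSet_Ioo]
      refine Filter.Eventually.of_forall fun t ht => ?_
      have ht1 : t ≤ 1 := by have := ht.2; have := hmx; have := hx1; linarith
      have hxt : m ≤ x₀ - t := by have := ht.2; linarith
      have h1 : (x₀ - t) ^ (1 - δ) ≤ m ^ (1 - δ) :=
        Real.rpow_le_rpow_of_nonpos hm0 hxt (by linarith)
      have hB2 : |h2 t| ≤ C * t ^ (-θ) := hbound t ⟨ht.1, ht1⟩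
      calc ‖F t‖ = (x₀ - t) ^ (1 - δ) * |h2 t| := by
            rw [Real.norm_eq_abs, abs_mul,
              abs_of_nonneg (Real.rpow_nonneg (by linarith [hm0, hxt]) _)]
        _ ≤ m ^ (1 - δ) * (C * t ^ (-θ)) :=
            mul_le_mul h1 hB2 (abs_nonneg _) (Real.rpow_nonneg hm0.le _)
        _ = m ^ (1 - δ) * C * t ^ (-θ) := by ring
    · refine (hdom2 M).mono'
        ((hContF.mono hIcoIoo).aestronglyMeasurable measurableSet_Ico) ?_
      rw [ae_restrict_iff' measurableSet_Ico]
      refine Filter.Eventually.of_forall fun t ht => ?_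
      have hxt : 0 ≤ x₀ - t := by have := ht.2; linarith
      have hB2 : |h2 t| ≤ M := hb2 t ht.1 (by have := ht.2; linarith)
      calc ‖F t‖ = (x₀ - t) ^ (1 - δ) * |h2 t| := by
            rw [Real.norm_eq_abs, abs_mul, abs_of_nonneg (Real.rpow_nonneg hxt _)]
        _ ≤ (x₀ - t) ^ (1 - δ) * M :=
            mul_le_mul_of_nonneg_left hB2 (Real.rpow_nonneg hxt _)
        _ = M * (x₀ - t) ^ (1 - δ) := by ring
  -- bound for g
  obtain ⟨B, hB⟩ := isCompact_Icc.exists_bound_of_continuousOn hContg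
  have hδδ : 0 ≤ δ * (δ - 1) := by nlinarith
  -- integrability of Ψ
  have hIntΨ : IntervalIntegrable Ψ volume 0 x₀ := by
    rw [intervalIntegrable_iff_integrableOn_Ioo_of_le hx0.le, ← Set.Ioo_union_Ico_eq_Ioo hm0 hmx.le]
    refine MeasureTheory.IntegrableOn.union ?_ ?_
    · have hdom0 : IntegrableOn (fun _ : ℝ => δ * (δ - 1) * (m ^ (-δ - 1) * (B + B)))
          (Set.Ioo 0 m) volume := integrableOn_const measure_Ioo_lt_top.ne
      refine hdom0.mono'
        ((hContΨ.mono hIooIoo).aestronglyMeasurable measurableSet_Ioo) ?_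
      rw [ae_restrict_iff' measurableSet_Ioo]
      refine Filter.Eventually.of_forall fun t ht => ?_
      have hxt : m ≤ x₀ - t := by have := ht.2; linarith
      have hgt : |g t - g x₀| ≤ B + B := by
        refine (abs_sub _ _).trans (add_le_add ?_ ?_)
        · exact hB t ⟨ht.1.le, by have := ht.2; have := hmx; have := hx1; linarith⟩
        · exact hB x₀ ⟨hx0.le, hx1.le⟩
      have hr : (x₀ - t) ^ (-δ - 1) ≤ m ^ (-δ - 1) :=
        Real.rpow_le_rpow_of_nonpos hm0 hxt (by linarith)
      calc ‖Ψ t‖ = δ * (δ - 1) * ((x₀ - t) ^ (-δ - 1) * |g t - g x₀|) := by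
            rw [Real.norm_eq_abs, hΨdef, abs_mul, abs_mul, abs_mul,
              abs_of_nonneg (by linarith : (0:ℝ) ≤ δ),
              abs_of_nonneg (by linarith : (0:ℝ) ≤ δ - 1),
              abs_of_nonneg (Real.rpow_nonneg (by linarith : (0:ℝ) ≤ x₀ - t) _)]
        _ ≤ δ * (δ - 1) * (m ^ (-δ - 1) * (B + B)) := by
            refine mul_le_mul_of_nonneg_left ?_ hδδ
            exact mul_le_mul hr hgt (abs_nonneg _) (Real.rpow_nonneg hm0.le _)
    · refine (hdom2 (δ * (δ - 1) * M)).mono'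
        ((hContΨ.mono hIcoIoo).aestronglyMeasurable measurableSet_Ico) ?_
      rw [ae_restrict_iff' measurableSet_Ico]
      refine Filter.Eventually.of_forall fun t ht => ?_
      have hpos : 0 < x₀ - t := by have := ht.2; linarith
      have hgt : |g t - g x₀| ≤ M * (x₀ - t) * (x₀ - t) := hC2 t ⟨ht.1, ht.2.le⟩
      have hrw : (x₀ - t) ^ (-δ - 1) * ((x₀ - t) * (x₀ - t)) = (x₀ - t) ^ (1 - δ) := by
        have h22 : (x₀ - t) * (x₀ - t) = (x₀ - t) ^ (2:ℝ) := by rw [Real.rpow_two]; ring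
        rw [h22, ← Real.rpow_add hpos]
        congr 1
        ring
      calc ‖Ψ t‖ = δ * (δ - 1) * ((x₀ - t) ^ (-δ - 1) * |g t - g x₀|) := by
            rw [Real.norm_eq_abs, hΨdef, abs_mul, abs_mul, abs_mul,
              abs_of_nonneg (by linarith : (0:ℝ) ≤ δ),
              abs_of_nonneg (by linarith : (0:ℝ) ≤ δ - 1),
              abs_of_nonneg (Real.rpow_nonneg hpos.le _)]
        _ ≤ δ * (δ - 1) * ((x₀ - t) ^ (-δ - 1) * (M * (x₀ - t) * (x₀ - t))) := by
            refine mul_le_mul_of_nonneg_left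
              (mul_le_mul_of_nonneg_left hgt (Real.rpow_nonneg hpos.le _)) hδδ
        _ = δ * (δ - 1) * M * (x₀ - t) ^ (1 - δ) := by
            rw [show (x₀ - t) ^ (-δ - 1) * (M * (x₀ - t) * (x₀ - t))
              = M * ((x₀ - t) ^ (-δ - 1) * ((x₀ - t) * (x₀ - t))) by ring, hrw]
            ring
  have hIntΦ' : IntervalIntegrable (fun t => F t - Ψ t) volume 0 x₀ := hIntF.sub hIntΨ
  -- limit of Φ at 0⁺
  set L : ℝ := x₀ ^ (1 - δ) * h 0 - (δ - 1) * (x₀ ^ (-δ) * (g 0 - g x₀)) with hL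
  have hle : 𝓝[>] (0:ℝ) ≤ 𝓝[s] 0 := by
    rw [← nhdsWithin_Ioc_eq_nhdsGT one_pos]
    exact nhdsWithin_mono _ Set.Ioc_subset_Icc_self
  have hlim0 : Tendsto Φ (𝓝[>] (0:ℝ)) (𝓝 L) := by
    have hth : Tendsto h (𝓝[>] (0:ℝ)) (𝓝 (h 0)) :=
      ((hConth 0 (Set.left_mem_Icc.2 zero_le_one)).tendsto).mono_left hle
    have htg : Tendsto g (𝓝[>] (0:ℝ)) (𝓝 (g 0)) :=
      ((hContg 0 (Set.left_mem_Icc.2 zero_le_one)).tendsto).mono_left hle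
    have htr : ∀ p : ℝ, Tendsto (fun t : ℝ => (x₀ - t) ^ p) (𝓝[>] (0:ℝ)) (𝓝 (x₀ ^ p)) := by
      intro p
      have hc : ContinuousAt (fun t : ℝ => (x₀ - t) ^ p) 0 := by
        apply ContinuousAt.rpow_const
        · exact (continuous_const.sub continuous_id).continuousAt
        · left; simpa using hx0.ne'
      have h0 := hc.tendsto.mono_left (nhdsWithin_le_nhds (s := Set.Ioi (0:ℝ)))
      simpa using h0
    exact ((htr (1 - δ)).mul hth).sub
      ((((htr (-δ)).mul (htg.sub tendsto_const_nhds))).const_mul (δ - 1))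
  -- limit of Φ at x₀⁻
  have hlimx : Tendsto Φ (𝓝[<] x₀) (𝓝 0) := by
    have hbnd : ∀ᶠ t in 𝓝[<] x₀, ‖Φ t‖ ≤ δ * M * (x₀ - t) ^ (2 - δ) := by
      filter_upwards [Ioo_mem_nhdsLT_of_mem ⟨hmx, le_rfl⟩] with t ht
      have hpos : 0 < x₀ - t := by have := ht.2; linarith
      have hIcc : t ∈ Set.Icc m x₀ := ⟨ht.1.le, ht.2.le⟩
      have e1 : (x₀ - t) ^ (1 - δ) * (x₀ - t) = (x₀ - t) ^ (2 - δ) := by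
        rw [show (2:ℝ) - δ = (1 - δ) + 1 by ring, Real.rpow_add_one hpos.ne']
      have e2 : (x₀ - t) ^ (-δ) * ((x₀ - t) * (x₀ - t)) = (x₀ - t) ^ (2 - δ) := by
        have h22 : (x₀ - t) * (x₀ - t) = (x₀ - t) ^ (2:ℝ) := by rw [Real.rpow_two]; ring
        rw [h22, ← Real.rpow_add hpos]
        congr 1
        ring
      have b1 : |(x₀ - t) ^ (1 - δ) * h t| ≤ M * (x₀ - t) ^ (2 - δ) := by
        rw [abs_mul, abs_of_nonneg (Real.rpow_nonneg hpos.le _)]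
        calc (x₀ - t) ^ (1 - δ) * |h t| ≤ (x₀ - t) ^ (1 - δ) * (M * (x₀ - t)) :=
              mul_le_mul_of_nonneg_left (hC1 t hIcc) (Real.rpow_nonneg hpos.le _)
          _ = M * (x₀ - t) ^ (2 - δ) := by rw [← e1]; ring
      have b2 : |(δ - 1) * ((x₀ - t) ^ (-δ) * (g t - g x₀))|
          ≤ (δ - 1) * (M * (x₀ - t) ^ (2 - δ)) := by
        rw [abs_mul, abs_mul, abs_of_nonneg (by linarith : (0:ℝ) ≤ δ - 1),
          abs_of_nonneg (Real.rpow_nonneg hpos.le _)]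
        refine mul_le_mul_of_nonneg_left ?_ (by linarith)
        calc (x₀ - t) ^ (-δ) * |g t - g x₀|
            ≤ (x₀ - t) ^ (-δ) * (M * (x₀ - t) * (x₀ - t)) :=
              mul_le_mul_of_nonneg_left (hC2 t hIcc) (Real.rpow_nonneg hpos.le _)
          _ = M * (x₀ - t) ^ (2 - δ) := by rw [← e2]; ring
      calc ‖Φ t‖ ≤ |(x₀ - t) ^ (1 - δ) * h t|
            + |(δ - 1) * ((x₀ - t) ^ (-δ) * (g t - g x₀))| := abs_sub _ _
        _ ≤ M * (x₀ - t) ^ (2 - δ) + (δ - 1) * (M * (x₀ - t) ^ (2 - δ)) := add_le_add b1 b2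
        _ = δ * M * (x₀ - t) ^ (2 - δ) := by ring
    have h0 : Tendsto (fun t : ℝ => x₀ - t) (𝓝[<] x₀) (𝓝 0) := by
      have hc : Continuous fun t : ℝ => x₀ - t := continuous_const.sub continuous_id
      have := (hc.tendsto x₀).mono_left (nhdsWithin_le_nhds (s := Set.Iio x₀))
      simpa using this
    have h1 : Tendsto (fun t : ℝ => (x₀ - t) ^ (2 - δ)) (𝓝[<] x₀) (𝓝 0) := by
      have hc : ContinuousAt (fun u : ℝ => u ^ (2 - δ)) 0 :=
        Real.continuousAt_rpow_const 0 _ (Or.inr (by linarith))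
      have h2 := hc.tendsto.comp h0
      rwa [Real.zero_rpow (by linarith : (2:ℝ) - δ ≠ 0)] at h2
    have h3 : Tendsto (fun t : ℝ => δ * M * (x₀ - t) ^ (2 - δ)) (𝓝[<] x₀) (𝓝 0) := by
      have := h1.const_mul (δ * M)
      simpa using this
    exact squeeze_zero_norm' hbnd h3
  -- FTC
  have hFTC : ∫ t in (0:ℝ)..x₀, (F t - Ψ t) = 0 - L :=
    intervalIntegral.integral_eq_sub_of_hasDerivAt_of_tendsto hx0 hDΦ hIntΦ' hlim0 hlimx
  have hsplit : (∫ t in (0:ℝ)..x₀, F t)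
      = (∫ t in (0:ℝ)..x₀, (F t - Ψ t)) + ∫ t in (0:ℝ)..x₀, Ψ t := by
    rw [← intervalIntegral.integral_add hIntΦ' hIntΨ]
    exact intervalIntegral.integral_congr fun t _ => by ring
  have hΨnn : 0 ≤ ∫ t in (0:ℝ)..x₀, Ψ t := by
    refine intervalIntegral.integral_nonneg hx0.le fun t ht => ?_
    have h1 : 0 ≤ (x₀ - t) ^ (-δ - 1) := Real.rpow_nonneg (by linarith [ht.2]) _
    have hgt : 0 ≤ g t - g x₀ := sub_nonneg.2 (hmin t ⟨ht.1, le_trans ht.2 hx1.le⟩)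
    exact mul_nonneg hδδ (mul_nonneg h1 hgt)
  have hLneg : L < 0 := by
    have h1 : x₀ ^ (1 - δ) * h 0 < 0 :=
      mul_neg_of_pos_of_neg (Real.rpow_pos_of_pos hx0 _) hg'0
    have hgt : 0 ≤ (δ - 1) * (x₀ ^ (-δ) * (g 0 - g x₀)) := by
      refine mul_nonneg (by linarith) (mul_nonneg (Real.rpow_nonneg hx0.le _) ?_)
      exact sub_nonneg.2 (hmin 0 (Set.left_mem_Icc.2 zero_le_one))
    rw [hL]; linarith
  have hIpos : 0 < ∫ t in (0:ℝ)..x₀, F t := by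
    rw [hsplit, hFTC]; linarith
  have hΓ : (0:ℝ) < Real.Gamma (2 - δ) := Real.Gamma_pos_of_pos (by linarith)
  show 0 < (1 / Real.Gamma (2 - δ)) * ∫ t in (0:ℝ)..x₀, F t
  exact mul_pos (by positivity) hIpos
end

section
/- Let 1 < δ < 2, let b, c : [0,1] → ℝ be continuous with c(x) ≥ 0 for all x ∈ (0,1), let α₀ ≥ 1/(δ-1) and α₁ ≥ 0. Let g : [0,1] → ℝ be continuously differentiable on [0,1], twice continuously differentiable on (0,1], with |g''(x)| ≤ C x^{-θ} for all 0 < x ≤ 1 for some constants C > 0 and θ ∈ (0,1). Assume that −D*^δ g(x) + b(x) g'(x) + c(x) g(x) ≥ 0 for all x ∈ (0,1), that g(0) − α₀ g'(0) ≥ 0, and that g(1) + α₁ g'(1) ≥ 0. Then g(x) ≥ 0 for all x ∈ [0,1]. -/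
open Set MeasureTheory Filter Topology intervalIntegral

set_option maxHeartbeats 1000000 in
theorem stmt2 (δ : ℝ) (hδ1 : 1 < δ) (hδ2 : δ < 2)
    (b c : ℝ → ℝ) (hb : ContinuousOn b (Set.Icc 0 1)) (hc : ContinuousOn c (Set.Icc 0 1))
    (hc0 : ∀ x ∈ Set.Ioo (0:ℝ) 1, 0 ≤ c x)
    (α₀ α₁ : ℝ) (hα₀ : 1 / (δ - 1) ≤ α₀) (hα₁ : 0 ≤ α₁)
    (g : ℝ → ℝ) (hg1 : ContDiffOn ℝ 1 g (Set.Icc 0 1)) (hg2 : ContDiffOn ℝ 2 g (Set.Ioc 0 1))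
    (C θ : ℝ) (hC : 0 < C) (hθ1 : 0 < θ) (hθ2 : θ < 1)
    (hbound : ∀ x ∈ Set.Ioc (0:ℝ) 1,
      |derivWithin (derivWithin g (Set.Icc 0 1)) (Set.Icc 0 1) x| ≤ C * x ^ (-θ))
    (hineq : ∀ x ∈ Set.Ioo (0:ℝ) 1,
      0 ≤ -caputoW δ g x + b x * derivWithin g (Set.Icc 0 1) x + c x * g x)
    (hbc0 : 0 ≤ g 0 - α₀ * derivWithin g (Set.Icc 0 1) 0)
    (hbc1 : 0 ≤ g 1 + α₁ * derivWithin g (Set.Icc 0 1) 1) :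
    ∀ x ∈ Set.Icc (0:ℝ) 1, 0 ≤ g x := by
  by_contra hcon
  push_neg at hcon
  obtain ⟨z, hzI, hzneg⟩ := hcon
  have hδ0 : (0:ℝ) < δ - 1 := by linarith
  have hα₀pos : 0 < α₀ := lt_of_lt_of_le (by positivity) hα₀
  have hα : 1 ≤ α₀ * (δ - 1) := (div_le_iff₀ hδ0).mp hα₀
  have hgc : ContinuousOn g (Icc 0 1) := hg1.continuousOn
  obtain ⟨x₀, hx₀I, hmin⟩ := isCompact_Icc.exists_isMinOn
    (nonempty_Icc.2 (by norm_num)) hgc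
  set g₁ := derivWithin g (Set.Icc 0 1) with hg₁def
  set g₂ := derivWithin g₁ (Set.Icc 0 1) with hg₂def
  set m := g x₀ with hmdef
  have hmin' : ∀ y ∈ Icc (0:ℝ) 1, m ≤ g y := isMinOn_iff.mp hmin
  have hmneg : m < 0 := lt_of_le_of_lt (hmin' z hzI) hzneg
  have hud : UniqueDiffOn ℝ (Icc (0:ℝ) 1) := uniqueDiffOn_Icc (by norm_num)
  have hg₁cont : ContinuousOn g₁ (Icc 0 1) := hg1.continuousOn_derivWithin hud le_rfl
  -- endpoint case x₀ = 0
  rcases eq_or_lt_of_le hx₀I.1 with h0 | hx0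
  · exfalso
    have hseg : segment ℝ (0:ℝ) 1 ⊆ Icc 0 1 := by
      rw [segment_eq_Icc (by norm_num : (0:ℝ) ≤ 1)]
    have hcone : (1:ℝ) ∈ posTangentConeAt (Icc (0:ℝ) 1) 0 := by
      have := sub_mem_posTangentConeAt_of_segment_subset hseg
      simpa using this
    have hloc : IsLocalMinOn g (Icc (0:ℝ) 1) 0 := by
      rw [← h0] at hmin; exact hmin.localize
    have hnn : 0 ≤ (fderivWithin ℝ g (Icc (0:ℝ) 1) 0 : ℝ → ℝ) 1 :=
      hloc.fderivWithin_nonneg hcone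
    rw [fderivWithin_derivWithin] at hnn
    have : 0 ≤ α₀ * g₁ 0 := mul_nonneg hα₀pos.le hnn
    have hg00 : g 0 = m := by rw [hmdef, ← h0]
    linarith
  rcases eq_or_lt_of_le hx₀I.2 with h1 | hx1
  · exfalso
    have hseg : segment ℝ (1:ℝ) 0 ⊆ Icc 0 1 := by
      rw [segment_symm, segment_eq_Icc (by norm_num : (0:ℝ) ≤ 1)]
    have hcone : (0:ℝ) - 1 ∈ posTangentConeAt (Icc (0:ℝ) 1) 1 :=
      sub_mem_posTangentConeAt_of_segment_subset hseg
    have hloc : IsLocalMinOn g (Icc (0:ℝ) 1) 1 := by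
      rw [h1] at hmin; exact hmin.localize
    have hnn : 0 ≤ (fderivWithin ℝ g (Icc (0:ℝ) 1) 1 : ℝ → ℝ) ((0:ℝ) - 1) :=
      hloc.fderivWithin_nonneg hcone
    have heq : ((0:ℝ) - 1 : ℝ) = -(1:ℝ) := by norm_num
    rw [heq, map_neg, fderivWithin_derivWithin] at hnn
    have hle : g₁ 1 ≤ 0 := by linarith
    have : α₁ * g₁ 1 ≤ 0 := mul_nonpos_of_nonneg_of_nonpos hα₁ hle
    have hg11 : g 1 = m := by rw [hmdef, h1]
    linarith
  -- interior case
  have hx₀ : x₀ ∈ Ioo (0:ℝ) 1 := ⟨hx0, hx1⟩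
  have hIccnhds : ∀ x ∈ Ioo (0:ℝ) 1, Icc (0:ℝ) 1 ∈ 𝓝 x := fun x hx => Icc_mem_nhds hx.1 hx.2
  have hdiffg : ∀ x ∈ Ioo (0:ℝ) 1, HasDerivAt g (g₁ x) x := by
    intro x hx
    have hd : DifferentiableWithinAt ℝ g (Icc 0 1) x :=
      (hg1.differentiableOn one_ne_zero) x (Ioo_subset_Icc_self hx)
    have hd' : DifferentiableAt ℝ g x := hd.differentiableAt (hIccnhds x hx)
    have hh : g₁ x = deriv g x := derivWithin_of_mem_nhds (hIccnhds x hx)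
    rw [hh]; exact hd'.hasDerivAt
  have hD2 : ContDiffOn ℝ 1 (deriv g) (Ioo (0:ℝ) 1) :=
    (hg2.mono Ioo_subset_Ioc_self).deriv_of_isOpen isOpen_Ioo (by norm_num)
  have hg₁eq : ∀ x ∈ Ioo (0:ℝ) 1, g₁ x = deriv g x := fun x hx =>
    derivWithin_of_mem_nhds (hIccnhds x hx)
  have hg₂eq : ∀ x ∈ Ioo (0:ℝ) 1, g₂ x = deriv (deriv g) x := by
    intro x hx
    have hev : g₁ =ᶠ[𝓝 x] deriv g := by
      filter_upwards [isOpen_Ioo.mem_nhds hx] with y hy using hg₁eq y hy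
    have h1 : g₂ x = deriv g₁ x := derivWithin_of_mem_nhds (hIccnhds x hx)
    rw [h1, hev.deriv_eq]
  have hdiffg₁ : ∀ x ∈ Ioo (0:ℝ) 1, HasDerivAt g₁ (g₂ x) x := by
    intro x hx
    have hev : g₁ =ᶠ[𝓝 x] deriv g := by
      filter_upwards [isOpen_Ioo.mem_nhds hx] with y hy using hg₁eq y hy
    have hd : DifferentiableAt ℝ (deriv g) x :=
      (hD2.differentiableOn one_ne_zero).differentiableAt (isOpen_Ioo.mem_nhds hx)
    have h1 : HasDerivAt g₁ (deriv (deriv g) x) x :=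
      hd.hasDerivAt.congr_of_eventuallyEq hev
    rw [hg₂eq x hx]; exact h1
  have hg₂cont : ContinuousOn g₂ (Ioo (0:ℝ) 1) :=
    (hD2.continuousOn_deriv_of_isOpen isOpen_Ioo le_rfl).congr hg₂eq
  -- g₁ x₀ = 0
  have hlocmin : IsLocalMin g x₀ := hmin.isLocalMin (Icc_mem_nhds hx0 hx1)
  have hg₁x₀ : g₁ x₀ = 0 := hlocmin.hasDerivAt_eq_zero (hdiffg x₀ hx₀)
  -- bound M for g₂ on K = Icc (x₀/2) x₀
  have hK : Icc (x₀/2) x₀ ⊆ Ioo (0:ℝ) 1 := fun t ht =>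
    ⟨lt_of_lt_of_le (by positivity) ht.1, lt_of_le_of_lt ht.2 hx1⟩
  obtain ⟨M, hM⟩ := isCompact_Icc.exists_bound_of_continuousOn (hg₂cont.mono hK)
  have hx₀K : x₀ ∈ Icc (x₀/2) x₀ := ⟨by linarith, le_rfl⟩
  have hM0 : 0 ≤ M := le_trans (norm_nonneg _) (hM x₀ hx₀K)
  have b1 : ∀ t ∈ Icc (x₀/2) x₀, |g₁ t| ≤ M * (x₀ - t) := by
    intro t ht
    have h := Convex.norm_image_sub_le_of_norm_hasDerivWithin_le
      (f := g₁) (f' := g₂) (s := Icc (x₀/2) x₀) (C := M)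
      (fun x hx => (hdiffg₁ x (hK hx)).hasDerivWithinAt) hM (convex_Icc _ _) hx₀K ht
    rw [hg₁x₀, sub_zero] at h
    have : ‖t - x₀‖ = x₀ - t := by
      rw [Real.norm_eq_abs, abs_sub_comm, abs_of_nonneg (by linarith [ht.2])]
    rwa [this] at h
  have b2 : ∀ t ∈ Icc (x₀/2) x₀, |g t - m| ≤ M * (x₀ - t) * (x₀ - t) := by
    intro t ht
    have hsub : Icc t x₀ ⊆ Icc (x₀/2) x₀ := Icc_subset_Icc ht.1 le_rfl
    have h := Convex.norm_image_sub_le_of_norm_hasDerivWithin_le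
      (f := g) (f' := g₁) (s := Icc t x₀) (C := M * (x₀ - t))
      (fun x hx => (hdiffg x (hK (hsub hx))).hasDerivWithinAt)
      (fun x hx => by
        have := b1 x (hsub hx)
        have h2 : M * (x₀ - x) ≤ M * (x₀ - t) :=
          mul_le_mul_of_nonneg_left (by linarith [hx.1]) hM0
        calc ‖g₁ x‖ ≤ M * (x₀ - x) := this
        _ ≤ M * (x₀ - t) := h2)
      (convex_Icc _ _) ⟨ht.2, le_rfl⟩ ⟨le_rfl, ht.2⟩
    have hnm : ‖t - x₀‖ = x₀ - t := by
      rw [Real.norm_eq_abs, abs_sub_comm, abs_of_nonneg (by linarith [ht.2])]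
    rw [hnm] at h
    exact h
  -- kernel derivative
  have hker : ∀ (p t : ℝ), t < x₀ →
      HasDerivAt (fun s : ℝ => (x₀ - s) ^ p) (-(p * (x₀ - t) ^ (p - 1))) t := by
    intro p t ht
    have h1 : HasDerivAt (fun s : ℝ => x₀ - s) (-1) t := (hasDerivAt_id t).const_sub x₀
    have h2 : HasDerivAt (fun y : ℝ => y ^ p) (p * (x₀ - t) ^ (p - 1)) (x₀ - t) :=
      Real.hasDerivAt_rpow_const (Or.inl (ne_of_gt (sub_pos.2 ht)))
    have := h2.comp t h1
    simpa [Function.comp_def] using this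
  -- the comparison function F
  set F : ℝ → ℝ := fun t =>
    (x₀ - t) ^ (1 - δ) * g₁ t - (δ - 1) * ((x₀ - t) ^ (-δ) * (g t - m)) with hFdef
  have hFderiv : ∀ t ∈ Ioo (0:ℝ) x₀, HasDerivAt F
      ((x₀ - t) ^ (1 - δ) * g₂ t - (δ - 1) * δ * ((x₀ - t) ^ (-δ - 1) * (g t - m))) t := by
    intro t ht
    have htx : t < x₀ := ht.2
    have ht1 : t ∈ Ioo (0:ℝ) 1 := ⟨ht.1, htx.trans hx1⟩
    have h1 := (hker (1-δ) t htx).mul (hdiffg₁ t ht1)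
    have h2 := (hker (-δ) t htx).mul ((hdiffg t ht1).sub_const m)
    have h3 := h1.sub (HasDerivAt.const_mul (δ - 1) h2)
    convert h3 using 1
    · rfl
    · rfl
    · rfl
    rw [show (1 - δ) - 1 = -δ by ring]
    ring
  -- the sequences
  set u : ℕ → ℝ := fun n => x₀ / (n + 2) with hudef
  set v : ℕ → ℝ := fun n => x₀ - x₀ / (n + 2) with hvdef
  have hu_pos : ∀ n, 0 < u n := fun n => by positivity
  have hu_le : ∀ n, u n ≤ x₀ / 2 := by
    intro n
    apply div_le_div_of_nonneg_left hx0.le two_pos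
    push_cast; linarith [Nat.cast_nonneg (α := ℝ) n]
  have huv : ∀ n, u n ≤ v n := fun n => by
    have := hu_le n; simp only [hvdef]; linarith
  have hvlt : ∀ n, v n < x₀ := fun n => by
    have := hu_pos n; simp only [hvdef]; simp only [hudef] at this; linarith
  have hvK : ∀ n, v n ∈ Icc (x₀/2) x₀ := fun n =>
    ⟨by have := hu_le n; simp only [hvdef]; simp only [hudef] at this; linarith,
     (hvlt n).le⟩
  have hIuv : ∀ n, Icc (u n) (v n) ⊆ Ioo 0 x₀ := fun n t ht =>
    ⟨lt_of_lt_of_le (hu_pos n) ht.1, lt_of_le_of_lt ht.2 (hvlt n)⟩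
  have hIoosub : Ioo (0:ℝ) x₀ ⊆ Ioo (0:ℝ) 1 := Ioo_subset_Ioo le_rfl hx1.le
  -- continuity of the integrand pieces
  have hfcont : ContinuousOn (fun t => (x₀ - t) ^ (1 - δ) * g₂ t) (Ioo 0 x₀) := by
    apply ContinuousOn.mul
    · apply ContinuousOn.rpow_const (continuous_const.sub continuous_id).continuousOn
      intro t ht; exact Or.inl (ne_of_gt (sub_pos.2 ht.2))
    · exact hg₂cont.mono hIoosub
  -- integrability on Ioo 0 x₀
  have hx₀2lt1 : x₀ / 2 < 1 := by linarith
  have hint_Ioo : IntegrableOn (fun t => (x₀ - t) ^ (1 - δ) * g₂ t) (Ioo 0 x₀) := by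
    have hsplit : Ioo (0:ℝ) x₀ ⊆ Ioc 0 (x₀/2) ∪ Ioo (x₀/2) x₀ := by
      intro t ht
      rcases le_or_gt t (x₀/2) with h | h
      · exact Or.inl ⟨ht.1, h⟩
      · exact Or.inr ⟨h, ht.2⟩
    refine IntegrableOn.mono_set (IntegrableOn.union ?_ ?_) hsplit
    · -- near 0
      refine Integrable.mono' (g := fun t => (x₀/2) ^ (1-δ) * (C * t ^ (-θ))) ?_ ?_ ?_
      · have h0 : IntervalIntegrable (fun t : ℝ => t ^ (-θ)) volume 0 (x₀/2) :=
          intervalIntegrable_rpow' (by linarith)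
        have h1 := (h0.const_mul C).const_mul ((x₀/2) ^ (1-δ))
        rwa [intervalIntegrable_iff_integrableOn_Ioc_of_le (by positivity)] at h1
      · apply ContinuousOn.aestronglyMeasurable _ measurableSet_Ioc
        apply ContinuousOn.mul
        · apply ContinuousOn.rpow_const (continuous_const.sub continuous_id).continuousOn
          intro t ht
          exact Or.inl (ne_of_gt (by linarith [ht.2] : (0:ℝ) < x₀ - t))
        · exact hg₂cont.mono (fun t ht => ⟨ht.1, lt_of_le_of_lt ht.2 hx₀2lt1⟩)
      · refine (ae_restrict_iff' measurableSet_Ioc).2 (Eventually.of_forall ?_)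
        intro t ht
        have htpos : 0 < t := ht.1
        have hxt : x₀ / 2 ≤ x₀ - t := by linarith [ht.2]
        have hk1 : (x₀ - t) ^ (1-δ) ≤ (x₀/2) ^ (1-δ) :=
          Real.rpow_le_rpow_of_nonpos (by positivity) hxt (by linarith)
        have hk0 : (0:ℝ) ≤ (x₀ - t) ^ (1-δ) := Real.rpow_nonneg (by linarith) _
        have hb := hbound t ⟨htpos, le_trans ht.2 hx₀2lt1.le⟩
        rw [norm_mul, Real.norm_eq_abs, Real.norm_eq_abs,
          abs_of_nonneg hk0]
        calc (x₀ - t) ^ (1-δ) * |g₂ t| ≤ (x₀/2) ^ (1-δ) * (C * t ^ (-θ)) := by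
              apply mul_le_mul hk1 hb (abs_nonneg _) (by positivity)
        _ = (x₀/2) ^ (1-δ) * (C * t ^ (-θ)) := rfl
    · -- near x₀
      refine Integrable.mono' (g := fun t => M * (x₀ - t) ^ (1-δ)) ?_ ?_ ?_
      · have h0 : IntervalIntegrable (fun s : ℝ => s ^ (1-δ)) volume 0 (x₀/2) :=
          intervalIntegrable_rpow' (by linarith)
        have h1 := (h0.comp_sub_left x₀).const_mul M
        have e1 : x₀ - x₀/2 = x₀/2 := by ring
        have e2 : x₀ - 0 = x₀ := by ring
        rw [e1, e2] at h1
        replace h1 := h1.symm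
        rw [intervalIntegrable_iff_integrableOn_Ioc_of_le (by linarith)] at h1
        exact h1.mono_set Ioo_subset_Ioc_self
      · apply ContinuousOn.aestronglyMeasurable _ measurableSet_Ioo
        exact hfcont.mono (fun t ht => ⟨lt_of_lt_of_le (by positivity) ht.1.le, ht.2⟩)
      · refine (ae_restrict_iff' measurableSet_Ioo).2 (Eventually.of_forall ?_)
        intro t ht
        have hk0 : (0:ℝ) ≤ (x₀ - t) ^ (1-δ) := Real.rpow_nonneg (by linarith [ht.2]) _
        have hgb : |g₂ t| ≤ M := hM t ⟨ht.1.le, ht.2.le⟩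
        rw [norm_mul, Real.norm_eq_abs, Real.norm_eq_abs, abs_of_nonneg hk0]
        calc (x₀ - t) ^ (1-δ) * |g₂ t| ≤ (x₀ - t) ^ (1-δ) * M :=
              mul_le_mul_of_nonneg_left hgb hk0
        _ = M * (x₀ - t) ^ (1-δ) := mul_comm _ _
  -- per-n inequality
  have key : ∀ n, F (v n) - F (u n) ≤ ∫ t in (u n)..(v n), (x₀ - t) ^ (1 - δ) * g₂ t := by
    intro n
    have hab : u n ≤ v n := huv n
    have hsub : Icc (u n) (v n) ⊆ Ioo 0 x₀ := hIuv n
    have hcf : ContinuousOn (fun t => (x₀ - t) ^ (1 - δ) * g₂ t) (Icc (u n) (v n)) :=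
      hfcont.mono hsub
    have hcP : ContinuousOn
        (fun t => (δ - 1) * δ * ((x₀ - t) ^ (-δ - 1) * (g t - m))) (Icc (u n) (v n)) := by
      apply ContinuousOn.mul continuousOn_const
      apply ContinuousOn.mul
      · apply ContinuousOn.rpow_const (continuous_const.sub continuous_id).continuousOn
        intro t ht; exact Or.inl (ne_of_gt (sub_pos.2 (hsub ht).2))
      · exact ((hgc.mono (fun t ht => Ioo_subset_Icc_self (hIoosub (hsub ht)))).sub
          continuousOn_const)
    have hif : IntervalIntegrable (fun t => (x₀ - t) ^ (1 - δ) * g₂ t) volume (u n) (v n) := by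
      apply ContinuousOn.intervalIntegrable; rwa [uIcc_of_le hab]
    have hiP : IntervalIntegrable
        (fun t => (δ - 1) * δ * ((x₀ - t) ^ (-δ - 1) * (g t - m))) volume (u n) (v n) := by
      apply ContinuousOn.intervalIntegrable; rwa [uIcc_of_le hab]
    have hFTC : ∫ t in (u n)..(v n),
        ((x₀ - t) ^ (1 - δ) * g₂ t - (δ - 1) * δ * ((x₀ - t) ^ (-δ - 1) * (g t - m)))
        = F (v n) - F (u n) := by
      apply intervalIntegral.integral_eq_sub_of_hasDerivAt
      · intro t ht
        rw [uIcc_of_le hab] at ht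
        exact hFderiv t (hsub ht)
      · exact hif.sub hiP
    have hsubeq := intervalIntegral.integral_sub hif hiP
    have hPn : 0 ≤ ∫ t in (u n)..(v n), (δ - 1) * δ * ((x₀ - t) ^ (-δ - 1) * (g t - m)) := by
      apply intervalIntegral.integral_nonneg hab
      intro t ht
      have h1 : (0:ℝ) ≤ (x₀ - t) ^ (-δ - 1) :=
        Real.rpow_nonneg (by linarith [(hsub ht).2]) _
      have h2 : 0 ≤ g t - m := sub_nonneg.2 (hmin' t (Ioo_subset_Icc_self (hIoosub (hsub ht))))
      have h3 : (0:ℝ) ≤ (δ - 1) * δ := by nlinarith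
      positivity
    have : (∫ t in (u n)..(v n),
        ((x₀ - t) ^ (1 - δ) * g₂ t - (δ - 1) * δ * ((x₀ - t) ^ (-δ - 1) * (g t - m))))
        = (∫ t in (u n)..(v n), (x₀ - t) ^ (1 - δ) * g₂ t)
          - ∫ t in (u n)..(v n), (δ - 1) * δ * ((x₀ - t) ^ (-δ - 1) * (g t - m)) := hsubeq
    linarith [hFTC, hPn, this]
  -- limits
  have hulim : Tendsto u atTop (𝓝 0) := by
    apply Tendsto.div_atTop tendsto_const_nhds
    exact tendsto_atTop_add_const_right atTop 2 tendsto_natCast_atTop_atTop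
  have hvlim : Tendsto v atTop (𝓝 x₀) := by
    have h := (tendsto_const_nhds : Tendsto (fun _ : ℕ => x₀) atTop (𝓝 x₀)).sub hulim
    simpa using h
  -- limit of interval integrals
  have hmono : Monotone (fun n => Ioc (u n) (v n)) := by
    intro n k hnk
    apply Ioc_subset_Ioc
    · apply div_le_div_of_nonneg_left hx0.le (by positivity)
      push_cast; exact_mod_cast by exact_mod_cast add_le_add_left (Nat.cast_le.2 hnk) 2
    · simp only [hvdef, sub_le_sub_iff_left]
      apply div_le_div_of_nonneg_left hx0.le (by positivity)
      push_cast; exact_mod_cast by exact_mod_cast add_le_add_left (Nat.cast_le.2 hnk) 2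
  have hUnion : (⋃ n, Ioc (u n) (v n)) = Ioo 0 x₀ := by
    apply Subset.antisymm
    · refine iUnion_subset fun n => ?_
      intro t ht
      exact ⟨lt_of_lt_of_le (hu_pos n) ht.1.le, lt_of_le_of_lt ht.2 (hvlt n)⟩
    · intro t ht
      have hmin2 : 0 < min t (x₀ - t) := lt_min ht.1 (by linarith [ht.2])
      obtain ⟨n, hn⟩ := (hulim.eventually_lt_const hmin2).exists
      refine mem_iUnion.2 ⟨n, ?_, ?_⟩
      · exact lt_of_lt_of_le hn (min_le_left _ _)
      · have := lt_of_lt_of_le hn (min_le_right _ _)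
        simp only [hvdef]; linarith
  have htendI : Tendsto (fun n => ∫ t in (u n)..(v n), (x₀ - t) ^ (1 - δ) * g₂ t) atTop
      (𝓝 (∫ t in Ioo (0:ℝ) x₀, (x₀ - t) ^ (1 - δ) * g₂ t)) := by
    have h1 := tendsto_setIntegral_of_monotone (fun n => measurableSet_Ioc) hmono
      (by rw [hUnion]; exact hint_Ioo)
    rw [hUnion] at h1
    convert h1 using 2 with n
    rw [intervalIntegral.integral_of_le (huv n)]
  -- limit of F (u n)
  have hulimI : Tendsto u atTop (𝓝[Icc (0:ℝ) 1] 0) := by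
    rw [tendsto_nhdsWithin_iff]
    exact ⟨hulim, Eventually.of_forall fun n =>
      ⟨(hu_pos n).le, le_trans (hu_le n) (by linarith)⟩⟩
  have hgu : Tendsto (fun n => g (u n)) atTop (𝓝 (g 0)) :=
    (hgc 0 (left_mem_Icc.2 (by norm_num))).tendsto.comp hulimI
  have hg₁u : Tendsto (fun n => g₁ (u n)) atTop (𝓝 (g₁ 0)) :=
    (hg₁cont 0 (left_mem_Icc.2 (by norm_num))).tendsto.comp hulimI
  have hkeru : ∀ p : ℝ, Tendsto (fun n => (x₀ - u n) ^ p) atTop (𝓝 (x₀ ^ p)) := by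
    intro p
    have hbase : Tendsto (fun n => x₀ - u n) atTop (𝓝 x₀) := hvlim
    exact ((Real.continuousAt_rpow_const x₀ p (Or.inl (ne_of_gt hx0))).tendsto).comp hbase
  have hFu : Tendsto (fun n => F (u n)) atTop
      (𝓝 (x₀ ^ (1-δ) * g₁ 0 - (δ - 1) * (x₀ ^ (-δ) * (g 0 - m)))) := by
    simp only [hFdef]
    exact ((hkeru (1-δ)).mul hg₁u).sub
      ((tendsto_const_nhds).mul ((hkeru (-δ)).mul (hgu.sub tendsto_const_nhds)))
  -- limit of F (v n) is 0
  have hxvu : ∀ n, x₀ - v n = u n := fun n => by simp only [hvdef]; ring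
  have hFvbound : ∀ n, ‖F (v n)‖ ≤ M * (u n) ^ (2-δ) + (δ-1) * (M * (u n) ^ (2-δ)) := by
    intro n
    have hvn := hvK n
    have h1 : |g₁ (v n)| ≤ M * u n := by
      have := b1 (v n) hvn; rwa [hxvu n] at this
    have h2 : |g (v n) - m| ≤ M * u n * u n := by
      have := b2 (v n) hvn; rwa [hxvu n] at this
    have hupos := hu_pos n
    have hk1 : (0:ℝ) ≤ (u n) ^ (1-δ) := Real.rpow_nonneg hupos.le _
    have hk2 : (0:ℝ) ≤ (u n) ^ (-δ) := Real.rpow_nonneg hupos.le _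
    have e1 : (u n) ^ (1-δ) * (M * u n) = M * (u n) ^ (2-δ) := by
      rw [show (2:ℝ)-δ = (1-δ) + 1 by ring, Real.rpow_add hupos, Real.rpow_one]; ring
    have e2 : (u n) ^ (-δ) * (M * u n * u n) = M * (u n) ^ (2-δ) := by
      rw [show (2:ℝ)-δ = -δ + 1 + 1 by ring, Real.rpow_add hupos, Real.rpow_add hupos,
        Real.rpow_one]; ring
    calc ‖F (v n)‖ = |(x₀ - v n) ^ (1-δ) * g₁ (v n)
          - (δ-1) * ((x₀ - v n) ^ (-δ) * (g (v n) - m))| := rfl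
    _ ≤ |(x₀ - v n) ^ (1-δ) * g₁ (v n)| + |(δ-1) * ((x₀ - v n) ^ (-δ) * (g (v n) - m))| :=
        abs_sub _ _
    _ = (u n) ^ (1-δ) * |g₁ (v n)| + (δ-1) * ((u n) ^ (-δ) * |g (v n) - m|) := by
        rw [hxvu n, abs_mul, abs_mul, abs_mul, abs_of_nonneg hk1, abs_of_nonneg hk2,
          abs_of_nonneg (by linarith : (0:ℝ) ≤ δ - 1)]
    _ ≤ (u n) ^ (1-δ) * (M * u n) + (δ-1) * ((u n) ^ (-δ) * (M * u n * u n)) := by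
        apply add_le_add
        · exact mul_le_mul_of_nonneg_left h1 hk1
        · apply mul_le_mul_of_nonneg_left _ (by linarith : (0:ℝ) ≤ δ - 1)
          exact mul_le_mul_of_nonneg_left h2 hk2
    _ = M * (u n) ^ (2-δ) + (δ-1) * (M * (u n) ^ (2-δ)) := by rw [e1, e2]
  have hu2lim : Tendsto (fun n => (u n) ^ ((2:ℝ)-δ)) atTop (𝓝 0) := by
    have hc : ContinuousAt (fun s : ℝ => s ^ ((2:ℝ)-δ)) 0 :=
      Real.continuousAt_rpow_const 0 (2-δ) (Or.inr (by linarith))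
    have := hc.tendsto.comp hulim
    simpa [Function.comp_def, Real.zero_rpow (by linarith : (2:ℝ)-δ ≠ 0)] using this
  have hFv : Tendsto (fun n => F (v n)) atTop (𝓝 0) := by
    rw [tendsto_zero_iff_norm_tendsto_zero]
    apply squeeze_zero (fun n => norm_nonneg _) hFvbound
    have : Tendsto (fun n => M * (u n) ^ ((2:ℝ)-δ) + (δ-1) * (M * (u n) ^ ((2:ℝ)-δ)))
        atTop (𝓝 (M * 0 + (δ-1) * (M * 0))) :=
      ((tendsto_const_nhds).mul hu2lim).add
        ((tendsto_const_nhds).mul ((tendsto_const_nhds).mul hu2lim))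
    simpa using this
  -- combine limits with key inequality
  have hdiff : Tendsto (fun n => F (v n) - F (u n)) atTop
      (𝓝 (0 - (x₀ ^ (1-δ) * g₁ 0 - (δ - 1) * (x₀ ^ (-δ) * (g 0 - m))))) := hFv.sub hFu
  have hmainineq : 0 - (x₀ ^ (1-δ) * g₁ 0 - (δ - 1) * (x₀ ^ (-δ) * (g 0 - m)))
      ≤ ∫ t in Ioo (0:ℝ) x₀, (x₀ - t) ^ (1 - δ) * g₂ t :=
    le_of_tendsto_of_tendsto' hdiff htendI key
  -- the integral is ≤ 0
  have hIle0 : (∫ t in Ioo (0:ℝ) x₀, (x₀ - t) ^ (1 - δ) * g₂ t) ≤ 0 := by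
    have h := hineq x₀ hx₀
    rw [hg₁x₀, mul_zero, add_zero] at h
    have hcx : 0 ≤ c x₀ := hc0 x₀ hx₀
    have hcm : c x₀ * m ≤ 0 := mul_nonpos_of_nonneg_of_nonpos hcx hmneg.le
    have hcap : caputoW δ g x₀ ≤ 0 := by
      rw [← hmdef] at h; linarith
    have hΓ : 0 < Real.Gamma (2 - δ) := Real.Gamma_pos_of_pos (by linarith)
    have heq : caputoW δ g x₀ = (1 / Real.Gamma (2-δ)) *
        ∫ t in Ioo (0:ℝ) x₀, (x₀ - t) ^ (1 - δ) * g₂ t := by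
      rw [caputoW, intervalIntegral.integral_of_le hx0.le, integral_Ioc_eq_integral_Ioo]
    rw [heq] at hcap
    nlinarith [mul_pos hΓ (div_pos one_pos hΓ)]
  have hfinal : (δ - 1) * (x₀ ^ (-δ) * (g 0 - m)) ≤ x₀ ^ (1-δ) * g₁ 0 := by linarith
  -- multiply by x₀ ^ δ
  have hxd : (0:ℝ) < x₀ ^ δ := Real.rpow_pos_of_pos hx0 δ
  have e1 : x₀ ^ δ * x₀ ^ (1-δ) = x₀ := by
    rw [← Real.rpow_add hx0]; norm_num
  have e2 : x₀ ^ δ * x₀ ^ (-δ) = 1 := by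
    rw [← Real.rpow_add hx0]; norm_num
  have h5 := mul_le_mul_of_nonneg_left hfinal hxd.le
  have h6 : (δ - 1) * (g 0 - m) ≤ x₀ * g₁ 0 := by
    have l1 : x₀ ^ δ * ((δ - 1) * (x₀ ^ (-δ) * (g 0 - m)))
        = (δ - 1) * ((x₀ ^ δ * x₀ ^ (-δ)) * (g 0 - m)) := by ring
    have l2 : x₀ ^ δ * (x₀ ^ (1-δ) * g₁ 0) = (x₀ ^ δ * x₀ ^ (1-δ)) * g₁ 0 := by ring
    rw [l1, l2, e1, e2] at h5
    simpa using h5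
  -- final contradiction
  have hg0 : α₀ * g₁ 0 ≤ g 0 := by linarith
  have hg0m : m ≤ g 0 := hmin' 0 (left_mem_Icc.2 (by norm_num))
  rcases le_or_gt 0 (g₁ 0) with hd | hd
  · have p1 : x₀ * g₁ 0 ≤ 1 * g₁ 0 := mul_le_mul_of_nonneg_right hx1.le hd
    have p2 : 1 * g₁ 0 ≤ (α₀ * (δ-1)) * g₁ 0 := mul_le_mul_of_nonneg_right hα hd
    have p3 : (δ-1) * (α₀ * g₁ 0) ≤ (δ-1) * g 0 :=
      mul_le_mul_of_nonneg_left hg0 (by linarith)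
    have p5 : (δ-1) * m < 0 := mul_neg_of_pos_of_neg hδ0 hmneg
    linarith
  · have p : x₀ * g₁ 0 < 0 := mul_neg_of_pos_of_neg hx0 hd
    have q : 0 ≤ (δ-1) * (g 0 - m) := mul_nonneg (by linarith) (by linarith)
    linarith
end

section
/- Let θ₁, θ₂ ∈ (0,1) and let r : (0,1] → ℝ be continuous with |r(s)| ≤ C s^{-θ₂} for all 0 < s ≤ 1 and some constant C. Then the function F(x) = ∫₀ˣ (x-s)^{θ₁} r(s) ds is differentiable at every x ∈ (0,1), with F'(x) = ∫₀ˣ θ₁ (x-s)^{θ₁−1} r(s) ds. -/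
open MeasureTheory Set

section AuxStmt4
variable {θ₁ θ₂ C : ℝ} {r : ℝ → ℝ}

lemma aux_K {θ₁ : ℝ} (h0 : 0 < θ₁) {s y : ℝ} (_hsy : s ≤ y) :
    ∫ t in s..y, θ₁ * (t - s) ^ (θ₁ - 1) = (y - s) ^ θ₁ := by
  rw [intervalIntegral.integral_const_mul,
    intervalIntegral.integral_comp_sub_right (fun u => u ^ (θ₁ - 1)) s,
    integral_rpow (Or.inl (by linarith)), sub_self, sub_add_cancel,
    Real.zero_rpow (ne_of_gt h0)]
  field_simp
  simp


lemma aux_rpow_bdd {a z : ℝ} (h1 : (1:ℝ)/2 ≤ z) (h2 : z ≤ 1) :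
    z ^ a ≤ ((1:ℝ)/2) ^ a + 1 := by
  rcases le_or_gt 0 a with ha | ha
  · have h3 : z ^ a ≤ 1 := Real.rpow_le_one (by linarith) h2 ha
    have h4 : (0:ℝ) ≤ ((1:ℝ)/2) ^ a := Real.rpow_nonneg (by norm_num) _
    linarith
  · have h3 : z ^ a ≤ ((1:ℝ)/2) ^ a := Real.rpow_le_rpow_of_nonpos (by norm_num) h1 ha.le
    linarith

lemma aux_meas (a b : ℝ) : Measurable fun u : ℝ => (1 - u) ^ a * u ^ b :=
  ((measurable_const.sub measurable_id).pow measurable_const).mul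
    (measurable_id.pow measurable_const)

lemma aux_I {a b : ℝ} (ha : -1 < a) (hb : -1 < b) :
    IntegrableOn (fun u : ℝ => (1 - u) ^ a * u ^ b) (Ioc 0 1) := by
  have h1 : IntegrableOn (fun u : ℝ => (1 - u) ^ a * u ^ b) (Ioc 0 (1/2)) := by
    have hg : IntegrableOn (fun u : ℝ => (((1:ℝ)/2) ^ a + 1) * u ^ b) (Ioc 0 (1/2)) := by
      have h := (intervalIntegral.intervalIntegrable_rpow' (a := 0) (b := 1/2) hb)
      rw [intervalIntegrable_iff_integrableOn_Ioc_of_le (by norm_num)] at h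
      exact h.const_mul _
    refine hg.integrable.mono' ((aux_meas a b).aestronglyMeasurable) ?_
    filter_upwards [ae_restrict_mem measurableSet_Ioc] with u hu
    have h0u : 0 < u := hu.1
    have hu2 : u ≤ 1/2 := hu.2
    have h1u : 0 ≤ 1 - u := by linarith
    rw [Real.norm_eq_abs,
      abs_of_nonneg (mul_nonneg (Real.rpow_nonneg h1u _) (Real.rpow_nonneg h0u.le _))]
    exact mul_le_mul_of_nonneg_right (aux_rpow_bdd (by linarith) (by linarith))
      (Real.rpow_nonneg h0u.le _)
  have h2 : IntegrableOn (fun u : ℝ => (1 - u) ^ a * u ^ b) (Ioc (1/2) 1) := by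
    have hg : IntegrableOn (fun u : ℝ => (1 - u) ^ a * (((1:ℝ)/2) ^ b + 1)) (Ioc (1/2) 1) := by
      have h := (intervalIntegral.intervalIntegrable_rpow' (a := 0) (b := 1/2) ha).comp_sub_left 1
      rw [show (1:ℝ) - 0 = 1 by norm_num, show (1:ℝ) - 1/2 = 1/2 by norm_num] at h
      have h' := h.symm
      rw [intervalIntegrable_iff_integrableOn_Ioc_of_le (by norm_num)] at h'
      exact h'.mul_const _
    refine hg.integrable.mono' ((aux_meas a b).aestronglyMeasurable) ?_
    filter_upwards [ae_restrict_mem measurableSet_Ioc] with u hu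
    have h0u : (1:ℝ)/2 < u := hu.1
    have hu1 : u ≤ 1 := hu.2
    have h1u : 0 ≤ 1 - u := by linarith
    rw [Real.norm_eq_abs,
      abs_of_nonneg (mul_nonneg (Real.rpow_nonneg h1u _) (Real.rpow_nonneg (by linarith) _))]
    exact mul_le_mul_of_nonneg_left (aux_rpow_bdd (by linarith) hu1) (Real.rpow_nonneg h1u _)
  have hu : Ioc (0:ℝ) 1 = Ioc 0 (1/2) ∪ Ioc (1/2) 1 :=
    (Ioc_union_Ioc_eq_Ioc (by norm_num) (by norm_num)).symm
  rw [hu]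
  exact h1.union h2

lemma aux_S {t : ℝ} (ht : 0 < t) {a : ℝ} (ha : 1 + a ≠ 0) (φ : ℝ → ℝ) :
    ∫ s in (0:ℝ)..t, (t - s) ^ a * φ s
      = t ^ (a + 1) * ∫ u in (0:ℝ)..1, (1 - u) ^ a * φ (t * u) := by
  have h := intervalIntegral.smul_integral_comp_mul_left
    (fun s => (t - s) ^ a * φ s) t (a := 0) (b := 1)
  rw [mul_zero, mul_one] at h
  rw [← h]
  have h2 : ∫ u in (0:ℝ)..1, (t - t * u) ^ a * φ (t * u)
      = ∫ u in (0:ℝ)..1, t ^ a * ((1 - u) ^ a * φ (t * u)) := by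
    apply intervalIntegral.integral_congr
    intro u hu
    rw [uIcc_of_le (by norm_num)] at hu
    have h1u : 0 ≤ 1 - u := by linarith [hu.2]
    show (t - t * u) ^ a * φ (t * u) = _
    rw [show t - t * u = t * (1 - u) by ring, Real.mul_rpow ht.le h1u, mul_assoc]
  rw [h2, intervalIntegral.integral_const_mul, smul_eq_mul, ← mul_assoc,
    ← Real.rpow_one_add' ht.le ha, add_comm]


lemma aux_rep (θ₁ : ℝ) (h0 : 0 < θ₁) (r : ℝ → ℝ) {t : ℝ} (ht : 0 < t) :
    (∫ s in (0:ℝ)..t, θ₁ * (t - s) ^ (θ₁ - 1) * r s)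
      = θ₁ * (t ^ θ₁ * ∫ u in (0:ℝ)..1, (1 - u) ^ (θ₁ - 1) * r (t * u)) := by
  have h1 : (∫ s in (0:ℝ)..t, θ₁ * (t - s) ^ (θ₁ - 1) * r s)
      = θ₁ * ∫ s in (0:ℝ)..t, (t - s) ^ (θ₁ - 1) * r s := by
    rw [← intervalIntegral.integral_const_mul]
    apply intervalIntegral.integral_congr
    intro s _
    show θ₁ * (t - s) ^ (θ₁ - 1) * r s = θ₁ * ((t - s) ^ (θ₁ - 1) * r s)
    ring
  rw [h1, aux_S ht (by intro h; apply ne_of_gt h0; linarith) r,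
    show θ₁ - 1 + 1 = θ₁ by ring]

lemma aux_Gbound (h0 : 0 < θ₁) (h21 : θ₂ < 1) (hC : 0 ≤ C)
    (hbound : ∀ s ∈ Ioc (0:ℝ) 1, |r s| ≤ C * s ^ (-θ₂))
    {t : ℝ} (ht : t ∈ Ioc (0:ℝ) 1) :
    |∫ u in (0:ℝ)..1, (1 - u) ^ (θ₁ - 1) * r (t * u)|
      ≤ C * t ^ (-θ₂) * ∫ u in (0:ℝ)..1, (1 - u) ^ (θ₁ - 1) * u ^ (-θ₂) := by
  have hInt : IntervalIntegrable
      (fun u : ℝ => C * t ^ (-θ₂) * ((1 - u) ^ (θ₁ - 1) * u ^ (-θ₂))) volume 0 1 := by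
    rw [intervalIntegrable_iff_integrableOn_Ioc_of_le (by norm_num)]
    exact (aux_I (by linarith) (by linarith)).const_mul _
  have hae : ∀ᵐ u ∂volume.restrict (Set.uIoc (0:ℝ) 1),
      ‖(1 - u) ^ (θ₁ - 1) * r (t * u)‖
        ≤ C * t ^ (-θ₂) * ((1 - u) ^ (θ₁ - 1) * u ^ (-θ₂)) := by
    filter_upwards [ae_restrict_mem measurableSet_uIoc] with u hu
    rw [uIoc_of_le (by norm_num : (0:ℝ) ≤ 1)] at hu
    have h1u : 0 ≤ 1 - u := by linarith [hu.2]
    have htu : t * u ∈ Ioc (0:ℝ) 1 :=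
      ⟨mul_pos ht.1 hu.1, by nlinarith [ht.2, hu.2, ht.1.le, hu.1.le]⟩
    rw [Real.norm_eq_abs, abs_mul, abs_of_nonneg (Real.rpow_nonneg h1u _)]
    calc (1 - u) ^ (θ₁ - 1) * |r (t * u)|
        ≤ (1 - u) ^ (θ₁ - 1) * (C * (t * u) ^ (-θ₂)) :=
          mul_le_mul_of_nonneg_left (hbound _ htu) (Real.rpow_nonneg h1u _)
      _ = C * t ^ (-θ₂) * ((1 - u) ^ (θ₁ - 1) * u ^ (-θ₂)) := by
          rw [Real.mul_rpow ht.1.le hu.1.le]; ring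
  have h := intervalIntegral.norm_integral_le_abs_of_norm_le hae hInt
  rw [intervalIntegral.integral_const_mul] at h
  have hBnn : (0:ℝ) ≤ ∫ u in (0:ℝ)..1, (1 - u) ^ (θ₁ - 1) * u ^ (-θ₂) := by
    apply intervalIntegral.integral_nonneg (by norm_num)
    intro u hu
    exact mul_nonneg (Real.rpow_nonneg (by linarith [hu.2]) _) (Real.rpow_nonneg hu.1 _)
  rw [Real.norm_eq_abs] at h
  calc |∫ u in (0:ℝ)..1, (1 - u) ^ (θ₁ - 1) * r (t * u)|
      ≤ |C * t ^ (-θ₂) * ∫ u in (0:ℝ)..1, (1 - u) ^ (θ₁ - 1) * u ^ (-θ₂)| := h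
    _ = C * t ^ (-θ₂) * ∫ u in (0:ℝ)..1, (1 - u) ^ (θ₁ - 1) * u ^ (-θ₂) := by
        rw [abs_of_nonneg (mul_nonneg (mul_nonneg hC (Real.rpow_nonneg ht.1.le _)) hBnn)]

lemma aux_cont (h0 : 0 < θ₁) (h1 : θ₁ < 1) (h20 : 0 < θ₂) (h21 : θ₂ < 1) (hC : 0 ≤ C)
    (hr : ContinuousOn r (Ioc 0 1))
    (hbound : ∀ s ∈ Ioc (0:ℝ) 1, |r s| ≤ C * s ^ (-θ₂))
    {t₀ : ℝ} (ht₀ : t₀ ∈ Ioo (0:ℝ) 1) :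
    ContinuousAt (fun t => ∫ s in (0:ℝ)..t, θ₁ * (t - s) ^ (θ₁ - 1) * r s) t₀ := by
  classical
  set r₁ : ℝ → ℝ := (Ioc (0:ℝ) 1).indicator r with hr₁def
  have hr₁m : Measurable r₁ := by
    rw [hr₁def, ← Set.piecewise_eq_indicator]
    exact hr.measurable_piecewise continuousOn_const measurableSet_Ioc
  have hr₁eq : ∀ s ∈ Ioc (0:ℝ) 1, r₁ s = r s := fun s hs => indicator_of_mem hs r
  have hGc : ContinuousAt (fun t => ∫ u in (0:ℝ)..1, (1 - u) ^ (θ₁ - 1) * r (t * u)) t₀ := by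
    apply intervalIntegral.continuousAt_of_dominated_interval
      (bound := fun u => C * (t₀ / 2) ^ (-θ₂) * ((1 - u) ^ (θ₁ - 1) * u ^ (-θ₂)))
    · -- measurability
      filter_upwards [Ioo_mem_nhds ht₀.1 ht₀.2] with t ht
      have hmeas : Measurable fun u : ℝ => (1 - u) ^ (θ₁ - 1) * r₁ (t * u) :=
        ((measurable_const.sub measurable_id).pow measurable_const).mul
          (hr₁m.comp (measurable_id.const_mul t))
      refine hmeas.aestronglyMeasurable.congr ?_
      filter_upwards [ae_restrict_mem measurableSet_uIoc] with u hu
      rw [uIoc_of_le (by norm_num : (0:ℝ) ≤ 1)] at hu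
      have htu : t * u ∈ Ioc (0:ℝ) 1 :=
        ⟨mul_pos ht.1 hu.1, by nlinarith [ht.2.le, hu.2, ht.1.le, hu.1.le]⟩
      rw [hr₁eq _ htu]
    · -- bound
      filter_upwards [Ioo_mem_nhds (half_lt_self ht₀.1) ht₀.2] with t ht
      filter_upwards [] with u
      intro hu
      rw [uIoc_of_le (by norm_num : (0:ℝ) ≤ 1)] at hu
      have h1u : 0 ≤ 1 - u := by linarith [hu.2]
      have htpos : 0 < t := lt_trans (half_pos ht₀.1) ht.1
      have htu : t * u ∈ Ioc (0:ℝ) 1 :=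
        ⟨mul_pos htpos hu.1, by nlinarith [ht.2.le, hu.2, htpos.le, hu.1.le]⟩
      rw [Real.norm_eq_abs, abs_mul, abs_of_nonneg (Real.rpow_nonneg h1u _)]
      calc (1 - u) ^ (θ₁ - 1) * |r (t * u)|
          ≤ (1 - u) ^ (θ₁ - 1) * (C * (t * u) ^ (-θ₂)) :=
            mul_le_mul_of_nonneg_left (hbound _ htu) (Real.rpow_nonneg h1u _)
        _ = C * t ^ (-θ₂) * ((1 - u) ^ (θ₁ - 1) * u ^ (-θ₂)) := by
            rw [Real.mul_rpow htpos.le hu.1.le]; ring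
        _ ≤ C * (t₀ / 2) ^ (-θ₂) * ((1 - u) ^ (θ₁ - 1) * u ^ (-θ₂)) := by
            apply mul_le_mul_of_nonneg_right _
              (mul_nonneg (Real.rpow_nonneg h1u _) (Real.rpow_nonneg hu.1.le _))
            apply mul_le_mul_of_nonneg_left _ hC
            exact Real.rpow_le_rpow_of_nonpos (half_pos ht₀.1) ht.1.le
              (by linarith : -θ₂ ≤ 0)
    · -- integrability of bound
      rw [intervalIntegrable_iff_integrableOn_Ioc_of_le (by norm_num)]
      exact (aux_I (by linarith) (by linarith : (-1:ℝ) < -θ₂)).const_mul _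
    · -- pointwise continuity in t
      filter_upwards [] with u
      intro hu
      rw [uIoc_of_le (by norm_num : (0:ℝ) ≤ 1)] at hu
      have htu : t₀ * u ∈ Ioo (0:ℝ) 1 :=
        ⟨mul_pos ht₀.1 hu.1, lt_of_le_of_lt (by nlinarith [hu.2, ht₀.1.le, hu.1.le] : t₀ * u ≤ t₀) ht₀.2⟩
      have hrc : ContinuousAt r (t₀ * u) :=
        hr.continuousAt (Ioc_mem_nhds htu.1 htu.2)
      have hmul : ContinuousAt (fun t : ℝ => t * u) t₀ := (continuous_mul_right u).continuousAt
      exact continuousAt_const.mul (ContinuousAt.comp (g := r) (f := fun t : ℝ => t * u) hrc hmul)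
  have hev : (fun t => θ₁ * (t ^ θ₁ * ∫ u in (0:ℝ)..1, (1 - u) ^ (θ₁ - 1) * r (t * u)))
      =ᶠ[nhds t₀] (fun t => ∫ s in (0:ℝ)..t, θ₁ * (t - s) ^ (θ₁ - 1) * r s) := by
    filter_upwards [Ioo_mem_nhds ht₀.1 ht₀.2] with t ht
    rw [aux_rep θ₁ h0 r ht.1]
  exact (continuousAt_const.mul
    ((Real.continuousAt_rpow_const t₀ θ₁ (Or.inl (ne_of_gt ht₀.1))).mul hGc)).congr hev

lemma aux_fubini (θ₁ θ₂ C : ℝ) (hθ₁ : θ₁ ∈ Ioo (0:ℝ) 1) (hθ₂ : θ₂ ∈ Ioo (0:ℝ) 1)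
    (r : ℝ → ℝ) (hr : ContinuousOn r (Ioc 0 1))
    (hbound : ∀ s ∈ Ioc (0:ℝ) 1, |r s| ≤ C * s ^ (-θ₂))
    {y : ℝ} (hy : y ∈ Ioo (0:ℝ) 1) :
    ∫ s in (0:ℝ)..y, (y - s) ^ θ₁ * r s
      = ∫ t in (0:ℝ)..y, ∫ s in (0:ℝ)..t, θ₁ * (t - s) ^ (θ₁ - 1) * r s := by
  classical
  obtain ⟨hy0, hy1⟩ := hy
  obtain ⟨h0, h1⟩ := hθ₁
  set r₁ : ℝ → ℝ := (Ioc (0:ℝ) 1).indicator r with hr₁def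
  have hr₁m : Measurable r₁ := by
    rw [hr₁def, ← Set.piecewise_eq_indicator]
    exact hr.measurable_piecewise continuousOn_const measurableSet_Ioc
  have hr₁eq : ∀ s ∈ Ioc (0:ℝ) 1, r₁ s = r s := fun s hs => indicator_of_mem hs r
  set A : Set (ℝ × ℝ) := {p | 0 < p.1 ∧ p.1 < p.2 ∧ p.2 < y} with hAdef
  have hA : MeasurableSet A := by
    apply MeasurableSet.inter
    · exact measurableSet_lt measurable_const measurable_fst
    · exact MeasurableSet.inter (measurableSet_lt measurable_fst measurable_snd)
        (measurableSet_lt measurable_snd measurable_const)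
  set H : ℝ × ℝ → ℝ := A.indicator (fun p => θ₁ * (p.2 - p.1) ^ (θ₁ - 1) * r₁ p.1) with hHdef
  have hHm : Measurable H :=
    Measurable.indicator ((measurable_const.mul
      ((measurable_snd.sub measurable_fst).pow measurable_const)).mul
      (hr₁m.comp measurable_fst)) hA
  -- slices in t
  have hHs : ∀ s ∈ Ioo (0:ℝ) y, (fun t => H (s, t))
      = (Ioo s y).indicator (fun t => θ₁ * (t - s) ^ (θ₁ - 1) * r₁ s) := by
    intro s hs
    funext t
    by_cases ht : t ∈ Ioo s y
    · rw [indicator_of_mem ht, hHdef, indicator_of_mem (by exact ⟨hs.1, ht.1, ht.2⟩)]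
    · rw [indicator_of_notMem ht, hHdef,
        indicator_of_notMem (by intro hmem; exact ht ⟨hmem.2.1, hmem.2.2⟩)]
  have hHs0 : ∀ s, s ∉ Ioo (0:ℝ) y → (fun t => H (s, t)) = 0 := by
    intro s hs
    funext t
    rw [hHdef, indicator_of_notMem, Pi.zero_apply]
    intro hmem
    exact hs ⟨hmem.1, lt_trans hmem.2.1 hmem.2.2⟩
  -- kernel integrability & integral on slices
  have hker : ∀ s : ℝ, s ≤ y → IntegrableOn (fun t => θ₁ * (t - s) ^ (θ₁ - 1)) (Ioo s y) := by
    intro s hsy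
    have h := (intervalIntegral.intervalIntegrable_rpow'
      (a := 0) (b := y - s) (show (-1:ℝ) < θ₁ - 1 by linarith)).comp_sub_right s
    rw [zero_add, sub_add_cancel] at h
    have h2 := h.const_mul θ₁
    rw [intervalIntegrable_iff_integrableOn_Ioc_of_le hsy] at h2
    exact h2.mono_set Ioo_subset_Ioc_self
  have hkerint : ∀ s : ℝ, s ≤ y →
      ∫ t in Ioo s y, θ₁ * (t - s) ^ (θ₁ - 1) = (y - s) ^ θ₁ := by
    intro s hsy
    rw [← integral_Ioc_eq_integral_Ioo, ← intervalIntegral.integral_of_le hsy, aux_K h0 hsy]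
  -- integrability of each slice
  have hint_s : ∀ s : ℝ, Integrable (fun t => H (s, t)) := by
    intro s
    by_cases hs : s ∈ Ioo (0:ℝ) y
    · rw [hHs s hs]
      exact IntegrableOn.integrable_indicator ((hker s hs.2.le).mul_const (r₁ s)) measurableSet_Ioo
    · rw [hHs0 s hs]; exact integrable_zero _ _ _
  -- value of slice integrals
  have hHsint : ∀ s ∈ Ioo (0:ℝ) y, ∫ t, H (s, t) = (y - s) ^ θ₁ * r₁ s := by
    intro s hs
    rw [hHs s hs, integral_indicator measurableSet_Ioo]
    rw [show (fun t => θ₁ * (t - s) ^ (θ₁ - 1) * r₁ s)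
        = fun t => (fun t => θ₁ * (t - s) ^ (θ₁ - 1)) t * r₁ s from rfl]
    rw [integral_mul_const, hkerint s hs.2.le]
  -- norm of slice integrals
  have habs : ∀ s ∈ Ioo (0:ℝ) y, ∫ t, ‖H (s, t)‖ = (y - s) ^ θ₁ * |r₁ s| := by
    intro s hs
    have heq : (fun t => ‖H (s, t)‖)
        = (Ioo s y).indicator (fun t => θ₁ * (t - s) ^ (θ₁ - 1) * |r₁ s|) := by
      funext t
      rw [congrFun (hHs s hs) t, norm_indicator_eq_indicator_norm]
      refine congrFun (Set.indicator_congr (fun t ht => ?_)) t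
      have htpos : 0 ≤ t - s := by linarith [ht.1]
      rw [Real.norm_eq_abs, abs_mul, abs_mul, abs_of_nonneg h0.le,
        abs_of_nonneg (Real.rpow_nonneg htpos _)]
    rw [heq, integral_indicator measurableSet_Ioo]
    rw [show (fun t => θ₁ * (t - s) ^ (θ₁ - 1) * |r₁ s|)
        = fun t => (fun t => θ₁ * (t - s) ^ (θ₁ - 1)) t * |r₁ s| from rfl]
    rw [integral_mul_const, hkerint s hs.2.le]
  -- integrability of uncurried H
  have hHint : Integrable H (volume.prod volume) := by
    refine (integrable_prod_iff hHm.aestronglyMeasurable).mpr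
      ⟨Filter.Eventually.of_forall hint_s, ?_⟩
    have hdom : Integrable ((Ioo (0:ℝ) y).indicator (fun s => C * s ^ (-θ₂))) := by
      have h := (intervalIntegral.intervalIntegrable_rpow'
        (a := 0) (b := y) (show (-1:ℝ) < -θ₂ by linarith [hθ₂.2])).const_mul C
      rw [intervalIntegrable_iff_integrableOn_Ioc_of_le hy0.le] at h
      exact (h.mono_set Ioo_subset_Ioc_self).integrable_indicator measurableSet_Ioo
    refine hdom.mono' (hHm.norm.aestronglyMeasurable.integral_prod_right') ?_
    refine Filter.Eventually.of_forall (fun s => ?_)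
    by_cases hs : s ∈ Ioo (0:ℝ) y
    · rw [habs s hs, indicator_of_mem hs]
      have hnn : (0:ℝ) ≤ (y - s) ^ θ₁ * |r₁ s| :=
        mul_nonneg (Real.rpow_nonneg (by linarith [hs.2]) _) (abs_nonneg _)
      rw [Real.norm_eq_abs, abs_of_nonneg hnn]
      have hs1 : s ∈ Ioc (0:ℝ) 1 := ⟨hs.1, by linarith [hs.2]⟩
      have hb := hbound s hs1
      rw [hr₁eq s hs1]
      calc (y - s) ^ θ₁ * |r s| ≤ 1 * |r s| := by
            apply mul_le_mul_of_nonneg_right _ (abs_nonneg _)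
            exact Real.rpow_le_one (by linarith [hs.2]) (by linarith [hs.1]) h0.le
        _ = |r s| := one_mul _
        _ ≤ C * s ^ (-θ₂) := hb
    · rw [indicator_of_notMem hs]
      have h0' : ∀ t, H (s, t) = 0 := fun t => congrFun (hHs0 s hs) t
      simp [h0']
  -- Fubini
  have hswap : ∫ s, ∫ t, H (s, t) = ∫ t, ∫ s, H (s, t) := by
    have := MeasureTheory.integral_integral_swap (f := fun s t => H (s, t))
      (μ := volume) (ν := volume) (by exact hHint)
    simpa using this
  -- identify LHS
  have hL : ∫ s, ∫ t, H (s, t) = ∫ s in (0:ℝ)..y, (y - s) ^ θ₁ * r s := by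
    have heq : (fun s => ∫ t, H (s, t))
        = (Ioo (0:ℝ) y).indicator (fun s => (y - s) ^ θ₁ * r s) := by
      funext s
      by_cases hs : s ∈ Ioo (0:ℝ) y
      · rw [hHsint s hs, indicator_of_mem hs,
          hr₁eq s ⟨hs.1, by linarith [hs.2]⟩]
      · rw [hHs0 s hs, indicator_of_notMem hs]; simp
    rw [heq, integral_indicator measurableSet_Ioo, ← integral_Ioc_eq_integral_Ioo,
      ← intervalIntegral.integral_of_le hy0.le]
  -- identify RHS
  have hHt : ∀ t ∈ Ioo (0:ℝ) y, (fun s => H (s, t))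
      = (Ioo (0:ℝ) t).indicator (fun s => θ₁ * (t - s) ^ (θ₁ - 1) * r₁ s) := by
    intro t ht
    funext s
    by_cases hs : s ∈ Ioo (0:ℝ) t
    · rw [indicator_of_mem hs, hHdef, indicator_of_mem (by exact ⟨hs.1, hs.2, ht.2⟩)]
    · rw [indicator_of_notMem hs, hHdef,
        indicator_of_notMem (by intro hmem; exact hs ⟨hmem.1, hmem.2.1⟩)]
  have hHt0 : ∀ t : ℝ, t ∉ Ioo (0:ℝ) y → (fun s => H (s, t)) = 0 := by
    intro t ht
    funext s
    rw [hHdef, indicator_of_notMem, Pi.zero_apply]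
    intro hmem
    exact ht ⟨lt_trans hmem.1 hmem.2.1, hmem.2.2⟩
  have hR : ∫ t, ∫ s, H (s, t)
      = ∫ t in (0:ℝ)..y, ∫ s in (0:ℝ)..t, θ₁ * (t - s) ^ (θ₁ - 1) * r s := by
    have heq : (fun t => ∫ s, H (s, t))
        = (Ioo (0:ℝ) y).indicator (fun t => ∫ s in (0:ℝ)..t, θ₁ * (t - s) ^ (θ₁ - 1) * r s) := by
      funext t
      by_cases ht : t ∈ Ioo (0:ℝ) y
      · rw [hHt t ht, indicator_of_mem ht, integral_indicator measurableSet_Ioo,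
          ← integral_Ioc_eq_integral_Ioo,
          setIntegral_congr_fun (f := fun s => θ₁ * (t - s) ^ (θ₁ - 1) * r₁ s)
            (g := fun s => θ₁ * (t - s) ^ (θ₁ - 1) * r s) measurableSet_Ioc
            (fun s hs => by
              show θ₁ * (t - s) ^ (θ₁ - 1) * r₁ s = θ₁ * (t - s) ^ (θ₁ - 1) * r s
              rw [hr₁eq s ⟨hs.1, le_trans hs.2 (by linarith [ht.2])⟩]),
          ← intervalIntegral.integral_of_le ht.1.le]
      · rw [hHt0 t ht, indicator_of_notMem ht]; simp
    rw [heq, integral_indicator measurableSet_Ioo, ← integral_Ioc_eq_integral_Ioo,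
      ← intervalIntegral.integral_of_le hy0.le]
  rw [← hL, hswap, hR]


end AuxStmt4

theorem stmt4 (θ₁ θ₂ : ℝ) (hθ₁ : θ₁ ∈ Set.Ioo (0:ℝ) 1) (hθ₂ : θ₂ ∈ Set.Ioo (0:ℝ) 1)
    (r : ℝ → ℝ) (hr : ContinuousOn r (Set.Ioc 0 1))
    (C : ℝ) (hbound : ∀ s ∈ Set.Ioc (0:ℝ) 1, |r s| ≤ C * s ^ (-θ₂)) :
    ∀ x ∈ Set.Ioo (0:ℝ) 1,
      HasDerivAt (fun y : ℝ => ∫ s in (0:ℝ)..y, (y - s) ^ θ₁ * r s)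
        (∫ s in (0:ℝ)..x, θ₁ * (x - s) ^ (θ₁ - 1) * r s) x := by
  intro x hx
  obtain ⟨h0, h1⟩ := hθ₁
  obtain ⟨h20, h21⟩ := hθ₂
  have hC : 0 ≤ C := by
    have h := hbound 1 ⟨one_pos, le_refl 1⟩
    rw [Real.one_rpow, mul_one] at h
    exact le_trans (abs_nonneg _) h
  set g : ℝ → ℝ := fun t => ∫ s in (0:ℝ)..t, θ₁ * (t - s) ^ (θ₁ - 1) * r s with hgdef
  set B : ℝ := ∫ u in (0:ℝ)..1, (1 - u) ^ (θ₁ - 1) * u ^ (-θ₂) with hBdef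
  have hBnn : 0 ≤ B := by
    rw [hBdef]
    apply intervalIntegral.integral_nonneg (by norm_num)
    intro u hu
    exact mul_nonneg (Real.rpow_nonneg (by linarith [hu.2]) _) (Real.rpow_nonneg hu.1 _)
  have hgc : ∀ t ∈ Ioo (0:ℝ) 1, ContinuousAt g t := fun t ht =>
    aux_cont h0 h1 h20 h21 hC hr hbound ht
  have hgi : IntervalIntegrable g volume 0 x := by
    rw [intervalIntegrable_iff_integrableOn_Ioc_of_le hx.1.le]
    have hdom : IntegrableOn (fun t : ℝ => θ₁ * (C * B) * t ^ (θ₁ - θ₂)) (Ioc 0 x) := by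
      have h := (intervalIntegral.intervalIntegrable_rpow' (a := 0) (b := x)
        (show (-1:ℝ) < θ₁ - θ₂ by linarith)).const_mul (θ₁ * (C * B))
      rwa [intervalIntegrable_iff_integrableOn_Ioc_of_le hx.1.le] at h
    refine hdom.integrable.mono' ?_ ?_
    · have hco : ContinuousOn g (Ioo 0 x) := fun t ht =>
        (hgc t ⟨ht.1, lt_trans ht.2 hx.2⟩).continuousWithinAt
      have : volume.restrict (Ioc (0:ℝ) x) = volume.restrict (Ioo (0:ℝ) x) :=
        Measure.restrict_congr_set Ioo_ae_eq_Ioc.symm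
      rw [this]
      exact hco.aestronglyMeasurable measurableSet_Ioo
    · filter_upwards [ae_restrict_mem measurableSet_Ioc] with t ht
      have ht1 : t ∈ Ioc (0:ℝ) 1 := ⟨ht.1, le_trans ht.2 hx.2.le⟩
      have hrep := aux_rep θ₁ h0 r ht.1
      rw [Real.norm_eq_abs, hgdef]
      simp only []
      rw [hrep, abs_mul, abs_mul, abs_of_nonneg h0.le,
        abs_of_nonneg (Real.rpow_nonneg ht.1.le _)]
      calc θ₁ * (t ^ θ₁ * |∫ u in (0:ℝ)..1, (1 - u) ^ (θ₁ - 1) * r (t * u)|)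
          ≤ θ₁ * (t ^ θ₁ * (C * t ^ (-θ₂) * B)) := by
            apply mul_le_mul_of_nonneg_left _ h0.le
            exact mul_le_mul_of_nonneg_left (aux_Gbound h0 h21 hC hbound ht1)
              (Real.rpow_nonneg ht.1.le _)
        _ = θ₁ * (C * B) * t ^ (θ₁ - θ₂) := by
            rw [sub_eq_add_neg, Real.rpow_add ht.1]; ring
  have hmeasf : StronglyMeasurableAtFilter g (nhds x) volume :=
    ContinuousAt.stronglyMeasurableAtFilter (μ := volume) isOpen_Ioo hgc x hx
  have hd : HasDerivAt (fun y => ∫ t in (0:ℝ)..y, g t) (g x) x :=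
    intervalIntegral.integral_hasDerivAt_right hgi hmeasf (hgc x hx)
  refine hd.congr_of_eventuallyEq ?_
  filter_upwards [Ioo_mem_nhds hx.1 hx.2] with y hy
  exact aux_fubini θ₁ θ₂ C ⟨h0, h1⟩ ⟨h20, h21⟩ r hr hbound hy
end

section
/- Let m be a positive integer and let σ ∈ ℝ satisfy m−1 < σ < m. Let ψ : (0,1] → ℝ be continuously differentiable with |ψ(s)| + s|ψ'(s)| ≤ C₁ s^{σ−m} for all 0 < s < 1 and some constant C₁. Define w(x) = ∫₀ˣ (x-s)^{σ−m} ψ(s) ds for 0 < x < 1. Then w is differentiable on (0,1) with w'(x) = (1/x) ∫₀ˣ (x-s)^{σ−m} [ s ψ'(s) + (σ−m+1) ψ(s) ] ds, and moreover |w'(x)| ≤ C₁ · B(σ−m+1, σ−m+1) · x^{2(σ−m)} for all 0 < x < 1, where B denotes Euler's Beta function. -/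
/-- Euler's Beta function `B(a,b) = Γ(a)Γ(b)/Γ(a+b)`. -/
noncomputable def realBeta (a b : ℝ) : ℝ :=
  Real.Gamma a * Real.Gamma b / Real.Gamma (a + b)

open MeasureTheory Set

lemma beta_integrable {α : ℝ} (h0 : -1 < α) (h1 : α < 0) :
    IntegrableOn (fun t : ℝ => t ^ α * (1 - t) ^ α) (Set.Ioc 0 1) := by
  have hre : 0 < (((α + 1 : ℝ)) : ℂ).re := by simpa using by linarith
  have h := Complex.betaIntegral_convergent (u := ((α+1:ℝ):ℂ)) (v := ((α+1:ℝ):ℂ)) hre hre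
  have h2 : IntegrableOn (fun x : ℝ => ((x:ℂ)) ^ (((α+1:ℝ):ℂ) - 1) * (1 - (x:ℂ)) ^ (((α+1:ℝ):ℂ) - 1)) (Set.Ioc 0 1) :=
    (intervalIntegrable_iff_integrableOn_Ioc_of_le zero_le_one).mp h
  have h3 : IntegrableOn (fun x : ℝ => ((x ^ α * (1-x)^α : ℝ) : ℂ)) (Set.Ioc 0 1) := by
    refine h2.congr_fun (fun x hx => ?_) measurableSet_Ioc
    have hx0 : (0:ℝ) ≤ x := hx.1.le
    have hx1 : (0:ℝ) ≤ 1 - x := by linarith [hx.2]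
    dsimp only
    rw [show (((α+1:ℝ):ℂ) - 1) = ((α:ℝ):ℂ) by push_cast; ring,
      show (1 - (x:ℂ)) = ((1-x:ℝ):ℂ) by push_cast; ring,
      ← Complex.ofReal_cpow hx0, ← Complex.ofReal_cpow hx1, ← Complex.ofReal_mul]
  have := h3.re
  simp at this; exact this

lemma beta_value {α : ℝ} (h0 : -1 < α) (h1 : α < 0) :
    (∫ t in Set.Ioc (0:ℝ) 1, t ^ α * (1 - t) ^ α) = realBeta (α+1) (α+1) := by
  have hre : 0 < (((α + 1 : ℝ)) : ℂ).re := by simpa using by linarith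
  have key := Complex.Gamma_mul_Gamma_eq_betaIntegral (s := ((α+1:ℝ):ℂ)) (t := ((α+1:ℝ):ℂ)) hre hre
  have hBI : Complex.betaIntegral ((α+1:ℝ):ℂ) ((α+1:ℝ):ℂ)
      = ((∫ t in Set.Ioc (0:ℝ) 1, t ^ α * (1 - t) ^ α : ℝ) : ℂ) := by
    rw [Complex.betaIntegral]
    rw [show (∫ t in Set.Ioc (0:ℝ) 1, t ^ α * (1 - t) ^ α)
        = ∫ t in (0:ℝ)..1, t ^ α * (1 - t) ^ α by
      rw [intervalIntegral.integral_of_le zero_le_one]]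
    rw [← intervalIntegral.integral_ofReal]
    refine intervalIntegral.integral_congr (fun x hx => ?_)
    rw [Set.uIcc_of_le zero_le_one] at hx
    have hx0 : (0:ℝ) ≤ x := hx.1
    have hx1 : (0:ℝ) ≤ 1 - x := by linarith [hx.2]
    rw [show (((α+1:ℝ):ℂ) - 1) = ((α:ℝ):ℂ) by push_cast; ring,
      show (1 - (x:ℂ)) = ((1-x:ℝ):ℂ) by push_cast; ring,
      ← Complex.ofReal_cpow hx0, ← Complex.ofReal_cpow hx1, ← Complex.ofReal_mul]
  rw [hBI] at key
  have hsum : (((α+1:ℝ):ℂ) + ((α+1:ℝ):ℂ)) = (((α+1)+(α+1) : ℝ) : ℂ) := by push_cast; ring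
  rw [hsum, Complex.Gamma_ofReal, Complex.Gamma_ofReal, ← Complex.ofReal_mul, ← Complex.ofReal_mul] at key
  have key' : Real.Gamma (α+1) * Real.Gamma (α+1)
      = Real.Gamma ((α+1)+(α+1)) * ∫ t in Set.Ioc (0:ℝ) 1, t ^ α * (1 - t) ^ α := by
    exact_mod_cast key
  have hG : Real.Gamma ((α+1)+(α+1)) ≠ 0 := (Real.Gamma_pos_of_pos (by linarith)).ne'
  rw [realBeta]
  rw [eq_div_iff hG]
  linarith [key']

theorem main_aux (α : ℝ) (hα0 : -1 < α) (hα1 : α < 0)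
    (ψ : ℝ → ℝ) (hψ : ContDiffOn ℝ 1 ψ (Set.Ioc 0 1)) (C₁ : ℝ)
    (hbound : ∀ s ∈ Set.Ioo (0:ℝ) 1,
      |ψ s| + s * |derivWithin ψ (Set.Ioc 0 1) s| ≤ C₁ * s ^ α)
    (x : ℝ) (hx0 : 0 < x) (hx1 : x < 1) :
    HasDerivAt (fun y : ℝ => ∫ s in (0:ℝ)..y, (y - s) ^ α * ψ s)
      ((1/x) * ∫ s in (0:ℝ)..x, (x - s) ^ α *
        (s * derivWithin ψ (Set.Ioc 0 1) s + (α+1) * ψ s)) x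
    ∧ |(1/x) * ∫ s in (0:ℝ)..x, (x - s) ^ α *
        (s * derivWithin ψ (Set.Ioc 0 1) s + (α+1) * ψ s)|
      ≤ C₁ * realBeta (α+1) (α+1) * x ^ (2*α) := by
  set ψ' := derivWithin ψ (Set.Ioc 0 1) with hψ'def
  set μ := volume.restrict (Set.Ioo (0:ℝ) 1) with hμdef
  have hIoc : volume.restrict (Set.Ioc (0:ℝ) 1) = μ :=
    (Measure.restrict_congr_set Ioo_ae_eq_Ioc).symm
  have hint : ∀ f : ℝ → ℝ, ∫ t in (0:ℝ)..1, f t = ∫ t, f t ∂μ := by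
    intro f
    rw [intervalIntegral.integral_of_le zero_le_one, hIoc]
  have hC : 0 ≤ C₁ := by
    have h := hbound (1/2) ⟨by norm_num, by norm_num⟩
    have h2 : (0:ℝ) < (1/2:ℝ) ^ α := Real.rpow_pos_of_pos (by norm_num) _
    nlinarith [abs_nonneg (ψ (1/2)), abs_nonneg (ψ' (1/2))]
  have hψcont : ContinuousOn ψ (Set.Ioc 0 1) := hψ.continuousOn
  have hψ'cont : ContinuousOn ψ' (Set.Ioc 0 1) :=
    hψ.continuousOn_derivWithin (uniqueDiffOn_Ioc 0 1) le_rfl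
  have hψderiv : ∀ {s : ℝ}, s ∈ Set.Ioo (0:ℝ) 1 → HasDerivAt ψ (ψ' s) s := by
    intro s hs
    have hnb : Set.Ioc (0:ℝ) 1 ∈ nhds s :=
      Filter.mem_of_superset (isOpen_Ioo.mem_nhds hs) Ioo_subset_Ioc_self
    have hd : DifferentiableAt ℝ ψ s :=
      ((hψ.differentiableOn one_ne_zero) s (Ioo_subset_Ioc_self hs)).differentiableAt hnb
    rw [hψ'def, derivWithin_of_mem_nhds hnb]
    exact hd.hasDerivAt
  -- continuity of 1-t ^ α
  have hrpow_cont : ContinuousOn (fun t : ℝ => (1-t) ^ α) (Set.Ioo 0 1) := by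
    intro t ht
    apply ContinuousAt.continuousWithinAt
    exact (Real.continuousAt_rpow_const _ _ (Or.inl (by linarith [ht.2]))).comp
      ((continuous_const.sub continuous_id).continuousAt)
  set F : ℝ → ℝ → ℝ := fun y t => (1-t) ^ α * ψ (y*t) with hFdef
  set F' : ℝ → ℝ → ℝ := fun y t => (1-t) ^ α * (t * ψ' (y*t)) with hF'def
  have hmapsIoc : ∀ {y : ℝ}, 0 < y → y ≤ 1 → ∀ t ∈ Set.Ioo (0:ℝ) 1, y * t ∈ Set.Ioc (0:ℝ) 1 := by
    intro y hy0 hy1 t ht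
    exact ⟨mul_pos hy0 ht.1, by nlinarith [ht.2]⟩
  have hmapsIoo : ∀ {y : ℝ}, 0 < y → y ≤ 1 → ∀ t ∈ Set.Ioo (0:ℝ) 1, y * t ∈ Set.Ioo (0:ℝ) 1 := by
    intro y hy0 hy1 t ht
    exact ⟨mul_pos hy0 ht.1, by nlinarith [ht.2]⟩
  have hmeas : ∀ y : ℝ, 0 < y → y ≤ 1 → AEStronglyMeasurable (F y) μ := by
    intro y hy0 hy1
    apply ContinuousOn.aestronglyMeasurable ?_ measurableSet_Ioo
    apply hrpow_cont.mul
    exact hψcont.comp ((continuous_const.mul continuous_id).continuousOn)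
      (fun t ht => hmapsIoc hy0 hy1 t ht)
  have hF'meas : AEStronglyMeasurable (F' x) μ := by
    apply ContinuousOn.aestronglyMeasurable ?_ measurableSet_Ioo
    apply hrpow_cont.mul
    apply ContinuousOn.mul continuousOn_id
    exact hψ'cont.comp ((continuous_const.mul continuous_id).continuousOn)
      (fun t ht => hmapsIoc hx0 hx1.le t ht)
  have hJ : Integrable (fun t : ℝ => t ^ α * (1-t) ^ α) μ := by
    rw [← hIoc]
    exact beta_integrable hα0 hα1
  have haein : ∀ᵐ t ∂μ, t ∈ Set.Ioo (0:ℝ) 1 := ae_restrict_mem measurableSet_Ioo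
  -- integrability of F x
  have hFx_int : Integrable (F x) μ := by
    refine Integrable.mono (hJ.const_mul (C₁ * x ^ α)) (hmeas x hx0 hx1.le) ?_
    filter_upwards [haein] with t ht
    have hxt := hmapsIoo hx0 hx1.le t ht
    have hb := hbound _ hxt
    have hB : (0:ℝ) ≤ (1-t) ^ α := Real.rpow_nonneg (by linarith [ht.2]) _
    have hmul : (x*t) ^ α = x ^ α * t ^ α := Real.mul_rpow hx0.le ht.1.le
    have h1 : ‖F x t‖ = (1-t) ^ α * |ψ (x*t)| := by
      rw [hFdef]; simp only [Real.norm_eq_abs, abs_mul, abs_of_nonneg hB]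
    rw [h1]
    have h2 : |ψ (x*t)| ≤ C₁ * (x ^ α * t ^ α) := by
      rw [← hmul]
      nlinarith [abs_nonneg (ψ' (x*t)), mul_nonneg (mul_pos hx0 ht.1).le (abs_nonneg (ψ' (x*t)))]
    calc (1-t) ^ α * |ψ (x*t)| ≤ (1-t) ^ α * (C₁ * (x ^ α * t ^ α)) :=
          mul_le_mul_of_nonneg_left h2 hB
      _ ≤ ‖C₁ * x ^ α * (t ^ α * (1-t) ^ α)‖ := by
          rw [Real.norm_eq_abs]
          exact le_trans (le_of_eq (by ring)) (le_abs_self _)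
  -- epsilon
  set ε : ℝ := min (x/2) ((1-x)/2) with hεdef
  have hε : 0 < ε := lt_min (by linarith) (by linarith)
  have hball : ∀ y ∈ Metric.ball x ε, x/2 ≤ y ∧ 0 < y ∧ y < 1 := by
    intro y hy
    rw [Metric.mem_ball, Real.dist_eq, abs_lt] at hy
    have h1 : ε ≤ x/2 := min_le_left _ _
    have h2 : ε ≤ (1-x)/2 := min_le_right _ _
    exact ⟨by linarith, by linarith, by linarith⟩
  set bound : ℝ → ℝ := fun t => (C₁ * (x/2) ^ (α-1)) * (t ^ α * (1-t) ^ α) with hbdef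
  have hbound_int : Integrable bound μ := hJ.const_mul _
  have h_bound : ∀ᵐ t ∂μ, ∀ y ∈ Metric.ball x ε, ‖F' y t‖ ≤ bound t := by
    filter_upwards [haein] with t ht y hy
    obtain ⟨hy2, hy0, hy1⟩ := hball y hy
    have hyt := hmapsIoo hy0 hy1.le t ht
    have hb := hbound _ hyt
    have hB : (0:ℝ) ≤ (1-t) ^ α := Real.rpow_nonneg (by linarith [ht.2]) _
    have h2 : (y*t) * |ψ' (y*t)| ≤ C₁ * (y*t) ^ α := by
      nlinarith [abs_nonneg (ψ (y*t))]
    have h3 : (y*t) ^ α ≤ (x/2) ^ α * t ^ α := by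
      rw [← Real.mul_rpow (by linarith) ht.1.le]
      exact Real.rpow_le_rpow_of_nonpos (by nlinarith [ht.1]) (by nlinarith [ht.1]) hα1.le
    have h4 : t * |ψ' (y*t)| * (x/2) ≤ C₁ * ((x/2) ^ α * t ^ α) := by
      have hst : t * |ψ' (y*t)| * (x/2) ≤ (y*t) * |ψ' (y*t)| := by
        nlinarith [mul_le_mul_of_nonneg_left hy2 (mul_nonneg ht.1.le (abs_nonneg (ψ' (y*t))))]
      calc t * |ψ' (y*t)| * (x/2) ≤ (y*t) * |ψ' (y*t)| := hst
        _ ≤ C₁ * (y*t) ^ α := h2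
        _ ≤ C₁ * ((x/2) ^ α * t ^ α) := by nlinarith [h3]
    have h5 : t * |ψ' (y*t)| ≤ C₁ * (x/2) ^ (α-1) * t ^ α := by
      rw [Real.rpow_sub_one (by linarith : (x/2:ℝ) ≠ 0)]
      rw [show C₁ * ((x/2) ^ α / (x/2)) * t ^ α = C₁ * ((x/2) ^ α * t ^ α) / (x/2) from by ring,
        le_div_iff₀ (by linarith : (0:ℝ) < x/2)]
      exact h4
    have h6 : ‖F' y t‖ = (1-t) ^ α * (t * |ψ' (y*t)|) := by
      rw [hF'def]
      simp only [Real.norm_eq_abs, abs_mul, abs_of_nonneg hB, abs_of_nonneg ht.1.le]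
    rw [h6, hbdef]
    calc (1-t) ^ α * (t * |ψ' (y*t)|) ≤ (1-t) ^ α * (C₁ * (x/2) ^ (α-1) * t ^ α) :=
        mul_le_mul_of_nonneg_left h5 hB
      _ = C₁ * (x/2) ^ (α-1) * (t ^ α * (1-t) ^ α) := by ring
  have h_diff : ∀ᵐ t ∂μ, ∀ y ∈ Metric.ball x ε, HasDerivAt (fun y => F y t) (F' y t) y := by
    filter_upwards [haein] with t ht y hy
    obtain ⟨_, hy0, hy1⟩ := hball y hy
    have hyt := hmapsIoo hy0 hy1.le t ht
    have hc : HasDerivAt (fun y : ℝ => ψ (y*t)) (ψ' (y*t) * t) y :=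
      (hψderiv hyt).comp y (hasDerivAt_mul_const t)
    have := hc.const_mul ((1-t) ^ α)
    exact this.congr_deriv (by rw [hF'def]; ring)
  have hF_meas : ∀ᶠ y in nhds x, AEStronglyMeasurable (F y) μ := by
    filter_upwards [Ioo_mem_nhds hx0 hx1] with y hy using hmeas y hy.1 hy.2.le
  obtain ⟨hF'x_int, hG⟩ := hasDerivAt_integral_of_dominated_loc_of_deriv_le (Metric.ball_mem_nhds x hε) hF_meas hFx_int
    hF'meas h_bound hbound_int h_diff
  -- change of variables
  have hCOV : ∀ y : ℝ, 0 < y → ∀ f : ℝ → ℝ,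
      ∫ s in (0:ℝ)..y, f s = y * ∫ t in (0:ℝ)..1, f (y*t) := by
    intro y hy0 f
    rw [intervalIntegral.integral_comp_mul_left f hy0.ne', mul_zero, mul_one, smul_eq_mul,
      ← mul_assoc, mul_inv_cancel₀ hy0.ne', one_mul]
  have hw_eq : ∀ y ∈ Set.Ioo (0:ℝ) 1,
      (∫ s in (0:ℝ)..y, (y - s) ^ α * ψ s) = y ^ (α+1) * ∫ t, F y t ∂μ := by
    intro y hy
    rw [hCOV y hy.1 (fun s => (y-s) ^ α * ψ s)]
    have hcongr : (∫ t in (0:ℝ)..1, (y - y*t) ^ α * ψ (y*t))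
        = ∫ t in (0:ℝ)..1, y ^ α * F y t := by
      refine intervalIntegral.integral_congr (fun t ht => ?_)
      rw [Set.uIcc_of_le zero_le_one] at ht
      rw [show y - y*t = y*(1-t) by ring, Real.mul_rpow hy.1.le (by linarith [ht.2]), hFdef]
      ring
    rw [hcongr, intervalIntegral.integral_const_mul, hint (F y),
      Real.rpow_add_one hy.1.ne' α]
    ring
  have hval : (∫ s in (0:ℝ)..x, (x - s) ^ α * (s * ψ' s + (α+1) * ψ s))
      = x * (x ^ α * (x * (∫ t, F' x t ∂μ) + (α+1) * ∫ t, F x t ∂μ)) := by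
    rw [hCOV x hx0 (fun s => (x-s) ^ α * (s * ψ' s + (α+1) * ψ s))]
    have hcongr : (∫ t in (0:ℝ)..1, (x - x*t) ^ α * ((x*t) * ψ' (x*t) + (α+1) * ψ (x*t)))
        = ∫ t in (0:ℝ)..1, x ^ α * (x * F' x t + (α+1) * F x t) := by
      refine intervalIntegral.integral_congr (fun t ht => ?_)
      rw [Set.uIcc_of_le zero_le_one] at ht
      rw [show x - x*t = x*(1-t) by ring, Real.mul_rpow hx0.le (by linarith [ht.2]),
        hFdef, hF'def]
      ring
    rw [hcongr, intervalIntegral.integral_const_mul,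
      hint (fun t => x * F' x t + (α+1) * F x t),
      integral_add (hF'x_int.const_mul x) (hFx_int.const_mul (α+1)),
      integral_const_mul, integral_const_mul]
  set D : ℝ := (α+1) * x ^ α * (∫ t, F x t ∂μ) + x ^ (α+1) * (∫ t, F' x t ∂μ) with hDdef
  have hvD : (1/x) * (∫ s in (0:ℝ)..x, (x - s) ^ α * (s * ψ' s + (α+1) * ψ s)) = D := by
    rw [hval, hDdef, Real.rpow_add_one hx0.ne' α]
    field_simp
    try ring
  have hD : HasDerivAt (fun y : ℝ => y ^ (α+1) * ∫ t, F y t ∂μ) D x := by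
    have hpow : HasDerivAt (fun y : ℝ => y ^ (α+1)) ((α+1) * x ^ α) x := by
      have h := Real.hasDerivAt_rpow_const (x := x) (p := α+1) (Or.inl hx0.ne')
      simpa [show α+1-1 = α by ring] using h
    have := hpow.mul hG
    exact this
  have hDeriv : HasDerivAt (fun y : ℝ => ∫ s in (0:ℝ)..y, (y - s) ^ α * ψ s) D x := by
    apply hD.congr_of_eventuallyEq
    filter_upwards [Ioo_mem_nhds hx0 hx1] with y hy using hw_eq y hy
  constructor
  · rw [hvD]
    exact hDeriv
  · rw [hvD]
    -- bound on |D|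
    have hD_int : D = ∫ t, ((α+1) * x ^ α * F x t + x ^ (α+1) * F' x t) ∂μ := by
      rw [integral_add ((hFx_int.const_mul _)) (hF'x_int.const_mul _),
        integral_const_mul, integral_const_mul, hDdef]
    set g : ℝ → ℝ := fun t => C₁ * x ^ (2*α) * (t ^ α * (1-t) ^ α) with hgdef
    have hg_int : Integrable g μ := hJ.const_mul _
    have habs : ∀ᵐ t ∂μ, ‖(α+1) * x ^ α * F x t + x ^ (α+1) * F' x t‖ ≤ g t := by
      filter_upwards [haein] with t ht
      have hxt := hmapsIoo hx0 hx1.le t ht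
      have hb := hbound _ hxt
      have hB : (0:ℝ) ≤ (1-t) ^ α := Real.rpow_nonneg (by linarith [ht.2]) _
      have hA : (0:ℝ) < x ^ α := Real.rpow_pos_of_pos hx0 _
      have hxa1 : x ^ (α+1) = x ^ α * x := Real.rpow_add_one hx0.ne' α
      have h2a : x ^ (2*α) = x ^ α * x ^ α := by rw [two_mul, Real.rpow_add hx0]
      have hmul : (x*t) ^ α = x ^ α * t ^ α := Real.mul_rpow hx0.le ht.1.le
      have hstep : ‖(α+1) * x ^ α * F x t + x ^ (α+1) * F' x t‖
          = x ^ α * (1-t) ^ α * |(α+1) * ψ (x*t) + (x*t) * ψ' (x*t)| := by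
        rw [show (α+1) * x ^ α * F x t + x ^ (α+1) * F' x t
            = (x ^ α * (1-t) ^ α) * ((α+1) * ψ (x*t) + (x*t) * ψ' (x*t)) by
          rw [hFdef, hF'def, hxa1]; ring]
        rw [Real.norm_eq_abs, abs_mul, abs_of_nonneg (mul_nonneg hA.le hB)]
      rw [hstep, hgdef]
      have hin : |(α+1) * ψ (x*t) + (x*t) * ψ' (x*t)| ≤ C₁ * (x*t) ^ α := by
        calc |(α+1) * ψ (x*t) + (x*t) * ψ' (x*t)|
            ≤ |(α+1) * ψ (x*t)| + |(x*t) * ψ' (x*t)| := abs_add_le _ _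
          _ = (α+1) * |ψ (x*t)| + (x*t) * |ψ' (x*t)| := by
              rw [abs_mul, abs_mul, abs_of_nonneg (by linarith : (0:ℝ) ≤ α+1),
                abs_of_nonneg hxt.1.le]
          _ ≤ |ψ (x*t)| + (x*t) * |ψ' (x*t)| := by nlinarith [abs_nonneg (ψ (x*t))]
          _ ≤ C₁ * (x*t) ^ α := hb
      calc x ^ α * (1-t) ^ α * |(α+1) * ψ (x*t) + (x*t) * ψ' (x*t)|
          ≤ x ^ α * (1-t) ^ α * (C₁ * (x*t) ^ α) :=
            mul_le_mul_of_nonneg_left hin (mul_nonneg hA.le hB)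
        _ = C₁ * x ^ (2*α) * (t ^ α * (1-t) ^ α) := by rw [hmul, h2a]; ring
    have hfinal : |D| ≤ ∫ t, g t ∂μ := by
      rw [hD_int, ← Real.norm_eq_abs]
      exact norm_integral_le_of_norm_le hg_int habs
    have hgval : ∫ t, g t ∂μ = C₁ * realBeta (α+1) (α+1) * x ^ (2*α) := by
      rw [hgdef, integral_const_mul, ← hIoc, beta_value hα0 hα1]
      ring
    rw [hgval] at hfinal
    exact hfinal

theorem stmt5 (m : ℕ) (hm : 0 < m) (σ : ℝ) (hσ1 : (m:ℝ) - 1 < σ) (hσ2 : σ < m)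
    (ψ : ℝ → ℝ) (hψ : ContDiffOn ℝ 1 ψ (Set.Ioc 0 1))
    (C₁ : ℝ)
    (hbound : ∀ s ∈ Set.Ioo (0:ℝ) 1,
      |ψ s| + s * |derivWithin ψ (Set.Ioc 0 1) s| ≤ C₁ * s ^ (σ - m)) :
    ∀ x ∈ Set.Ioo (0:ℝ) 1,
      HasDerivAt (fun y : ℝ => ∫ s in (0:ℝ)..y, (y - s) ^ (σ - m) * ψ s)
        ((1 / x) * ∫ s in (0:ℝ)..x, (x - s) ^ (σ - m) *
          (s * derivWithin ψ (Set.Ioc 0 1) s + (σ - m + 1) * ψ s)) x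
      ∧ |(1 / x) * ∫ s in (0:ℝ)..x, (x - s) ^ (σ - m) *
          (s * derivWithin ψ (Set.Ioc 0 1) s + (σ - m + 1) * ψ s)|
          ≤ C₁ * realBeta (σ - m + 1) (σ - m + 1) * x ^ (2 * (σ - m)) := by
  intro x hx
  have h := main_aux (σ - m) (by push_cast; linarith) (by linarith) ψ hψ C₁ hbound x hx.1 hx.2
  simpa using h
end

section
/- Let m be a positive integer and let σ ∈ ℝ satisfy m−1 < σ < m. Let p be a polynomial of degree at most m−1, and let φ : [0,1] → ℝ be continuous on [0,1], continuously differentiable on (0,1], with |φ'(s)| ≤ C₀ s^{σ−m} for all 0 < s ≤ 1 and some constant C₀. Define r(x) = p(x) + (1/Γ(σ)) ∫₀ˣ (x-s)^{σ−1} φ(s) ds for 0 ≤ x ≤ 1. Then r is m-times differentiable on (0,1], with r^{(m)}(x) = ( φ(0)/Γ(σ−m+1) ) x^{σ−m} + (1/Γ(σ−m+1)) ∫₀ˣ (x-s)^{σ−m} φ'(s) ds, and there exists a constant C, independent of x, such that |r^{(m)}(x)| ≤ C x^{σ−m} for all 0 < x ≤ 1. -/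
open MeasureTheory Set Filter Real intervalIntegral Topology

namespace Stmt8

noncomputable def Bfun (a b : ℝ) : ℝ := ∫ u in (0:ℝ)..1, (1-u)^a * u^b

variable {a b C x : ℝ}

lemma Bfun_nonneg (a b : ℝ) : 0 ≤ Bfun a b := by
  apply intervalIntegral.integral_nonneg zero_le_one
  intro u hu
  exact mul_nonneg (rpow_nonneg (by linarith [hu.2]) _) (rpow_nonneg hu.1 _)

lemma kernelInt (ha : -1 < a) (hb : -1 < b) (hb0 : b ≤ 0) (hx : 0 < x) :
    IntegrableOn (fun s => (x - s) ^ a * s ^ b) (Ioc 0 x) := by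
  have h2 : (0:ℝ) < x / 2 := by linarith
  have hsplit : Ioc (0:ℝ) (x/2) ∪ Ioc (x/2) x = Ioc 0 x :=
    Ioc_union_Ioc_eq_Ioc (by linarith) (by linarith)
  rw [← hsplit]
  apply IntegrableOn.union
  · -- near 0 : dominate by const * s ^ b
    have hint : IntegrableOn (fun s : ℝ => s ^ b) (Ioc 0 (x/2)) :=
      ((intervalIntegrable_rpow' hb (a := 0) (b := x/2)).1 : _)
    have hmeas : AEStronglyMeasurable (fun s => (x - s) ^ a * s ^ b)
        (volume.restrict (Ioc 0 (x/2))) :=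
      (((measurable_const.sub measurable_id).pow_const a).mul
        (measurable_id.pow_const b)).aestronglyMeasurable
    refine Integrable.mono' (hint.const_mul (max ((x/2)^a) (x^a))) hmeas ?_
    refine (ae_restrict_iff' measurableSet_Ioc).2 (Eventually.of_forall ?_)
    intro s hs
    have hxs : 0 ≤ x - s := by linarith [hs.2]
    have hsb : 0 ≤ s ^ b := rpow_nonneg hs.1.le _
    rw [Real.norm_eq_abs, abs_mul, abs_of_nonneg (rpow_nonneg hxs _), abs_of_nonneg hsb]
    apply mul_le_mul_of_nonneg_right _ hsb
    rcases le_or_gt 0 a with h | h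
    · exact le_max_of_le_right (rpow_le_rpow hxs (by linarith [hs.1]) h)
    · exact le_max_of_le_left (rpow_le_rpow_of_nonpos h2 (by linarith [hs.2]) h.le)
  · -- near x : dominate by const * (x-s)^a
    have hint : IntervalIntegrable (fun s : ℝ => (x - s) ^ a) volume (x/2) x := by
      have := (intervalIntegrable_rpow' ha (a := x - (x/2)) (b := x - x)).comp_sub_left x
      simpa using this
    have hint' : IntegrableOn (fun s : ℝ => (x - s) ^ a) (Ioc (x/2) x) :=
      (hint.1 : _)
    have hmeas : AEStronglyMeasurable (fun s => (x - s) ^ a * s ^ b)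
        (volume.restrict (Ioc (x/2) x)) :=
      (((measurable_const.sub measurable_id).pow_const a).mul
        (measurable_id.pow_const b)).aestronglyMeasurable
    refine Integrable.mono' (hint'.const_mul ((x/2)^b)) hmeas ?_
    refine (ae_restrict_iff' measurableSet_Ioc).2 (Eventually.of_forall ?_)
    intro s hs
    have hxs : 0 ≤ x - s := by linarith [hs.2]
    rw [Real.norm_eq_abs, abs_mul, abs_of_nonneg (rpow_nonneg hxs _),
      abs_of_nonneg (rpow_nonneg (by linarith [hs.1] : (0:ℝ) ≤ s) _)]
    calc (x-s)^a * s^b ≤ (x-s)^a * (x/2)^b :=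
          mul_le_mul_of_nonneg_left (rpow_le_rpow_of_nonpos h2 hs.1.le hb0) (rpow_nonneg hxs _)
      _ = (x/2)^b * (x-s)^a := mul_comm _ _

lemma kernelVal (ha : -1 < a) (hb : -1 < b) (hx : 0 < x) :
    ∫ s in (0:ℝ)..x, (x - s) ^ a * s ^ b = x ^ (a + b + 1) * Bfun a b := by
  have h0 := intervalIntegral.integral_comp_mul_left (a := (0:ℝ)) (b := 1) (c := x)
    (fun s => (x - s) ^ a * s ^ b) hx.ne'
  rw [mul_zero, mul_one] at h0
  simp only [smul_eq_mul] at h0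
  have h1 : ∫ s in (0:ℝ)..x, (x - s) ^ a * s ^ b
      = x * ∫ u in (0:ℝ)..1, (x - x*u) ^ a * (x*u) ^ b := by
    rw [h0, ← mul_assoc, mul_inv_cancel₀ hx.ne', one_mul]
  rw [h1]
  have h2 : ∀ u ∈ uIcc (0:ℝ) 1,
      (x - x*u) ^ a * (x*u) ^ b = x^a * x^b * ((1-u)^a * u^b) := by
    intro u hu
    rw [uIcc_of_le zero_le_one] at hu
    have h1u : (0:ℝ) ≤ 1 - u := by linarith [hu.2]
    rw [show x - x*u = x * (1-u) by ring, Real.mul_rpow hx.le h1u,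
      Real.mul_rpow hx.le hu.1]
    ring
  rw [intervalIntegral.integral_congr h2, intervalIntegral.integral_const_mul]
  rw [show a + b + 1 = a + b + 1 from rfl, Real.rpow_add hx, Real.rpow_add hx, Real.rpow_one]
  unfold Bfun; ring


variable {ψ : ℝ → ℝ}

/-- Integrability of `(x-s)^a ψ(s)` on `(0,x]`. -/
lemma psiInt (hψm : Measurable ψ) (hψb : ∀ s, 0 < s → |ψ s| ≤ C * s ^ b)
    (hb : -1 < b) (hb0 : b ≤ 0) (ha : -1 < a) (hx : 0 < x) :
    IntegrableOn (fun s => (x - s) ^ a * ψ s) (Ioc 0 x) := by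
  refine Integrable.mono' ((kernelInt ha hb hb0 hx).const_mul C)
    ((((measurable_const.sub measurable_id).pow_const a).mul hψm).aestronglyMeasurable) ?_
  refine (ae_restrict_iff' measurableSet_Ioc).2 (Eventually.of_forall ?_)
  intro s hs
  have hxs : 0 ≤ x - s := by linarith [hs.2]
  rw [Real.norm_eq_abs, abs_mul, abs_of_nonneg (rpow_nonneg hxs _)]
  calc (x-s)^a * |ψ s| ≤ (x-s)^a * (C * s ^ b) :=
        mul_le_mul_of_nonneg_left (hψb s hs.1) (rpow_nonneg hxs _)
    _ = C * ((x-s)^a * s^b) := by ring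

lemma psiIntInterval (hψm : Measurable ψ) (hψb : ∀ s, 0 < s → |ψ s| ≤ C * s ^ b)
    (hb : -1 < b) (hb0 : b ≤ 0) (ha : -1 < a) (hx : 0 < x) :
    IntervalIntegrable (fun s => (x - s) ^ a * ψ s) volume 0 x :=
  (intervalIntegrable_iff_integrableOn_Ioc_of_le hx.le).2 (psiInt hψm hψb hb hb0 ha hx)

/-- The basic bound `|∫₀ˣ (x-s)^a ψ(s) ds| ≤ C · B(a,b) · x^(a+b+1)`, in the
stronger form with the integral of the absolute value. -/
lemma psiAbsBound (hψm : Measurable ψ) (hψb : ∀ s, 0 < s → |ψ s| ≤ C * s ^ b)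
    (hb : -1 < b) (hb0 : b ≤ 0) (hC : 0 ≤ C) (ha : -1 < a) (hx : 0 < x) :
    (∫ s in Ioc 0 x, |(x - s) ^ a * ψ s|) ≤ C * Bfun a b * x ^ (a + b + 1) := by
  have h1 : (∫ s in Ioc 0 x, |(x - s) ^ a * ψ s|)
      ≤ ∫ s in Ioc 0 x, C * ((x - s) ^ a * s ^ b) := by
    refine setIntegral_mono_on (psiInt hψm hψb hb hb0 ha hx).abs
      ((kernelInt ha hb hb0 hx).const_mul C) measurableSet_Ioc ?_
    intro s hs
    have hxs : 0 ≤ x - s := by linarith [hs.2]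
    rw [abs_mul, abs_of_nonneg (rpow_nonneg hxs _)]
    calc (x-s)^a * |ψ s| ≤ (x-s)^a * (C * s ^ b) :=
          mul_le_mul_of_nonneg_left (hψb s hs.1) (rpow_nonneg hxs _)
      _ = C * ((x-s)^a * s^b) := by ring
  have h2 : (∫ s in Ioc 0 x, C * ((x - s) ^ a * s ^ b))
      = C * (x ^ (a+b+1) * Bfun a b) := by
    rw [MeasureTheory.integral_const_mul]
    congr 1
    rw [← kernelVal ha hb hx, intervalIntegral.integral_of_le hx.le]
  calc _ ≤ _ := h1.trans_eq h2
    _ = C * Bfun a b * x ^ (a+b+1) := by ring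

lemma psiBound (hψm : Measurable ψ) (hψb : ∀ s, 0 < s → |ψ s| ≤ C * s ^ b)
    (hb : -1 < b) (hb0 : b ≤ 0) (hC : 0 ≤ C) (ha : -1 < a) (hx : 0 < x) :
    |∫ s in (0:ℝ)..x, (x - s) ^ a * ψ s| ≤ C * Bfun a b * x ^ (a + b + 1) := by
  rw [intervalIntegral.integral_of_le hx.le]
  refine le_trans ?_ (psiAbsBound hψm hψb hb hb0 hC ha hx)
  simpa [Real.norm_eq_abs, abs_mul] using
    MeasureTheory.norm_integral_le_integral_norm (μ := volume.restrict (Ioc 0 x))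
      (fun s => (x - s) ^ a * ψ s)


/-- Scaling representation of the kernel integral. -/
lemma Krep (ha : -1 < a) (hx : 0 < x) :
    ∫ s in (0:ℝ)..x, (x - s) ^ a * ψ s
      = x ^ (a+1) * ∫ u in (0:ℝ)..1, (1-u) ^ a * ψ (x*u) := by
  have h0 := intervalIntegral.integral_comp_mul_left (a := (0:ℝ)) (b := 1) (c := x)
    (fun s => (x - s) ^ a * ψ s) hx.ne'
  rw [mul_zero, mul_one] at h0
  simp only [smul_eq_mul] at h0
  have h1 : ∫ s in (0:ℝ)..x, (x - s) ^ a * ψ s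
      = x * ∫ u in (0:ℝ)..1, (x - x*u) ^ a * ψ (x*u) := by
    rw [h0, ← mul_assoc, mul_inv_cancel₀ hx.ne', one_mul]
  have h2 : ∀ u ∈ uIcc (0:ℝ) 1,
      (x - x*u) ^ a * ψ (x*u) = x^a * ((1-u)^a * ψ (x*u)) := by
    intro u hu
    rw [uIcc_of_le zero_le_one] at hu
    rw [show x - x*u = x * (1-u) by ring, Real.mul_rpow hx.le (by linarith [hu.2])]
    ring
  rw [h1, intervalIntegral.integral_congr h2, intervalIntegral.integral_const_mul,
    Real.rpow_add hx, Real.rpow_one]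
  ring

/-- Continuity of the kernel integral at positive points. -/
lemma Kcont (hψm : Measurable ψ) (hψb : ∀ s, 0 < s → |ψ s| ≤ C * s ^ b)
    (hψc : ∀ s, 0 < s → s ≠ 1 → ContinuousAt ψ s)
    (hb : -1 < b) (hb0 : b ≤ 0) (hC : 0 ≤ C) (ha : -1 < a)
    {x₀ : ℝ} (hx₀ : 0 < x₀) :
    ContinuousAt (fun x => ∫ s in (0:ℝ)..x, (x - s) ^ a * ψ s) x₀ := by
  have hG : ContinuousAt (fun x => ∫ u in (0:ℝ)..1, (1-u) ^ a * ψ (x*u)) x₀ := by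
    apply intervalIntegral.continuousAt_of_dominated_interval
      (bound := fun u => C * (x₀/2)^b * ((1-u)^a * u^b))
    · refine Eventually.of_forall (fun x => ?_)
      exact (((measurable_const.sub measurable_id).pow_const a).mul
        (hψm.comp (measurable_id.const_mul x))).aestronglyMeasurable
    · have hev : ∀ᶠ x in 𝓝 x₀, x₀/2 < x := lt_mem_nhds (by linarith)
      filter_upwards [hev] with x hx
      refine Eventually.of_forall (fun u hu => ?_)
      rw [uIoc_of_le zero_le_one] at hu
      have hu1 : (0:ℝ) ≤ 1 - u := by linarith [hu.2]
      have hxu : 0 < x * u := mul_pos (by linarith) hu.1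
      have h3 : |ψ (x*u)| ≤ C * (x*u) ^ b := hψb _ hxu
      have h4 : (x*u) ^ b ≤ (x₀/2 * u) ^ b :=
        rpow_le_rpow_of_nonpos (mul_pos (by linarith) hu.1)
          (mul_le_mul_of_nonneg_right (by linarith) hu.1.le) hb0
      rw [Real.norm_eq_abs, abs_mul, abs_of_nonneg (rpow_nonneg hu1 _)]
      calc (1-u)^a * |ψ (x*u)| ≤ (1-u)^a * (C * (x₀/2 * u) ^ b) := by
            refine mul_le_mul_of_nonneg_left (h3.trans ?_) (rpow_nonneg hu1 _)
            exact mul_le_mul_of_nonneg_left h4 hC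
        _ = C * (x₀/2)^b * ((1-u)^a * u^b) := by
            rw [Real.mul_rpow (by linarith : (0:ℝ) ≤ x₀/2) hu.1.le]; ring
    · refine ((intervalIntegrable_iff_integrableOn_Ioc_of_le zero_le_one).2 ?_).const_mul _
      simpa using (kernelInt ha hb hb0 one_pos)
    · have hE : ∀ᵐ (u:ℝ), u ∉ ({1, 1/x₀} : Set ℝ) :=
        (Set.Countable.ae_notMem ((Set.Finite.insert _ (Set.finite_singleton _)).countable) _)
      filter_upwards [hE] with u hE' hu
      rw [uIoc_of_le zero_le_one] at hu
      have hu1 : u ≠ 1 := fun h => hE' (by simp [h])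
      have hne : x₀ * u ≠ 1 := by
        intro h
        have hu2 : u = 1/x₀ := by rw [eq_div_iff hx₀.ne', mul_comm]; exact h
        exact hE' (by simp [hu2])
      have hcψ : ContinuousAt ψ (x₀ * u) := hψc _ (mul_pos hx₀ hu.1) hne
      have hmul : ContinuousAt (fun x : ℝ => x * u) x₀ := (continuous_mul_right u).continuousAt
      have : ContinuousAt (fun x => ψ (x * u)) x₀ :=
        ContinuousAt.comp (g := ψ) (f := fun x : ℝ => x * u) (by simpa using hcψ) hmul
      exact this.const_mul _
  have hprod : ContinuousAt
      (fun x => x ^ (a+1) * ∫ u in (0:ℝ)..1, (1-u) ^ a * ψ (x*u)) x₀ :=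
    (Real.continuousAt_rpow_const _ _ (Or.inl hx₀.ne')).mul hG
  apply hprod.congr
  have hev : ∀ᶠ x in 𝓝 x₀, 0 < x := lt_mem_nhds hx₀
  filter_upwards [hev] with x hx
  exact (Krep ha hx).symm


/-- Fubini / semigroup identity: the kernel integral with exponent `a > 0` is
`a` times the primitive of the kernel integral with exponent `a-1`. -/
lemma Kfubini (hψm : Measurable ψ) (hψb : ∀ s, 0 < s → |ψ s| ≤ C * s ^ b)
    (hb : -1 < b) (hb0 : b ≤ 0) (hC : 0 ≤ C) (ha : 0 < a) (hab : -1 < a + b)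
    (hx : 0 < x) :
    ∫ s in (0:ℝ)..x, (x - s) ^ a * ψ s
      = a * ∫ t in (0:ℝ)..x, (∫ s in (0:ℝ)..t, (t - s) ^ (a-1) * ψ s) := by
  have ha1 : -1 < a - 1 := by linarith
  set μ := volume.restrict (Ioc (0:ℝ) x) with hμ
  set F : ℝ → ℝ → ℝ := fun t s => if 0 < s ∧ s ≤ t then (t-s)^(a-1) * ψ s else 0 with hF
  have hFind : ∀ t, F t = (Ioc (0:ℝ) t).indicator (fun s => (t-s)^(a-1) * ψ s) := by
    intro t; ext s
    by_cases h : s ∈ Ioc 0 t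
    · rw [indicator_of_mem h]; exact if_pos h
    · rw [indicator_of_notMem h]; exact if_neg h
  have hstep1 : ∀ t ∈ Ioc (0:ℝ) x,
      (∫ s in (0:ℝ)..t, (t - s) ^ (a-1) * ψ s) = ∫ s, F t s ∂μ := by
    intro t ht
    rw [intervalIntegral.integral_of_le ht.1.le, hμ, hFind t,
      setIntegral_indicator measurableSet_Ioc]
    congr 1
    rw [Set.Ioc_inter_Ioc, max_self, min_eq_right ht.2]
  have hFmeas : Measurable (Function.uncurry F) := by
    apply Measurable.ite
    · exact ((measurableSet_lt measurable_const measurable_snd).inter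
        (measurableSet_le measurable_snd measurable_fst))
    · exact ((measurable_fst.sub measurable_snd).pow_const _).mul (hψm.comp measurable_snd)
    · exact measurable_const
  have hFint : Integrable (Function.uncurry F) (μ.prod μ) := by
    rw [integrable_prod_iff (hFmeas.aestronglyMeasurable)]
    constructor
    · refine (ae_restrict_iff' measurableSet_Ioc).2 (Eventually.of_forall ?_)
      intro t ht
      rw [show (fun s => Function.uncurry F (t, s)) = F t from rfl, hFind t]
      exact (((psiInt hψm hψb hb hb0 ha1 ht.1).integrable_indicator
        measurableSet_Ioc)).restrict
    · have hdom : Integrable (fun t => C * Bfun (a-1) b * t ^ (a-1+b+1)) μ := by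
        refine Integrable.const_mul ?_ _
        exact ((intervalIntegrable_iff_integrableOn_Ioc_of_le hx.le).1
          (intervalIntegrable_rpow' (by linarith)))
      refine Integrable.mono' hdom
        ((hFmeas.aestronglyMeasurable.norm).integral_prod_right') ?_
      refine (ae_restrict_iff' measurableSet_Ioc).2 (Eventually.of_forall ?_)
      intro t ht
      have h1 : ∀ s, ‖Function.uncurry F (t, s)‖
          = (Ioc (0:ℝ) t).indicator (fun s => |(t-s)^(a-1) * ψ s|) s := by
        intro s
        rw [show Function.uncurry F (t, s) = F t s from rfl, hFind t]
        by_cases h : s ∈ Ioc 0 t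
        · rw [indicator_of_mem h, indicator_of_mem h, Real.norm_eq_abs]
        · rw [indicator_of_notMem h, indicator_of_notMem h, norm_zero]
      rw [Real.norm_eq_abs]
      have h2 : (∫ s, ‖Function.uncurry F (t, s)‖ ∂μ)
          = ∫ s in Ioc 0 t, |(t-s)^(a-1) * ψ s| := by
        simp_rw [h1]
        rw [hμ, setIntegral_indicator measurableSet_Ioc, Set.Ioc_inter_Ioc,
          max_self, min_eq_right ht.2]
      rw [h2, abs_of_nonneg (integral_nonneg (fun s => abs_nonneg _))]
      exact psiAbsBound hψm hψb hb hb0 hC ha1 ht.1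
  have hswap : (∫ t, (∫ s, F t s ∂μ) ∂μ) = ∫ s, (∫ t, F t s ∂μ) ∂μ :=
    integral_integral_swap hFint
  have hinner : ∀ s ∈ Ioc (0:ℝ) x, (∫ t, F t s ∂μ) = (x-s)^a / a * ψ s := by
    intro s hs
    have hFs : (fun t => F t s) = (Ici s).indicator (fun t => (t-s)^(a-1) * ψ s) := by
      ext t
      by_cases h : s ≤ t
      · rw [indicator_of_mem (mem_Ici.mpr h)]; exact if_pos ⟨hs.1, h⟩
      · rw [indicator_of_notMem (by simpa [mem_Ici] using h)]
        exact if_neg (fun hc => h hc.2)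
    rw [hFs, hμ, setIntegral_indicator measurableSet_Ici]
    have hset : Ioc (0:ℝ) x ∩ Ici s = Icc s x := by
      ext t
      simp only [mem_inter_iff, mem_Ioc, mem_Ici, mem_Icc]
      constructor
      · rintro ⟨⟨_, h2⟩, h3⟩; exact ⟨h3, h2⟩
      · rintro ⟨h1, h2⟩; exact ⟨⟨lt_of_lt_of_le hs.1 h1, h2⟩, h1⟩
    rw [hset]
    have : (∫ t in Icc s x, (t-s)^(a-1) * ψ s) = (∫ t in Icc s x, (t-s)^(a-1)) * ψ s := by
      rw [← MeasureTheory.integral_mul_const]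
    rw [this, integral_Icc_eq_integral_Ioc,
      ← intervalIntegral.integral_of_le hs.2]
    have h1 := intervalIntegral.integral_comp_sub_right (a := s) (b := x)
      (fun u : ℝ => u ^ (a-1)) s
    have h2 : (∫ u in (s-s)..(x-s), u ^ (a-1)) = (x-s)^a / a := by
      rw [sub_self, integral_rpow (Or.inl ha1),
        Real.zero_rpow (by linarith : a - 1 + 1 ≠ 0), show a - 1 + 1 = a by ring]
      ring
    have hval : (∫ t in s..x, (t-s)^(a-1)) = (x-s)^a / a := h1.trans h2
    rw [hval]
  have hout : ∀ t ∈ Ioc (0:ℝ) x, (x - t)^a * ψ t = a * ((x-t)^a / a * ψ t) := by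
    intro t ht; field_simp
  calc ∫ s in (0:ℝ)..x, (x - s) ^ a * ψ s
      = ∫ s in Ioc 0 x, (x - s) ^ a * ψ s := intervalIntegral.integral_of_le hx.le
    _ = ∫ s in Ioc 0 x, a * ((x-s)^a / a * ψ s) :=
        setIntegral_congr_fun measurableSet_Ioc (fun s hs => hout s hs)
    _ = a * ∫ s in Ioc 0 x, ((x-s)^a / a * ψ s) := by rw [MeasureTheory.integral_const_mul]
    _ = a * ∫ s, (∫ t, F t s ∂μ) ∂μ := by
        rw [hμ]; congr 1
        exact (setIntegral_congr_fun measurableSet_Ioc (fun s hs => (hinner s hs).symm))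
    _ = a * ∫ t, (∫ s, F t s ∂μ) ∂μ := by rw [hswap]
    _ = a * ∫ t in (0:ℝ)..x, (∫ s in (0:ℝ)..t, (t - s) ^ (a-1) * ψ s) := by
        rw [intervalIntegral.integral_of_le hx.le]
        congr 1
        exact setIntegral_congr_fun measurableSet_Ioc
          (fun t ht => (hstep1 t ht).symm)


lemma psiInt0 (hψm : Measurable ψ) (hψb : ∀ s, 0 < s → |ψ s| ≤ C * s ^ b)
    (hb : -1 < b) (hx : 0 < x) : IntegrableOn ψ (Ioc 0 x) := by
  have hint : IntegrableOn (fun s : ℝ => s ^ b) (Ioc 0 x) :=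
    ((intervalIntegrable_rpow' hb (a := 0) (b := x)).1 : _)
  refine Integrable.mono' (hint.const_mul C) hψm.aestronglyMeasurable ?_
  refine (ae_restrict_iff' measurableSet_Ioc).2 (Eventually.of_forall ?_)
  intro s hs
  exact (hψb s hs.1)

lemma psiPrimAbsBound (hψm : Measurable ψ) (hψb : ∀ s, 0 < s → |ψ s| ≤ C * s ^ b)
    (hb : -1 < b) (hx : 0 < x) :
    (∫ τ in Ioc (0:ℝ) x, |ψ τ|) ≤ C * x ^ (b+1) / (b+1) := by
  have h1 : (∫ τ in Ioc (0:ℝ) x, |ψ τ|) ≤ ∫ τ in Ioc (0:ℝ) x, C * τ ^ b := by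
    refine setIntegral_mono_on (psiInt0 hψm hψb hb hx).abs
      ((((intervalIntegrable_rpow' hb (a := 0) (b := x)).1 : _)).const_mul C)
      measurableSet_Ioc ?_
    intro τ hτ; exact hψb τ hτ.1
  have h2 : (∫ τ in Ioc (0:ℝ) x, C * τ ^ b) = C * (x^(b+1)/(b+1)) := by
    rw [MeasureTheory.integral_const_mul]
    congr 1
    rw [← intervalIntegral.integral_of_le hx.le, integral_rpow (Or.inl hb),
      Real.zero_rpow (by linarith : b + 1 ≠ 0)]
    ring
  calc _ ≤ _ := h1.trans_eq h2
    _ = C * x ^ (b+1) / (b+1) := by ring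

/-- Fubini for the integration-by-parts step. -/
lemma IBPfubini (hψm : Measurable ψ) (hψb : ∀ s, 0 < s → |ψ s| ≤ C * s ^ b)
    (hb : -1 < b) (hb0 : b ≤ 0) (hC : 0 ≤ C) (ha : -1 < a) (hx : 0 < x) :
    ∫ s in (0:ℝ)..x, (x - s) ^ a * (∫ τ in (0:ℝ)..s, ψ τ)
      = (1/(a+1)) * ∫ τ in (0:ℝ)..x, (x - τ) ^ (a+1) * ψ τ := by
  have ha1 : (0:ℝ) < a + 1 := by linarith
  set μ := volume.restrict (Ioc (0:ℝ) x) with hμ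
  set F : ℝ → ℝ → ℝ := fun s τ => if 0 < τ ∧ τ ≤ s then (x-s)^a * ψ τ else 0 with hF
  have hFind : ∀ s, F s = (Ioc (0:ℝ) s).indicator (fun τ => (x-s)^a * ψ τ) := by
    intro s; ext τ
    by_cases h : τ ∈ Ioc 0 s
    · rw [indicator_of_mem h]; exact if_pos h
    · rw [indicator_of_notMem h]; exact if_neg h
  have hxa : IntegrableOn (fun s : ℝ => (x - s) ^ a) (Ioc 0 x) := by
    have := (intervalIntegrable_rpow' ha (a := x) (b := (0:ℝ))).comp_sub_left x
    simp only [sub_self, sub_zero] at this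
    exact (this.1 : _)
  have hstep1 : ∀ s ∈ Ioc (0:ℝ) x,
      (x - s) ^ a * (∫ τ in (0:ℝ)..s, ψ τ) = ∫ τ, F s τ ∂μ := by
    intro s hs
    rw [hμ, hFind s, setIntegral_indicator measurableSet_Ioc, Set.Ioc_inter_Ioc,
      max_self, min_eq_right hs.2, intervalIntegral.integral_of_le hs.1.le,
      ← MeasureTheory.integral_const_mul]
  have hFmeas : Measurable (Function.uncurry F) := by
    apply Measurable.ite
    · exact ((measurableSet_lt measurable_const measurable_snd).inter
        (measurableSet_le measurable_snd measurable_fst))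
    · exact ((measurable_const.sub measurable_fst).pow_const _).mul (hψm.comp measurable_snd)
    · exact measurable_const
  have hFint : Integrable (Function.uncurry F) (μ.prod μ) := by
    rw [integrable_prod_iff (hFmeas.aestronglyMeasurable)]
    constructor
    · refine (ae_restrict_iff' measurableSet_Ioc).2 (Eventually.of_forall ?_)
      intro s hs
      rw [show (fun τ => Function.uncurry F (s, τ)) = F s from rfl, hFind s]
      exact (MeasureTheory.IntegrableOn.integrable_indicator
        ((psiInt0 hψm hψb hb hs.1).const_mul _) measurableSet_Ioc).restrict
    · have hdom : Integrable (fun s => (C * x^(b+1) / (b+1)) * (x-s)^a) μ :=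
        (hxa.const_mul _ : _)
      refine Integrable.mono' hdom
        ((hFmeas.aestronglyMeasurable.norm).integral_prod_right') ?_
      refine (ae_restrict_iff' measurableSet_Ioc).2 (Eventually.of_forall ?_)
      intro s hs
      have hxs : (0:ℝ) ≤ x - s := by linarith [hs.2]
      have h1 : ∀ τ, ‖Function.uncurry F (s, τ)‖
          = (Ioc (0:ℝ) s).indicator (fun τ => (x-s)^a * |ψ τ|) τ := by
        intro τ
        rw [show Function.uncurry F (s, τ) = F s τ from rfl, hFind s]
        by_cases h : τ ∈ Ioc 0 s
        · rw [indicator_of_mem h, indicator_of_mem h, Real.norm_eq_abs, abs_mul,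
            abs_of_nonneg (rpow_nonneg hxs _)]
        · rw [indicator_of_notMem h, indicator_of_notMem h, norm_zero]
      have h2 : (∫ τ, ‖Function.uncurry F (s, τ)‖ ∂μ)
          = (x-s)^a * ∫ τ in Ioc 0 s, |ψ τ| := by
        simp_rw [h1]
        rw [hμ, setIntegral_indicator measurableSet_Ioc, Set.Ioc_inter_Ioc,
          max_self, min_eq_right hs.2, MeasureTheory.integral_const_mul]
      rw [Real.norm_eq_abs, h2, abs_of_nonneg
        (mul_nonneg (rpow_nonneg hxs _) (integral_nonneg (fun τ => abs_nonneg _)))]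
      calc (x-s)^a * ∫ τ in Ioc 0 s, |ψ τ|
          ≤ (x-s)^a * (C * s^(b+1)/(b+1)) :=
            mul_le_mul_of_nonneg_left (psiPrimAbsBound hψm hψb hb hs.1) (rpow_nonneg hxs _)
        _ ≤ (x-s)^a * (C * x^(b+1)/(b+1)) := by
            refine mul_le_mul_of_nonneg_left ?_ (rpow_nonneg hxs _)
            refine div_le_div_of_nonneg_right ?_ (by linarith) |>.trans_eq rfl
            exact mul_le_mul_of_nonneg_left
              (rpow_le_rpow hs.1.le hs.2 (by linarith)) hC
        _ = (C * x^(b+1) / (b+1)) * (x-s)^a := by ring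
  have hswap : (∫ s, (∫ τ, F s τ ∂μ) ∂μ) = ∫ τ, (∫ s, F s τ ∂μ) ∂μ :=
    integral_integral_swap hFint
  have hinner : ∀ τ ∈ Ioc (0:ℝ) x, (∫ s, F s τ ∂μ) = (x-τ)^(a+1) / (a+1) * ψ τ := by
    intro τ hτ
    have hFs : (fun s => F s τ) = (Ici τ).indicator (fun s => (x-s)^a * ψ τ) := by
      ext s
      by_cases h : τ ≤ s
      · rw [indicator_of_mem (mem_Ici.mpr h)]; exact if_pos ⟨hτ.1, h⟩
      · rw [indicator_of_notMem (by simpa [mem_Ici] using h)]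
        exact if_neg (fun hc => h hc.2)
    rw [hFs, hμ, setIntegral_indicator measurableSet_Ici]
    have hset : Ioc (0:ℝ) x ∩ Ici τ = Icc τ x := by
      ext s
      simp only [mem_inter_iff, mem_Ioc, mem_Ici, mem_Icc]
      constructor
      · rintro ⟨⟨_, h2⟩, h3⟩; exact ⟨h3, h2⟩
      · rintro ⟨h1, h2⟩; exact ⟨⟨lt_of_lt_of_le hτ.1 h1, h2⟩, h1⟩
    rw [hset]
    have hpull : (∫ s in Icc τ x, (x-s)^a * ψ τ) = (∫ s in Icc τ x, (x-s)^a) * ψ τ := by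
      rw [← MeasureTheory.integral_mul_const]
    rw [hpull, integral_Icc_eq_integral_Ioc, ← intervalIntegral.integral_of_le hτ.2]
    have h1 := intervalIntegral.integral_comp_sub_left (a := τ) (b := x)
      (fun u : ℝ => u ^ a) x
    have h2 : (∫ u in (x-x)..(x-τ), u ^ a) = (x-τ)^(a+1) / (a+1) := by
      rw [sub_self, integral_rpow (Or.inl ha),
        Real.zero_rpow (by linarith : a + 1 ≠ 0)]
      ring
    have hval : (∫ s in τ..x, (x-s)^a) = (x-τ)^(a+1) / (a+1) := h1.trans h2
    rw [hval]
  calc ∫ s in (0:ℝ)..x, (x - s) ^ a * (∫ τ in (0:ℝ)..s, ψ τ)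
      = ∫ s in Ioc 0 x, (x - s) ^ a * (∫ τ in (0:ℝ)..s, ψ τ) :=
        intervalIntegral.integral_of_le hx.le
    _ = ∫ s, (∫ τ, F s τ ∂μ) ∂μ :=
        setIntegral_congr_fun measurableSet_Ioc (fun s hs => hstep1 s hs)
    _ = ∫ τ, (∫ s, F s τ ∂μ) ∂μ := hswap
    _ = ∫ τ in Ioc 0 x, (x-τ)^(a+1) / (a+1) * ψ τ :=
        setIntegral_congr_fun measurableSet_Ioc (fun τ hτ => hinner τ hτ)
    _ = (1/(a+1)) * ∫ τ in (0:ℝ)..x, (x - τ) ^ (a+1) * ψ τ := by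
        rw [intervalIntegral.integral_of_le hx.le, ← MeasureTheory.integral_const_mul]
        refine setIntegral_congr_fun measurableSet_Ioc (fun τ hτ => ?_)
        field_simp


lemma measurable_indicator_of_continuousOn {f : ℝ → ℝ} {s : Set ℝ}
    (hs : MeasurableSet s) (hf : ContinuousOn f s) : Measurable (s.indicator f) := by
  have key : ∀ U : Set ℝ, IsOpen U → MeasurableSet (s.indicator f ⁻¹' U) := by
    intro U hU
    obtain ⟨V, hV, hVeq⟩ := continuousOn_iff'.mp hf U hU
    by_cases h0 : (0:ℝ) ∈ U
    · have : s.indicator f ⁻¹' U = (V ∩ s) ∪ sᶜ := by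
        ext y
        by_cases hy : y ∈ s
        · simp only [mem_preimage, indicator_of_mem hy, mem_union, mem_inter_iff,
            mem_compl_iff, hy, and_true, not_true, or_false]
          constructor
          · intro h; have : y ∈ f ⁻¹' U ∩ s := ⟨h, hy⟩; rw [hVeq] at this; exact this.1
          · intro h; have : y ∈ V ∩ s := ⟨h, hy⟩; rw [← hVeq] at this; exact this.1
        · simp [indicator_of_notMem hy, h0, hy]
      rw [this]; exact (hV.measurableSet.inter hs).union hs.compl
    · have : s.indicator f ⁻¹' U = V ∩ s := by
        ext y
        by_cases hy : y ∈ s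
        · simp only [mem_preimage, indicator_of_mem hy, mem_inter_iff, hy, and_true]
          constructor
          · intro h; have : y ∈ f ⁻¹' U ∩ s := ⟨h, hy⟩; rw [hVeq] at this; exact this.1
          · intro h; have : y ∈ V ∩ s := ⟨h, hy⟩; rw [← hVeq] at this; exact this.1
        · simp [indicator_of_notMem hy, h0, hy]
      rw [this]; exact hV.measurableSet.inter hs
  exact measurable_of_isOpen key

end Stmt8


/-- `r(x) = p(x) + (1/Γ(σ)) ∫₀ˣ (x-s)^{σ−1} φ(s) ds`. -/
noncomputable def rfun (σ : ℝ) (p : Polynomial ℝ) (φ : ℝ → ℝ) : ℝ → ℝ :=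
  fun x => p.eval x + (1 / Real.Gamma σ) *
    ∫ s in (0:ℝ)..x, (x - s) ^ (σ - 1) * φ s

open Stmt8 MeasureTheory Set Filter Real intervalIntegral Topology in
theorem stmt8 (m : ℕ) (hm : 0 < m) (σ : ℝ) (hσ1 : (m:ℝ) - 1 < σ) (hσ2 : σ < m)
    (p : Polynomial ℝ) (hp : p.degree ≤ (m - 1 : ℕ))
    (φ : ℝ → ℝ) (hφc : ContinuousOn φ (Set.Icc 0 1))
    (hφ1 : ContDiffOn ℝ 1 φ (Set.Ioc 0 1))
    (C₀ : ℝ)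
    (hφb : ∀ s ∈ Set.Ioc (0:ℝ) 1,
      |derivWithin φ (Set.Icc 0 1) s| ≤ C₀ * s ^ (σ - m)) :
    ContDiffOn ℝ m (rfun σ p φ) (Set.Ioc 0 1) ∧
    (∀ x ∈ Set.Ioc (0:ℝ) 1,
      iteratedDerivWithin m (rfun σ p φ) (Set.Icc 0 1) x
        = (φ 0 / Real.Gamma (σ - m + 1)) * x ^ (σ - m)
          + (1 / Real.Gamma (σ - m + 1)) *
              ∫ s in (0:ℝ)..x, (x - s) ^ (σ - m) * derivWithin φ (Set.Icc 0 1) s) ∧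
    ∃ C : ℝ, ∀ x ∈ Set.Ioc (0:ℝ) 1,
      |iteratedDerivWithin m (rfun σ p φ) (Set.Icc 0 1) x| ≤ C * x ^ (σ - m) := by
  have hm1 : (1:ℝ) ≤ (m:ℝ) := by exact_mod_cast hm
  have hσ0 : 0 < σ := by linarith
  set b : ℝ := σ - m with hbdef
  have hb : -1 < b := by rw [hbdef]; linarith
  have hb1 : b < 0 := by rw [hbdef]; linarith
  have hb0 : b ≤ 0 := hb1.le
  set ψ0 : ℝ → ℝ := derivWithin φ (Set.Icc 0 1) with hψ0def
  -- continuity of the derivative on `(0,1]`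
  have hd1 : ContinuousOn (derivWithin φ (Set.Ioc 0 1)) (Set.Ioc 0 1) :=
    hφ1.continuousOn_derivWithin (uniqueDiffOn_Ioc 0 1) le_rfl
  have hψ0cont : ContinuousOn ψ0 (Set.Ioc 0 1) := by
    refine hd1.congr ?_
    intro s hs
    rw [hψ0def]
    apply derivWithin_congr_set
    rw [Filter.eventuallyEq_set]
    filter_upwards [lt_mem_nhds hs.1] with y hy
    simp only [Set.mem_Icc, Set.mem_Ioc]
    exact ⟨fun h => ⟨hy, h.2⟩, fun h => ⟨hy.le, h.2⟩⟩
  set ψ : ℝ → ℝ := (Set.Ioc (0:ℝ) 1).indicator ψ0 with hψdef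
  have hψm : Measurable ψ := measurable_indicator_of_continuousOn measurableSet_Ioc hψ0cont
  set C : ℝ := max C₀ 0 with hCdef
  have hC : 0 ≤ C := le_max_right _ _
  have hψb : ∀ s, 0 < s → |ψ s| ≤ C * s ^ b := by
    intro s hs
    by_cases h1 : s ∈ Set.Ioc (0:ℝ) 1
    · rw [hψdef, indicator_of_mem h1]
      calc |ψ0 s| ≤ C₀ * s ^ b := hφb s h1
        _ ≤ C * s ^ b := mul_le_mul_of_nonneg_right (le_max_left _ _) (rpow_nonneg hs.le _)
    · rw [hψdef, indicator_of_notMem h1]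
      simpa using mul_nonneg hC (rpow_nonneg hs.le b)
  have hψc : ∀ s, 0 < s → s ≠ 1 → ContinuousAt ψ s := by
    intro s hs hs1
    rcases lt_or_gt_of_ne hs1 with h | h
    · have hmem : s ∈ Set.Ioo (0:ℝ) 1 := ⟨hs, h⟩
      have hco : ContinuousOn ψ (Set.Ioo 0 1) :=
        (hψ0cont.mono Set.Ioo_subset_Ioc_self).congr
          (fun y hy => by rw [hψdef, indicator_of_mem (Set.Ioo_subset_Ioc_self hy)])
      exact hco.continuousAt (isOpen_Ioo.mem_nhds hmem)
    · have hco : ContinuousOn ψ (Set.Ioi 1) :=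
        (continuousOn_const (c := (0:ℝ))).congr
          (fun y hy => by
            rw [hψdef, indicator_of_notMem (fun hc => absurd hc.2 (not_le.mpr hy))])
      exact hco.continuousAt (isOpen_Ioi.mem_nhds h)
  set K : ℝ → ℝ → ℝ := fun a x => ∫ s in (0:ℝ)..x, (x - s) ^ a * ψ s with hKdef
  have hKcont : ∀ a : ℝ, -1 < a → ∀ x0 : ℝ, 0 < x0 → ContinuousAt (K a) x0 := by
    intro a ha x0 hx0
    simp only [hKdef]
    exact Kcont hψm hψb hψc hb hb0 hC ha hx0
  have hKbound : ∀ a : ℝ, -1 < a → ∀ x : ℝ, 0 < x →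
      |K a x| ≤ C * Bfun a b * x ^ (a+b+1) := by
    intro a ha x hx
    simp only [hKdef]
    exact psiBound hψm hψb hb hb0 hC ha hx
  -- global integrability of ψ
  have hψint1 : IntegrableOn ψ (Set.Ioc 0 1) := psiInt0 hψm hψb hb one_pos
  have hψglob : Integrable ψ := by
    have h1 : Integrable ((Set.Ioc (0:ℝ) 1).indicator ψ) :=
      hψint1.integrable_indicator measurableSet_Ioc
    have h2 : (Set.Ioc (0:ℝ) 1).indicator ψ = ψ := by
      ext y; by_cases hy : y ∈ Set.Ioc (0:ℝ) 1
      · rw [indicator_of_mem hy]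
      · rw [indicator_of_notMem hy, hψdef, indicator_of_notMem hy]
    rwa [h2] at h1
  have hprimcont : Continuous (fun u : ℝ => ∫ τ in (0:ℝ)..u, ψ τ) :=
    intervalIntegral.continuous_primitive (fun u v => hψglob.intervalIntegrable) 0
  -- FTC for φ
  have hFTCφ : ∀ s ∈ Set.Icc (0:ℝ) 1, φ s = φ 0 + ∫ τ in (0:ℝ)..s, ψ τ := by
    intro s hs
    rcases eq_or_lt_of_le hs.1 with h0 | h0
    · rw [← h0]; simp
    · have hεlaw : ∀ ε ∈ Set.Ioo (0:ℝ) s, φ s = φ ε + ∫ τ in ε..s, ψ τ := by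
        intro ε hε
        have heq := intervalIntegral.integral_eq_sub_of_hasDeriv_right_of_le hε.2.le
          (hφc.mono (fun t ht => ⟨le_trans hε.1.le ht.1, le_trans ht.2 hs.2⟩))
          (f' := ψ) ?_ (hψglob.intervalIntegrable)
        · linarith [heq]
        · intro t ht
          have htlt : t < 1 := lt_of_lt_of_le ht.2 hs.2
          have ht1 : t ∈ Set.Ioc (0:ℝ) 1 := ⟨lt_trans hε.1 ht.1, htlt.le⟩
          have hnhds : Set.Ioc (0:ℝ) 1 ∈ 𝓝 t := Ioc_mem_nhds ht1.1 htlt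
          have hD : DifferentiableAt ℝ φ t :=
            ((hφ1.differentiableOn one_ne_zero) t ht1).differentiableAt hnhds
          have hval : ψ t = deriv φ t := by
            rw [hψdef, indicator_of_mem ht1, hψ0def,
              derivWithin_of_mem_nhds (Icc_mem_nhds ht1.1 htlt)]
          rw [hval]
          exact hD.hasDerivAt.hasDerivWithinAt
      have hlim1 : Filter.Tendsto φ (𝓝[>] (0:ℝ)) (𝓝 (φ 0)) := by
        rw [← nhdsWithin_Ioc_eq_nhdsGT zero_lt_one]
        exact (hφc 0 ⟨le_refl 0, zero_le_one⟩).mono_left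
          (nhdsWithin_mono 0 Set.Ioc_subset_Icc_self)
      have hlim2 : Filter.Tendsto (fun ε => ∫ τ in ε..s, ψ τ) (𝓝 (0:ℝ))
          (𝓝 (∫ τ in (0:ℝ)..s, ψ τ)) := by
        have heqf : ∀ ε, (∫ τ in ε..s, ψ τ)
            = (∫ τ in (0:ℝ)..s, ψ τ) - ∫ τ in (0:ℝ)..ε, ψ τ :=
          fun ε => (intervalIntegral.integral_interval_sub_left
            (hψglob.intervalIntegrable) (hψglob.intervalIntegrable)).symm
        have hc : Continuous (fun ε : ℝ => (∫ τ in (0:ℝ)..s, ψ τ) - ∫ τ in (0:ℝ)..ε, ψ τ) :=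
          continuous_const.sub hprimcont
        have := hc.tendsto 0
        simp only [intervalIntegral.integral_same, sub_zero] at this
        exact Filter.Tendsto.congr (fun ε => (heqf ε).symm) this
      have key : Filter.Tendsto (fun ε => φ ε + ∫ τ in ε..s, ψ τ) (𝓝[>] (0:ℝ))
          (𝓝 (φ 0 + ∫ τ in (0:ℝ)..s, ψ τ)) :=
        hlim1.add (hlim2.mono_left nhdsWithin_le_nhds)
      have hconst : (fun ε => φ ε + ∫ τ in ε..s, ψ τ) =ᶠ[𝓝[>] (0:ℝ)] (fun _ => φ s) := by
        filter_upwards [Ioo_mem_nhdsGT_of_mem ⟨le_refl (0:ℝ), h0⟩] with ε hε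
        exact (hεlaw ε hε).symm
      exact tendsto_nhds_unique (key.congr' hconst) tendsto_const_nhds |>.symm
  -- integration by parts
  have hIBP : ∀ x ∈ Set.Ioc (0:ℝ) 1,
      (∫ s in (0:ℝ)..x, (x - s) ^ (σ-1) * φ s)
        = φ 0 * (x^σ/σ) + (1/σ) * K σ x := by
    intro x hx
    have hσ1' : (-1:ℝ) < σ - 1 := by linarith
    have hxa : IntervalIntegrable (fun s : ℝ => (x-s)^(σ-1)) volume 0 x := by
      have := (intervalIntegrable_rpow' hσ1' (a := x) (b := (0:ℝ))).comp_sub_left x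
      simpa using this
    have hint1 : IntervalIntegrable (fun s : ℝ => (x-s)^(σ-1) * φ 0) volume 0 x :=
      hxa.mul_const _
    have hM : ∀ s ∈ Set.Ioc (0:ℝ) x, |∫ τ in (0:ℝ)..s, ψ τ| ≤ C * x^(b+1)/(b+1) := by
      intro s hs
      rw [intervalIntegral.integral_of_le hs.1.le]
      calc |∫ τ in Set.Ioc (0:ℝ) s, ψ τ| ≤ ∫ τ in Set.Ioc (0:ℝ) s, |ψ τ| := by
            simpa [Real.norm_eq_abs] using
              MeasureTheory.norm_integral_le_integral_norm
                (μ := volume.restrict (Set.Ioc 0 s)) ψ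
        _ ≤ C * s^(b+1)/(b+1) := psiPrimAbsBound hψm hψb hb hs.1
        _ ≤ C * x^(b+1)/(b+1) := by
            apply div_le_div_of_nonneg_right ?_ (by linarith)
            exact mul_le_mul_of_nonneg_left
              (rpow_le_rpow hs.1.le hs.2 (by linarith)) hC
    have hint2 : IntervalIntegrable
        (fun s : ℝ => (x-s)^(σ-1) * (∫ τ in (0:ℝ)..s, ψ τ)) volume 0 x := by
      rw [intervalIntegrable_iff_integrableOn_Ioc_of_le hx.1.le]
      have hdom : IntegrableOn (fun s : ℝ => (x-s)^(σ-1) * (C * x^(b+1)/(b+1)))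
          (Set.Ioc 0 x) := ((hxa.1 : _).mul_const _)
      refine Integrable.mono' hdom
        ((((measurable_const.sub measurable_id).pow_const (σ-1)).aestronglyMeasurable.mul
          (hprimcont.measurable.aestronglyMeasurable))) ?_
      refine (ae_restrict_iff' measurableSet_Ioc).2 (Filter.Eventually.of_forall ?_)
      intro s hs
      have hxs : (0:ℝ) ≤ x - s := by linarith [hs.2]
      rw [Real.norm_eq_abs, abs_mul, abs_of_nonneg (rpow_nonneg hxs _)]
      exact mul_le_mul_of_nonneg_left (hM s hs) (rpow_nonneg hxs _)
    have hsplit : (∫ s in (0:ℝ)..x, (x - s)^(σ-1) * φ s)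
        = (∫ s in (0:ℝ)..x, (x-s)^(σ-1) * φ 0)
          + ∫ s in (0:ℝ)..x, (x-s)^(σ-1) * (∫ τ in (0:ℝ)..s, ψ τ) := by
      rw [← intervalIntegral.integral_add hint1 hint2,
        intervalIntegral.integral_of_le hx.1.le, intervalIntegral.integral_of_le hx.1.le]
      refine setIntegral_congr_fun measurableSet_Ioc (fun s hs => ?_)
      rw [hFTCφ s ⟨hs.1.le, le_trans hs.2 hx.2⟩]; ring
    have hval1 : (∫ s in (0:ℝ)..x, (x-s)^(σ-1) * φ 0) = φ 0 * (x^σ/σ) := by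
      rw [intervalIntegral.integral_mul_const]
      have h1 := intervalIntegral.integral_comp_sub_left (a := (0:ℝ)) (b := x)
        (fun u : ℝ => u ^ (σ-1)) x
      have h2 : (∫ u in (x-x)..(x-0), u ^ (σ-1)) = x^σ/σ := by
        rw [sub_self, sub_zero, integral_rpow (Or.inl hσ1'),
          Real.zero_rpow (by linarith : σ-1+1 ≠ 0), show σ-1+1 = σ by ring]
        ring
      rw [h1.trans h2]; ring
    have hval2 := IBPfubini hψm hψb hb hb0 hC (a := σ-1) (x := x) hσ1' hx.1
    rw [hsplit, hval1, hval2, show σ-1+1 = σ by ring]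
  -- the k-th derivative candidates
  set Gk : ℕ → ℝ → ℝ := fun k x =>
    (Polynomial.derivative^[k] p).eval x + (φ 0 / Real.Gamma (σ-k+1)) * x^(σ-k)
      + (1/Real.Gamma (σ-k+1)) * K (σ-k) x with hGkdef
  have hG0 : ∀ x ∈ Set.Ioc (0:ℝ) 1, rfun σ p φ x = Gk 0 x := by
    intro x hx
    have hΓσ : Real.Gamma (σ + 1) = σ * Real.Gamma σ := Real.Gamma_add_one hσ0.ne'
    have hΓσpos : 0 < Real.Gamma σ := Real.Gamma_pos_of_pos hσ0
    simp only [hGkdef]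
    simp only [Function.iterate_zero, id_eq, Nat.cast_zero, sub_zero]
    rw [rfun]
    rw [hIBP x hx, hΓσ]
    field_simp
    ring
  -- derivative of the kernel integral
  have hKd : ∀ a : ℝ, 0 < a → b + 1 ≤ a → ∀ x ∈ Set.Ioc (0:ℝ) 1,
      HasDerivAt (K a) (a * K (a-1) x) x := by
    intro a ha0 hage x hx
    have ha1 : -1 < a - 1 := by linarith
    have hab : -1 < a + b := by linarith
    have hKcont' : ContinuousOn (K (a-1)) (Set.Ioi 0) :=
      fun t ht => (hKcont (a-1) ha1 t ht).continuousWithinAt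
    have hint : IntervalIntegrable (K (a-1)) volume 0 x := by
      rw [intervalIntegrable_iff_integrableOn_Ioc_of_le hx.1.le]
      have hdom : IntegrableOn (fun t : ℝ => C * Bfun (a-1) b * t ^ (a - 1 + b + 1))
          (Set.Ioc 0 x) :=
        ((intervalIntegrable_rpow' (by linarith) (a := (0:ℝ)) (b := x)).1 : _).const_mul _
      refine Integrable.mono' hdom
        ((hKcont'.mono (fun t (ht : t ∈ Set.Ioc (0:ℝ) x) => ht.1)).aestronglyMeasurable
          measurableSet_Ioc) ?_
      refine (ae_restrict_iff' measurableSet_Ioc).2 (Filter.Eventually.of_forall ?_)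
      intro t ht
      exact hKbound (a-1) ha1 t ht.1
    have hmeasf : StronglyMeasurableAtFilter (K (a-1)) (𝓝 x) volume :=
      ContinuousOn.stronglyMeasurableAtFilter isOpen_Ioi hKcont' x hx.1
    have hprim : HasDerivAt (fun y => ∫ t in (0:ℝ)..y, K (a-1) t) (K (a-1) x) x :=
      intervalIntegral.integral_hasDerivAt_right hint hmeasf (hKcont (a-1) ha1 x hx.1)
    refine HasDerivAt.congr_of_eventuallyEq (hprim.const_mul a) ?_
    filter_upwards [lt_mem_nhds hx.1] with y hy
    simp only [hKdef]
    exact Kfubini hψm hψb hb hb0 hC ha0 hab hy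
  -- derivative of Gk
  have hGd : ∀ k : ℕ, k < m → ∀ x ∈ Set.Ioc (0:ℝ) 1,
      HasDerivAt (Gk k) (Gk (k+1) x) x := by
    intro k hk x hx
    have hkm : (k:ℝ) ≤ (m:ℝ) - 1 := by
      have : (k:ℝ) + 1 ≤ (m:ℝ) := by exact_mod_cast hk
      linarith
    have hσk : 0 < σ - k := by linarith
    have hΓ : Real.Gamma (σ - k + 1) = (σ - k) * Real.Gamma (σ - k) :=
      Real.Gamma_add_one hσk.ne'
    have hΓk : 0 < Real.Gamma (σ - k) := Real.Gamma_pos_of_pos hσk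
    have hΓk1 : 0 < Real.Gamma (σ - k + 1) := Real.Gamma_pos_of_pos (by linarith)
    have hcast : ((k+1 : ℕ) : ℝ) = (k:ℝ) + 1 := by push_cast; ring
    have h1 : HasDerivAt (fun y => (Polynomial.derivative^[k] p).eval y)
        ((Polynomial.derivative^[k+1] p).eval x) x := by
      rw [Function.iterate_succ_apply']
      exact Polynomial.hasDerivAt _ x
    have h2 : HasDerivAt (fun y : ℝ => (φ 0 / Real.Gamma (σ - k + 1)) * y ^ (σ - k))
        ((φ 0 / Real.Gamma (σ - (k+1:ℕ) + 1)) * x ^ (σ - (k+1:ℕ))) x := by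
      have h2' : HasDerivAt (fun y : ℝ => y ^ (σ - k)) ((σ-k) * x ^ (σ - k - 1)) x :=
        Real.hasDerivAt_rpow_const (Or.inl hx.1.ne')
      have := h2'.const_mul (φ 0 / Real.Gamma (σ - k + 1))
      refine this.congr_deriv ?_
      rw [hcast, show σ - ((k:ℝ)+1) + 1 = σ - k by ring,
        show σ - ((k:ℝ)+1) = σ - k - 1 by ring, hΓ]
      field_simp
    have h3 : HasDerivAt (fun y => (1 / Real.Gamma (σ - k + 1)) * K (σ - k) y)
        ((1 / Real.Gamma (σ - (k+1:ℕ) + 1)) * K (σ - (k+1:ℕ)) x) x := by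
      have h3' : HasDerivAt (K (σ - k)) ((σ - k) * K (σ - k - 1) x) x :=
        hKd (σ - k) hσk (by rw [hbdef]; linarith) x hx
      have := h3'.const_mul (1 / Real.Gamma (σ - k + 1))
      refine this.congr_deriv ?_
      rw [hcast, show σ - ((k:ℝ)+1) + 1 = σ - k by ring,
        show σ - ((k:ℝ)+1) = σ - k - 1 by ring, hΓ]
      field_simp
    have := (h1.add h2).add h3
    simp only [hGkdef]
    exact this
  -- the iterated derivatives
  have hUD : UniqueDiffOn ℝ (Set.Icc (0:ℝ) 1) := uniqueDiffOn_Icc zero_lt_one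
  have hmemIoc : ∀ x ∈ Set.Ioc (0:ℝ) 1, Set.Ioc (0:ℝ) 1 ∈ 𝓝[Set.Icc (0:ℝ) 1] x := by
    intro x hx
    have h1 : Set.Icc (0:ℝ) 1 ∩ Set.Ioi 0 ∈ 𝓝[Set.Icc (0:ℝ) 1] x :=
      Filter.inter_mem self_mem_nhdsWithin
        (mem_nhdsWithin_of_mem_nhds (Ioi_mem_nhds hx.1))
    refine Filter.mem_of_superset h1 ?_
    rintro y ⟨hy1, hy2⟩; exact ⟨hy2, hy1.2⟩
  have hiter : ∀ k, k ≤ m → ∀ x ∈ Set.Ioc (0:ℝ) 1,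
      iteratedDerivWithin k (rfun σ p φ) (Set.Icc 0 1) x = Gk k x := by
    intro k
    induction k with
    | zero => intro _ x hx; simpa using hG0 x hx
    | succ k ih =>
      intro hk x hx
      have hk' : k < m := Nat.lt_of_succ_le hk
      rw [iteratedDerivWithin_succ]
      have he : iteratedDerivWithin k (rfun σ p φ) (Set.Icc 0 1)
          =ᶠ[𝓝[Set.Icc (0:ℝ) 1] x] Gk k := by
        filter_upwards [hmemIoc x hx] with y hy
        exact ih hk'.le y hy
      rw [Filter.EventuallyEq.derivWithin_eq he (ih hk'.le x hx)]
      exact ((hGd k hk' x hx).hasDerivWithinAt).derivWithin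
        (hUD x (Set.Ioc_subset_Icc_self hx))
  -- smoothness
  have hGcont : ∀ k : ℕ, k ≤ m → ContinuousOn (Gk k) (Set.Ioc 0 1) := by
    intro k hk
    have hkm : (k:ℝ) ≤ (m:ℝ) := by exact_mod_cast hk
    have hak : -1 < σ - k := by linarith
    simp only [hGkdef]
    refine ContinuousOn.add (ContinuousOn.add ?_ ?_) ?_
    · exact ((Polynomial.derivative^[k] p).continuous).continuousOn
    · have hco : ContinuousOn (fun y : ℝ => y ^ (σ - (k:ℝ))) (Set.Ioc 0 1) :=
        continuousOn_id.rpow_const (fun y hy => Or.inl (ne_of_gt hy.1))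
      exact continuousOn_const.mul hco
    · have hKco : ContinuousOn (K (σ-k)) (Set.Ioc 0 1) :=
        fun t ht => (hKcont (σ-k) hak t ht.1).continuousWithinAt
      exact continuousOn_const.mul hKco
  have hcd : ∀ j k : ℕ, k + j = m → ContDiffOn ℝ (j:ℕ) (Gk k) (Set.Ioc 0 1) := by
    intro j
    induction j with
    | zero =>
      intro k hk
      exact contDiffOn_zero.mpr (hGcont k (by omega))
    | succ j ih =>
      intro k hk
      rw [show ((j+1 : ℕ) : WithTop ℕ∞) = (j : WithTop ℕ∞) + 1 from by norm_cast,
        contDiffOn_succ_iff_derivWithin (uniqueDiffOn_Ioc 0 1)]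
      refine ⟨?_, ?_, ?_⟩
      · intro x hx
        exact ((hGd k (by omega) x hx).differentiableAt.differentiableWithinAt)
      · intro h
        exact absurd h (by simp)
      · refine (ih (k+1) (by omega)).congr ?_
        intro x hx
        exact ((hGd k (by omega) x hx).hasDerivWithinAt).derivWithin
          ((uniqueDiffOn_Ioc 0 1) x hx)
  -- put everything together
  have hpolym : (Polynomial.derivative^[m] p) = 0 :=
    Polynomial.iterate_derivative_eq_zero
      (lt_of_le_of_lt (Polynomial.natDegree_le_iff_degree_le.mpr hp) (Nat.sub_lt hm one_pos))
  have hΓ' : 0 < Real.Gamma (σ - m + 1) := Real.Gamma_pos_of_pos (by linarith)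
  have hfinal : ∀ x ∈ Set.Ioc (0:ℝ) 1,
      iteratedDerivWithin m (rfun σ p φ) (Set.Icc 0 1) x
        = (φ 0 / Real.Gamma (σ - m + 1)) * x ^ b + (1/Real.Gamma (σ - m + 1)) * K b x := by
    intro x hx
    rw [hiter m le_rfl x hx]
    simp only [hGkdef]
    simp only [hpolym, Polynomial.eval_zero, ← hbdef]
    ring
  have hKeq : ∀ x ∈ Set.Ioc (0:ℝ) 1,
      K b x = ∫ s in (0:ℝ)..x, (x - s) ^ b * ψ0 s := by
    intro x hx
    simp only [hKdef]
    rw [intervalIntegral.integral_of_le hx.1.le, intervalIntegral.integral_of_le hx.1.le]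
    refine setIntegral_congr_fun measurableSet_Ioc (fun s hs => ?_)
    have hmem : s ∈ Set.Ioc (0:ℝ) 1 := ⟨hs.1, le_trans hs.2 hx.2⟩
    rw [hψdef, indicator_of_mem hmem]
  refine ⟨?_, ?_, ?_⟩
  · exact (hcd m 0 (by omega)).congr (fun x hx => hG0 x hx)
  · intro x hx
    rw [hfinal x hx, hKeq x hx]
  · refine ⟨(|φ 0| + C * Bfun b b) / Real.Gamma (σ - m + 1), ?_⟩
    intro x hx
    rw [hfinal x hx]
    have h1 : |K b x| ≤ C * Bfun b b * x ^ (b + b + 1) := hKbound b hb x hx.1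
    have hxb : 0 < x ^ b := rpow_pos_of_pos hx.1 _
    have h2 : x ^ (b + b + 1) ≤ x ^ b := by
      rw [show b + b + 1 = b + (b+1) by ring, Real.rpow_add hx.1]
      calc x^b * x^(b+1) ≤ x^b * 1 :=
            mul_le_mul_of_nonneg_left (Real.rpow_le_one hx.1.le hx.2 (by linarith)) hxb.le
        _ = x^b := mul_one _
    have hBb : 0 ≤ Bfun b b := Bfun_nonneg b b
    calc |(φ 0 / Real.Gamma (σ - m + 1)) * x ^ b + (1/Real.Gamma (σ - m + 1)) * K b x|
        ≤ |(φ 0 / Real.Gamma (σ - m + 1)) * x ^ b| + |(1/Real.Gamma (σ - m + 1)) * K b x| :=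
          abs_add_le _ _
      _ ≤ (|φ 0| / Real.Gamma (σ - m + 1)) * x ^ b
            + (1/Real.Gamma (σ - m + 1)) * (C * Bfun b b * x ^ b) := by
          refine add_le_add ?_ ?_
          · have heq : |(φ 0 / Real.Gamma (σ - ↑m + 1)) * x ^ b|
                = |φ 0| / Real.Gamma (σ - ↑m + 1) * x ^ b := by
              rw [abs_mul, abs_div, abs_of_nonneg hΓ'.le, abs_of_nonneg hxb.le]
            exact heq.le
          · rw [abs_mul, abs_of_nonneg
              (by positivity : (0:ℝ) ≤ 1/Real.Gamma (σ - ↑m + 1))]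
            refine mul_le_mul_of_nonneg_left ?_ (by positivity)
            exact h1.trans (mul_le_mul_of_nonneg_left h2 (by positivity))
      _ = (|φ 0| + C * Bfun b b) / Real.Gamma (σ - m + 1) * x ^ b := by
          field_simp
end

section
/- Let δ ∈ ℝ with 1 < δ < 2. Then for every integer j ≥ 3, 2 j^{2−δ} − 3 (j−1)^{2−δ} + (j−2)^{2−δ} > 0. Equivalently, with d_r := r^{2−δ} − (r−1)^{2−δ} for integers r ≥ 1, one has −d_{j−1} + 2 d_j > 0 for all j ≥ 3. -/
open Real

lemma bern_up {α x : ℝ} (hα0 : 0 < α) (hα1 : α < 1) (hx : 0 < x) :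
    (x + 1) ^ α ≤ x ^ α + α * x ^ (α - 1) := by
  have h1 : (x + 1) ^ α = x ^ α * (1 + 1/x) ^ α := by
    rw [← Real.mul_rpow hx.le (by positivity), mul_add, mul_one, mul_one_div, div_self hx.ne']
  have h2 : (1 + 1/x) ^ α ≤ 1 + α * (1/x) := by
    apply rpow_one_add_le_one_add_mul_self _ hα0.le hα1.le
    have : (0:ℝ) ≤ 1/x := by positivity
    linarith
  have h3 : x ^ α * (1 + α * (1/x)) = x ^ α + α * x ^ (α - 1) := by
    rw [Real.rpow_sub hx, Real.rpow_one]
    field_simp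
  calc (x + 1) ^ α = x ^ α * (1 + 1/x) ^ α := h1
    _ ≤ x ^ α * (1 + α * (1/x)) := mul_le_mul_of_nonneg_left h2 (by positivity)
    _ = x ^ α + α * x ^ (α - 1) := h3

lemma bern_lo {α x : ℝ} (hα0 : 0 < α) (hα1 : α < 1) (hx : 0 < x) :
    x ^ α + α * (x + 1) ^ (α - 1) ≤ (x + 1) ^ α := by
  have hx1 : (0:ℝ) < x + 1 := by linarith
  have hd : 1/(x+1) ≤ 1 := by rw [div_le_one hx1]; linarith
  have h1 : x ^ α = (x + 1) ^ α * (1 + (-(1/(x+1)))) ^ α := by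
    rw [← Real.mul_rpow hx1.le (by linarith)]
    congr 1
    field_simp
    ring
  have h2 : (1 + (-(1/(x+1)))) ^ α ≤ 1 + α * (-(1/(x+1))) :=
    rpow_one_add_le_one_add_mul_self (by linarith) hα0.le hα1.le
  have h3 : (x + 1) ^ α * (1 + α * (-(1/(x+1)))) = (x + 1) ^ α - α * (x+1) ^ (α - 1) := by
    rw [Real.rpow_sub hx1, Real.rpow_one]
    field_simp
    ring
  have h4 := mul_le_mul_of_nonneg_left h2 (Real.rpow_pos_of_pos hx1 α).le
  rw [h3] at h4
  rw [h1]
  linarith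

lemma case3 {α : ℝ} (hα0 : 0 < α) (hα1 : α < 1) :
    0 < 2 * (3:ℝ) ^ α - 3 * (2:ℝ) ^ α + 1 := by
  have h3 : (0:ℝ) ≤ (3:ℝ) ^ α := (Real.rpow_pos_of_pos (by norm_num) α).le
  have G := Real.geom_mean_le_arith_mean3_weighted (by norm_num : (0:ℝ) ≤ 1/3)
    (by norm_num : (0:ℝ) ≤ 1/3) (by norm_num : (0:ℝ) ≤ 1/3) h3 h3 (by norm_num : (0:ℝ) ≤ 1)
    (by norm_num)
  rw [Real.one_rpow, mul_one, ← Real.rpow_mul (by norm_num : (0:ℝ) ≤ 3),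
    ← Real.rpow_add (by norm_num : (0:ℝ) < 3)] at G
  have e : α * (1/3) + α * (1/3) = (2/3) * α := by ring
  rw [e, Real.rpow_mul (by norm_num : (0:ℝ) ≤ 3)] at G
  have h23 : (2:ℝ) < (3:ℝ) ^ ((2:ℝ)/3) := by
    have h8 : ((8:ℝ)) ^ ((1:ℝ)/3) < (9:ℝ) ^ ((1:ℝ)/3) :=
      Real.rpow_lt_rpow (by norm_num) (by norm_num) (by norm_num)
    have e8 : ((8:ℝ)) ^ ((1:ℝ)/3) = 2 := by
      rw [show (8:ℝ) = (2:ℝ) ^ (3:ℝ) by norm_num [Real.rpow_natCast (2:ℝ) 3],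
        ← Real.rpow_mul (by norm_num : (0:ℝ) ≤ 2)]
      norm_num
    have e9 : ((9:ℝ)) ^ ((1:ℝ)/3) = (3:ℝ) ^ ((2:ℝ)/3) := by
      rw [show (9:ℝ) = (3:ℝ) ^ (2:ℝ) by norm_num [Real.rpow_natCast (3:ℝ) 2],
        ← Real.rpow_mul (by norm_num : (0:ℝ) ≤ 3)]
      norm_num
    rw [e8, e9] at h8; exact h8
  have h2a : (2:ℝ) ^ α < ((3:ℝ) ^ ((2:ℝ)/3)) ^ α :=
    Real.rpow_lt_rpow (by norm_num) h23 hα0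
  linarith

theorem stmt12 (δ : ℝ) (hδ1 : 1 < δ) (hδ2 : δ < 2) :
    ∀ j : ℕ, 3 ≤ j →
      0 < 2 * (j:ℝ) ^ (2 - δ) - 3 * ((j:ℝ) - 1) ^ (2 - δ) + ((j:ℝ) - 2) ^ (2 - δ) := by
  set α := 2 - δ with hα
  have hα0 : 0 < α := by simp [hα]; linarith
  have hα1 : α < 1 := by simp [hα]; linarith
  intro j hj
  rcases eq_or_lt_of_le hj with h | h
  · subst h
    norm_num
    exact case3 hα0 hα1
  · have ha : (4:ℝ) ≤ (j:ℝ) := by exact_mod_cast h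
    set a : ℝ := (j:ℝ) with haa
    have hL2 : (a-1) ^ α + α * a ^ (α - 1) ≤ a ^ α := by
      have := bern_lo hα0 hα1 (x := a - 1) (by linarith)
      have e : a - 1 + 1 = a := by ring
      rw [e] at this; exact this
    have hL1 : (a-1) ^ α ≤ (a-2) ^ α + α * (a-2) ^ (α - 1) := by
      have := bern_up hα0 hα1 (x := a - 2) (by linarith)
      have e : a - 2 + 1 = a - 1 := by ring
      rw [e] at this; exact this
    have hP : (0:ℝ) < (a-2) ^ (1 - α) := Real.rpow_pos_of_pos (by linarith) _
    have hQ : (0:ℝ) < a ^ (1 - α) := Real.rpow_pos_of_pos (by linarith) _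
    have hQlt : a ^ (1 - α) < 2 * (a-2) ^ (1 - α) := by
      calc a ^ (1 - α) ≤ (2 * (a-2)) ^ (1 - α) :=
             Real.rpow_le_rpow (by linarith) (by linarith) (by linarith)
        _ = 2 ^ (1 - α) * (a-2) ^ (1 - α) :=
             Real.mul_rpow (by norm_num) (by linarith)
        _ < 2 * (a-2) ^ (1 - α) := by
             have : (2:ℝ) ^ (1 - α) < 2 ^ (1:ℝ) :=
               Real.rpow_lt_rpow_of_exponent_lt (by norm_num) (by linarith)
             rw [Real.rpow_one] at this
             exact mul_lt_mul_of_pos_right this hP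
    have hkey : (a-2) ^ (α - 1) < 2 * a ^ (α - 1) := by
      have e1 : (a-2) ^ (α - 1) = ((a-2) ^ (1 - α))⁻¹ := by
        rw [← Real.rpow_neg (by linarith)]; ring_nf
      have e2 : a ^ (α - 1) = (a ^ (1 - α))⁻¹ := by
        rw [← Real.rpow_neg (by linarith)]; ring_nf
      rw [e1, e2, show 2 * (a ^ (1-α))⁻¹ = 2 / a ^ (1-α) by ring,
        lt_div_iff₀ hQ]
      calc ((a-2) ^ (1-α))⁻¹ * (a ^ (1-α)) < ((a-2) ^ (1-α))⁻¹ * (2 * (a-2) ^ (1-α)) :=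
             mul_lt_mul_of_pos_left hQlt (by positivity)
        _ = 2 := by field_simp
    have hmul : α * (a-2) ^ (α - 1) < 2 * (α * a ^ (α - 1)) := by
      have := mul_lt_mul_of_pos_left hkey hα0
      linarith
    linarith
end
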